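/- arXiv:1409.5614 — 6 statements merged into one kernel-verified Lean document; each statement's English description precedes it below -/
import Mathlib

section
/- Let p, q, r be three distinct primes. If S is a cyclotomic numerical semigroup of depth pqr and height 1, then S equals one of ⟨pr, q⟩, ⟨pq, r⟩, or ⟨qr, p⟩. -/
open Polynomial
open scoped Classical

/-- A numerical semigroup: a subset of `ℕ` containing `0`, closed under addition,
with finite complement in `ℕ`. -/
structure NumericalSemigroup where
  carrier : Set ℕ
  zero_mem : 0 ∈ carrier
  add_mem : ∀ ⦃a b : ℕ⦄, a ∈ carrier → b ∈ carrier → a + b ∈ carrier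
  finite_compl : Set.Finite carrierᶜ

namespace NumericalSemigroup

/-- The Hilbert series `H_S(x) = Σ_{s ∈ S} x^s`. -/
noncomputable def H (S : NumericalSemigroup) : PowerSeries ℤ :=
  PowerSeries.mk fun n => if n ∈ S.carrier then 1 else 0

/-- The Hilbert series evaluated at `x^w`: `H_S(x^w) = Σ_{s ∈ S} x^{w·s}`. -/
noncomputable def Hexp (S : NumericalSemigroup) (w : ℕ) : PowerSeries ℤ :=
  PowerSeries.mk fun n => if ∃ s ∈ S.carrier, n = w * s then 1 else 0

/-- The semigroup polynomial `P_S(x) = (1-x)·H_S(x) = 1 + (x-1)·Σ_{s ∉ S} x^s`. -/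
noncomputable def P (S : NumericalSemigroup) : Polynomial ℤ :=
  1 + (X - 1) * ∑ s ∈ S.finite_compl.toFinset, X ^ s

/-- The Frobenius number: the largest integer not in `S` (equal to `-1` when `S = ℕ`). -/
noncomputable def Frob (S : NumericalSemigroup) : ℤ :=
  (insert (-1 : ℤ) (S.finite_compl.toFinset.image fun n : ℕ => (n : ℤ))).max'
    (Finset.insert_nonempty _ _)

/-- The genus: the number of gaps of `S`. -/
noncomputable def genus (S : NumericalSemigroup) : ℕ := S.finite_compl.toFinset.card

/-- `S` viewed as a set of integers. -/
def intSet (S : NumericalSemigroup) : Set ℤ := (fun n : ℕ => (n : ℤ)) '' S.carrier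

/-- `S` is cyclotomic if every complex root of `P_S` lies in the closed unit disc. -/
def IsCyclotomicNS (S : NumericalSemigroup) : Prop :=
  ∀ z : ℂ, Polynomial.aeval z S.P = 0 → ‖z‖ ≤ 1

/-- `S` is symmetric if for every integer `z`, `z ∈ S ↔ F(S) - z ∉ S`. -/
def IsSymmetric (S : NumericalSemigroup) : Prop :=
  ∀ z : ℤ, z ∈ S.intSet ↔ S.Frob - z ∉ S.intSet

/-- The Apéry set of `S` with respect to `m`: elements `s ∈ S` with `s - m ∉ S`
(in particular all `s ∈ S` with `s < m`). -/
def Ap (S : NumericalSemigroup) (m : ℕ) : Set ℕ :=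
  {s ∈ S.carrier | ∀ t ∈ S.carrier, t + m ≠ s}

end NumericalSemigroup

namespace DepthPQR


lemma exists_assoc_subset_prod {M : Type*} [CommMonoidWithZero M] [IsCancelMulZero M]
    (f : ℕ → M) (D : Finset ℕ) (hf : ∀ d ∈ D, Prime (f d)) :
    ∀ P : M, P ∣ ∏ d ∈ D, f d → ∃ E ⊆ D, Associated P (∏ e ∈ E, f e) := by
  classical
  induction D using Finset.induction_on with
  | empty =>
    intro P hP
    refine ⟨∅, Finset.Subset.refl _, ?_⟩
    simp only [Finset.prod_empty] at hP ⊢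
    exact (associated_one_iff_isUnit.2 (isUnit_of_dvd_one hP))
  | @insert a D' ha ih =>
    intro P hP
    have hfa : Prime (f a) := hf a (Finset.mem_insert_self a D')
    have hf' : ∀ d ∈ D', Prime (f d) := fun d hd => hf d (Finset.mem_insert_of_mem hd)
    rw [Finset.prod_insert ha] at hP
    by_cases hd : f a ∣ P
    · obtain ⟨P', rfl⟩ := hd
      have hP' : P' ∣ ∏ d ∈ D', f d := (mul_dvd_mul_iff_left hfa.ne_zero).mp hP
      obtain ⟨E, hE, hassoc⟩ := ih hf' P' hP'
      have haE : a ∉ E := fun h => ha (hE h)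
      refine ⟨insert a E, Finset.insert_subset_insert a hE, ?_⟩
      rw [Finset.prod_insert haE]
      exact Associated.mul_left (f a) hassoc
    · obtain ⟨C, hC⟩ := hP
      have hfaC : f a ∣ P * C := ⟨∏ d ∈ D', f d, hC.symm⟩
      have hfC : f a ∣ C := (hfa.dvd_or_dvd hfaC).resolve_left hd
      obtain ⟨C', rfl⟩ := hfC
      have heq : (∏ d ∈ D', f d) = P * C' := by
        have h2 : f a * ∏ d ∈ D', f d = f a * (P * C') := by rw [hC, mul_left_comm]
        exact mul_left_cancel₀ hfa.ne_zero h2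
      obtain ⟨E, hE, hassoc⟩ := ih hf' P ⟨C', heq⟩
      exact ⟨E, hE.trans (Finset.subset_insert a D'), hassoc⟩

lemma mul_coeff_one (p q : ℤ[X]) :
    (p * q).coeff 1 = p.coeff 0 * q.coeff 1 + p.coeff 1 * q.coeff 0 := by
  rw [Polynomial.coeff_mul]
  rw [show Finset.HasAntidiagonal.antidiagonal 1 = ({(0,1), (1,0)} : Finset (ℕ × ℕ)) from rfl]
  simp

lemma prod_coeff_one (E : Finset ℕ) (f : ℕ → ℤ[X]) (h0 : ∀ e ∈ E, (f e).coeff 0 = 1) :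
    (∏ e ∈ E, f e).coeff 1 = ∑ e ∈ E, (f e).coeff 1 := by
  classical
  induction E using Finset.induction_on with
  | empty => simp [Polynomial.coeff_one]
  | @insert a E' ha ih =>
    have h0a : (f a).coeff 0 = 1 := h0 a (Finset.mem_insert_self a E')
    have h0' : ∀ e ∈ E', (f e).coeff 0 = 1 := fun e he => h0 e (Finset.mem_insert_of_mem he)
    rw [Finset.prod_insert ha, Finset.sum_insert ha, mul_coeff_one, ih h0', h0a,
      Polynomial.coeff_zero_prod]
    rw [Finset.prod_congr rfl h0']
    simp [add_comm]

lemma coeff_one_geom_sum {n : ℕ} (hn : 1 < n) :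
    (∑ i ∈ Finset.range n, (X : ℤ[X]) ^ i).coeff 1 = 1 := by
  rw [Polynomial.finset_sum_coeff]
  simp only [Polynomial.coeff_X_pow]
  rw [Finset.sum_ite_eq (Finset.range n) 1 (fun _ => (1:ℤ))]
  simp [hn]



lemma lt_mul_right2 {x y : ℕ} (h0 : 0 < x) (h2 : 2 ≤ y) : x < x * y := by nlinarith

lemma prime_ne_mul {a b c : ℕ} (ha : a.Prime) (hb : b.Prime) (hab : a ≠ b) : a ≠ b * c := by
  intro h
  rcases ha.eq_one_or_self_of_dvd b ⟨c, h⟩ with h1 | h1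
  · exact hb.one_lt.ne' h1
  · exact hab h1.symm

lemma divisors_prime_mul' {a b : ℕ} (ha : a.Prime) (hb : b.Prime) :
    (a * b).divisors = {1, a, b, a * b} := by
  ext d
  constructor
  · intro hd
    rw [Nat.divisors_mul, ha.divisors, hb.divisors, Finset.mem_mul] at hd
    obtain ⟨u, hu, v, hv, rfl⟩ := hd
    simp only [Finset.mem_insert, Finset.mem_singleton] at hu hv ⊢
    rcases hu with rfl | rfl <;> rcases hv with rfl | rfl <;> simp
  · intro hd
    have h0 : a * b ≠ 0 := Nat.mul_ne_zero ha.pos.ne' hb.pos.ne'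
    simp only [Finset.mem_insert, Finset.mem_singleton] at hd
    rcases hd with rfl | rfl | rfl | rfl
    · exact Nat.one_mem_divisors.mpr h0
    · exact Nat.mem_divisors.mpr ⟨dvd_mul_right _ _, h0⟩
    · exact Nat.mem_divisors.mpr ⟨dvd_mul_left _ _, h0⟩
    · exact Nat.mem_divisors.mpr ⟨dvd_rfl, h0⟩

lemma divisors_three_primes {a b c : ℕ} (ha : a.Prime) (hb : b.Prime) (hc : c.Prime) :
    (a * b * c).divisors = {1, a, b, c, a*b, a*c, b*c, a*b*c} := by
  ext d
  constructor
  · intro hd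
    rw [Nat.divisors_mul, Nat.divisors_mul, ha.divisors, hb.divisors, hc.divisors,
      Finset.mem_mul] at hd
    obtain ⟨y, hy, v, hv, rfl⟩ := hd
    rw [Finset.mem_mul] at hy
    obtain ⟨u, hu, w, hw, rfl⟩ := hy
    simp only [Finset.mem_insert, Finset.mem_singleton] at hu hw hv ⊢
    rcases hu with rfl | rfl <;> rcases hw with rfl | rfl <;> rcases hv with rfl | rfl <;> simp
  · intro hd
    have h0 : a * b * c ≠ 0 :=
      Nat.mul_ne_zero (Nat.mul_ne_zero ha.pos.ne' hb.pos.ne') hc.pos.ne'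
    simp only [Finset.mem_insert, Finset.mem_singleton] at hd
    rcases hd with rfl | rfl | rfl | rfl | rfl | rfl | rfl | rfl <;>
      refine Nat.mem_divisors.mpr ⟨?_, h0⟩
    exacts [one_dvd _, (dvd_mul_right _ _).mul_right _, (dvd_mul_left _ _).mul_right _,
      dvd_mul_left _ _, dvd_mul_right _ _, ⟨b, by ring⟩, ⟨a, by ring⟩, dvd_rfl]

/-- `X^(ab) - 1` as a product of cyclotomic polynomials. -/
lemma X_pow_sub_one_two {a b : ℕ} (ha : a.Prime) (hb : b.Prime) (hab : a ≠ b) :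
    (X : ℤ[X]) ^ (a * b) - 1 =
      cyclotomic 1 ℤ * cyclotomic a ℤ * cyclotomic b ℤ * cyclotomic (a*b) ℤ := by
  have h2a := ha.two_le
  have h2b := hb.two_le
  have h1ab : 1 < a * b := by nlinarith
  have hab_a : a < a * b := lt_mul_right2 ha.pos h2b
  have hab_b : b < a * b := by rw [mul_comm]; exact lt_mul_right2 hb.pos h2a
  rw [← prod_cyclotomic_eq_X_pow_sub_one (by omega) ℤ, divisors_prime_mul' ha hb]
  rw [Finset.prod_insert (by
        simp only [Finset.mem_insert, Finset.mem_singleton]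
        push_neg
        exact ⟨by omega, by omega, ne_of_lt h1ab⟩),
      Finset.prod_insert (by
        simp only [Finset.mem_insert, Finset.mem_singleton]
        push_neg
        exact ⟨hab, ne_of_lt hab_a⟩),
      Finset.prod_insert (by
        simp only [Finset.mem_singleton]
        exact ne_of_lt hab_b),
      Finset.prod_singleton]
  ring

/-- `X^(abc) - 1` as a product of cyclotomic polynomials. -/
lemma X_pow_sub_one_three {a b c : ℕ} (ha : a.Prime) (hb : b.Prime) (hc : c.Prime)
    (hab : a ≠ b) (hac : a ≠ c) (hbc : b ≠ c) :
    (X : ℤ[X]) ^ (a * b * c) - 1 =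
      cyclotomic 1 ℤ * cyclotomic a ℤ * cyclotomic b ℤ * cyclotomic c ℤ *
      cyclotomic (a*b) ℤ * cyclotomic (a*c) ℤ * cyclotomic (b*c) ℤ * cyclotomic (a*b*c) ℤ := by
  have h2a := ha.two_le
  have h2b := hb.two_le
  have h2c := hc.two_le
  have h1ab : 1 < a * b := by nlinarith
  have h1ac : 1 < a * c := by nlinarith
  have h1bc : 1 < b * c := by nlinarith
  have h1abc : 1 < a * b * c := by nlinarith
  have hab_a : a < a * b := lt_mul_right2 ha.pos h2b
  have hab_b : b < a * b := by rw [mul_comm]; exact lt_mul_right2 hb.pos h2a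
  have hac_a : a < a * c := lt_mul_right2 ha.pos h2c
  have hac_c : c < a * c := by rw [mul_comm]; exact lt_mul_right2 hc.pos h2a
  have hbc_b : b < b * c := lt_mul_right2 hb.pos h2c
  have hbc_c : c < b * c := by rw [mul_comm]; exact lt_mul_right2 hc.pos h2b
  have habc_ab : a * b < a * b * c := lt_mul_right2 (by positivity) h2c
  have habc_ac : a * c < a * b * c := by
    have e : a * b * c = a * c * b := by ring
    rw [e]; exact lt_mul_right2 (by positivity) h2b
  have habc_bc : b * c < a * b * c := by
    have e : a * b * c = b * c * a := by ring
    rw [e]; exact lt_mul_right2 (by positivity) h2a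
  have habc_a : a < a * b * c := lt_trans hab_a habc_ab
  have habc_b : b < a * b * c := lt_trans hab_b habc_ab
  have habc_c : c < a * b * c := lt_trans hac_c habc_ac
  have ha_bc : a ≠ b * c := prime_ne_mul ha hb hab
  have hb_ac : b ≠ a * c := prime_ne_mul hb ha (Ne.symm hab)
  have hc_ab : c ≠ a * b := prime_ne_mul hc ha (Ne.symm hac)
  have hab_ac : a * b ≠ a * c := fun h => hbc (Nat.eq_of_mul_eq_mul_left ha.pos h)
  have hab_bc : a * b ≠ b * c := by
    rw [mul_comm a b]
    exact fun h => hac (Nat.eq_of_mul_eq_mul_left hb.pos h)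
  have hac_bc : a * c ≠ b * c := fun h => hab (Nat.eq_of_mul_eq_mul_right hc.pos h)
  rw [← prod_cyclotomic_eq_X_pow_sub_one (by omega) ℤ, divisors_three_primes ha hb hc]
  rw [Finset.prod_insert (by
        simp only [Finset.mem_insert, Finset.mem_singleton]; push_neg
        exact ⟨by omega, by omega, by omega, ne_of_lt h1ab, ne_of_lt h1ac, ne_of_lt h1bc,
          ne_of_lt h1abc⟩),
      Finset.prod_insert (by
        simp only [Finset.mem_insert, Finset.mem_singleton]; push_neg
        exact ⟨hab, hac, ne_of_lt hab_a, ne_of_lt hac_a, ha_bc, ne_of_lt habc_a⟩),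
      Finset.prod_insert (by
        simp only [Finset.mem_insert, Finset.mem_singleton]; push_neg
        exact ⟨hbc, ne_of_lt hab_b, hb_ac, ne_of_lt hbc_b, ne_of_lt habc_b⟩),
      Finset.prod_insert (by
        simp only [Finset.mem_insert, Finset.mem_singleton]; push_neg
        exact ⟨hc_ab, ne_of_lt hac_c, ne_of_lt hbc_c, ne_of_lt habc_c⟩),
      Finset.prod_insert (by
        simp only [Finset.mem_insert, Finset.mem_singleton]; push_neg
        exact ⟨hab_ac, hab_bc, ne_of_lt habc_ab⟩),
      Finset.prod_insert (by
        simp only [Finset.mem_insert, Finset.mem_singleton]; push_neg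
        exact ⟨hac_bc, ne_of_lt habc_ac⟩),
      Finset.prod_insert (by
        simp only [Finset.mem_singleton]
        exact ne_of_lt habc_bc),
      Finset.prod_singleton]
  ring




lemma geom_sum_eq_two {a b : ℕ} (ha : a.Prime) (hb : b.Prime) (hab : a ≠ b) :
    (∑ i ∈ Finset.range (a*b), (X : ℤ[X]) ^ i) =
      cyclotomic a ℤ * cyclotomic b ℤ * cyclotomic (a*b) ℤ := by
  have hX : (X : ℤ[X]) - 1 ≠ 0 := X_sub_C_ne_zero 1
  apply mul_left_cancel₀ hX
  have hg := geom_sum_mul (X : ℤ[X]) (a*b)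
  calc ((X : ℤ[X]) - 1) * ∑ i ∈ Finset.range (a*b), (X : ℤ[X]) ^ i
      = (X : ℤ[X]) ^ (a*b) - 1 := by rw [mul_comm]; exact hg
    _ = ((X : ℤ[X]) - 1) * (cyclotomic a ℤ * cyclotomic b ℤ * cyclotomic (a*b) ℤ) := by
        rw [X_pow_sub_one_two ha hb hab, cyclotomic_one]; ring

lemma geom_sum_eq_three {a b c : ℕ} (ha : a.Prime) (hb : b.Prime) (hc : c.Prime)
    (hab : a ≠ b) (hac : a ≠ c) (hbc : b ≠ c) :
    (∑ i ∈ Finset.range (a*b*c), (X : ℤ[X]) ^ i) =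
      cyclotomic a ℤ * cyclotomic b ℤ * cyclotomic c ℤ *
      cyclotomic (a*b) ℤ * cyclotomic (a*c) ℤ * cyclotomic (b*c) ℤ * cyclotomic (a*b*c) ℤ := by
  have hX : (X : ℤ[X]) - 1 ≠ 0 := X_sub_C_ne_zero 1
  apply mul_left_cancel₀ hX
  calc ((X : ℤ[X]) - 1) * ∑ i ∈ Finset.range (a*b*c), (X : ℤ[X]) ^ i
      = (X : ℤ[X]) ^ (a*b*c) - 1 := by rw [mul_comm]; exact geom_sum_mul _ _
    _ = _ := by rw [X_pow_sub_one_three ha hb hc hab hac hbc, cyclotomic_one]; ring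

lemma coeff_one_cyclotomic_prime {a : ℕ} (ha : a.Prime) : (cyclotomic a ℤ).coeff 1 = 1 := by
  haveI := Fact.mk ha
  rw [cyclotomic_prime ℤ a]
  exact coeff_one_geom_sum ha.one_lt

lemma coeff_one_cyclotomic_two {a b : ℕ} (ha : a.Prime) (hb : b.Prime) (hab : a ≠ b) :
    (cyclotomic (a*b) ℤ).coeff 1 = -1 := by
  have h2a := ha.two_le
  have h2b := hb.two_le
  have h1ab : 1 < a * b := by nlinarith
  have e := congrArg (fun f : ℤ[X] => f.coeff 1) (geom_sum_eq_two ha hb hab)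
  rw [coeff_one_geom_sum h1ab, mul_coeff_one, mul_coeff_one, Polynomial.mul_coeff_zero,
    cyclotomic_coeff_zero ℤ ha.one_lt, cyclotomic_coeff_zero ℤ hb.one_lt,
    cyclotomic_coeff_zero ℤ h1ab, coeff_one_cyclotomic_prime ha,
    coeff_one_cyclotomic_prime hb] at e
  linarith

lemma coeff_one_cyclotomic_three {a b c : ℕ} (ha : a.Prime) (hb : b.Prime) (hc : c.Prime)
    (hab : a ≠ b) (hac : a ≠ c) (hbc : b ≠ c) :
    (cyclotomic (a*b*c) ℤ).coeff 1 = 1 := by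
  have h2a := ha.two_le
  have h2b := hb.two_le
  have h2c := hc.two_le
  have h1ab : 1 < a * b := by nlinarith
  have h1ac : 1 < a * c := by nlinarith
  have h1bc : 1 < b * c := by nlinarith
  have h1abc : 1 < a * b * c := by nlinarith
  have e := congrArg (fun f : ℤ[X] => f.coeff 1) (geom_sum_eq_three ha hb hc hab hac hbc)
  rw [coeff_one_geom_sum h1abc] at e
  rw [mul_coeff_one, mul_coeff_one, mul_coeff_one, mul_coeff_one, mul_coeff_one, mul_coeff_one,
    Polynomial.mul_coeff_zero, Polynomial.mul_coeff_zero, Polynomial.mul_coeff_zero,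
    Polynomial.mul_coeff_zero, Polynomial.mul_coeff_zero,
    cyclotomic_coeff_zero ℤ ha.one_lt, cyclotomic_coeff_zero ℤ hb.one_lt,
    cyclotomic_coeff_zero ℤ hc.one_lt, cyclotomic_coeff_zero ℤ h1ab,
    cyclotomic_coeff_zero ℤ h1ac, cyclotomic_coeff_zero ℤ h1bc,
    cyclotomic_coeff_zero ℤ h1abc, coeff_one_cyclotomic_prime ha,
    coeff_one_cyclotomic_prime hb, coeff_one_cyclotomic_prime hc,
    coeff_one_cyclotomic_two ha hb hab, coeff_one_cyclotomic_two ha hc hac,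
    coeff_one_cyclotomic_two hb hc hbc] at e
  linarith

lemma eval_one_cyclotomic_two_dvd {x y n : ℕ} (hx : x.Prime) (hy : y.Prime) (hxy : x ≠ y)
    (hxn : x ∣ n) (hyn : y ∣ n) : eval 1 (cyclotomic n ℤ) = 1 :=
  eval_one_cyclotomic_not_prime_pow (fun {ℓ} hℓ k hk => by
    have h1 : x = ℓ := (Nat.prime_dvd_prime_iff_eq hx hℓ).mp (hx.dvd_of_dvd_pow (hk ▸ hxn))
    have h2 : y = ℓ := (Nat.prime_dvd_prime_iff_eq hy hℓ).mp (hy.dvd_of_dvd_pow (hk ▸ hyn))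
    exact hxy (h1.trans h2.symm))

lemma eval_one_cyclotomic_two {a b : ℕ} (ha : a.Prime) (hb : b.Prime) (hab : a ≠ b) :
    eval 1 (cyclotomic (a*b) ℤ) = 1 :=
  eval_one_cyclotomic_not_prime_pow (fun {ℓ} hℓ k hk => by
    have h1 : a = ℓ := (Nat.prime_dvd_prime_iff_eq ha hℓ).mp
      (ha.dvd_of_dvd_pow (hk ▸ dvd_mul_right a b))
    have h2 : b = ℓ := (Nat.prime_dvd_prime_iff_eq hb hℓ).mp
      (hb.dvd_of_dvd_pow (hk ▸ dvd_mul_left b a))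
    exact hab (h1.trans h2.symm))



noncomputable def HT (m b : ℕ) : PowerSeries ℤ :=
  PowerSeries.mk fun n => if n ∈ AddSubmonoid.closure ({m, b} : Set ℕ) then (1:ℤ) else 0

lemma mem_T_iff (m b n : ℕ) :
    n ∈ AddSubmonoid.closure ({m, b} : Set ℕ) ↔ ∃ i j : ℕ, n = i * m + j * b := by
  rw [AddSubmonoid.mem_closure_pair]
  simp only [smul_eq_mul]
  constructor
  · rintro ⟨i, j, h⟩; exact ⟨i, j, h.symm⟩
  · rintro ⟨i, j, h⟩; exact ⟨i, j, h.symm⟩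

section Tside

variable {m b : ℕ} (hm : 0 < m) (hb : 0 < b) (cop : Nat.Coprime m b)

lemma T_add_b {t : ℕ} (ht : t ∈ AddSubmonoid.closure ({m, b} : Set ℕ)) :
    t + b ∈ AddSubmonoid.closure ({m, b} : Set ℕ) := by
  rw [mem_T_iff] at ht ⊢
  obtain ⟨i, j, rfl⟩ := ht
  exact ⟨i, j + 1, by ring⟩

lemma T_mul_mem (j : ℕ) : m * j ∈ AddSubmonoid.closure ({m, b} : Set ℕ) := by
  rw [mem_T_iff]
  exact ⟨j, 0, by ring⟩

set_option linter.unusedSectionVars false in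
include hm cop in
lemma T_gamma {j : ℕ} (hjb : j < b) (hbk : b ≤ m * j) :
    ¬ (m * j - b ∈ AddSubmonoid.closure ({m, b} : Set ℕ)) := by
  intro hmem
  rw [mem_T_iff] at hmem
  obtain ⟨i, k, hik⟩ := hmem
  have hb' : 0 < b := by
    rcases Nat.eq_zero_or_pos b with rfl | h
    · omega
    · exact h
  have heq : m * j = i * m + k * b + b := by omega
  have h1 : i * m < m * j := by nlinarith [Nat.zero_le (k*b), hb']
  have h1' : i * m < j * m := by rw [mul_comm j m]; exact h1
  have hilt : i < j := Nat.lt_of_mul_lt_mul_right h1'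
  have hdvd : b ∣ (j - i) * m := by
    have e3 : (j - i) * m + i * m = j * m := by
      rw [← Nat.add_mul]; congr 1; omega
    have e4 : j * m = m * j := mul_comm _ _
    have e2 : (j - i) * m = k * b + b := by omega
    rw [e2]
    exact ⟨k + 1, by ring⟩
  have hdvd2 : b ∣ (j - i) := (Nat.Coprime.dvd_of_dvd_mul_right (cop.symm) hdvd)
  have := Nat.le_of_dvd (by omega) hdvd2
  omega

include hm in
lemma T_delta {k : ℕ} (hk : k ∈ AddSubmonoid.closure ({m, b} : Set ℕ))
    (hside : k < b ∨ ¬ (k - b ∈ AddSubmonoid.closure ({m, b} : Set ℕ))) :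
    ∃ j, j < b ∧ k = m * j := by
  rw [mem_T_iff] at hk
  obtain ⟨i, j, rfl⟩ := hk
  rcases Nat.eq_zero_or_pos j with rfl | hj
  · -- k = i*m
    by_cases hib : i < b
    · exact ⟨i, hib, by ring⟩
    · exfalso
      have hbm : b * m ≤ i * m := Nat.mul_le_mul_right m (by omega)
      have hbbm : b ≤ b * m := Nat.le_mul_of_pos_right b hm
      have hble : b ≤ i * m + 0 * b := by simp; omega
      have hrep : i * m + 0 * b - b = (i - b) * m + (m - 1) * b := by
        rw [Nat.sub_eq_iff_eq_add hble]
        have e1 : (i - b) * m + b * m = i * m := by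
          rw [← Nat.add_mul]; congr 1; omega
        have e2 : (m - 1) * b + 1 * b = m * b := by
          rw [← Nat.add_mul]; congr 1; omega
        have e3 : b * m = m * b := mul_comm _ _
        omega
      have hmem : i * m + 0 * b - b ∈ AddSubmonoid.closure ({m, b} : Set ℕ) := by
        rw [mem_T_iff, hrep]
        exact ⟨i - b, m - 1, rfl⟩
      rcases hside with h | h
      · omega
      · exact h hmem
  · exfalso
    have hjb : b ≤ j * b := Nat.le_mul_of_pos_left b hj
    have hble : b ≤ i * m + j * b := by omega
    have hrep : i * m + j * b - b = i * m + (j - 1) * b := by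
      rw [Nat.sub_eq_iff_eq_add hble]
      have e2 : (j - 1) * b + 1 * b = j * b := by
        rw [← Nat.add_mul]; congr 1; omega
      omega
    have hmem : i * m + j * b - b ∈ AddSubmonoid.closure ({m, b} : Set ℕ) := by
      rw [mem_T_iff, hrep]
      exact ⟨i, j - 1, rfl⟩
    rcases hside with h | h
    · omega
    · exact h hmem

include hm hb cop in
lemma HT_mul_geom :
    HT m b * (1 - PowerSeries.X ^ b) =
      ∑ j ∈ Finset.range b, (PowerSeries.X : PowerSeries ℤ) ^ (m * j) := by
  ext k
  rw [mul_sub, mul_one, map_sub, PowerSeries.coeff_mul_X_pow', map_sum]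
  simp only [PowerSeries.coeff_X_pow, HT, PowerSeries.coeff_mk]
  by_cases hR : ∃ j, j < b ∧ k = m * j
  · obtain ⟨j0, hj0b, rfl⟩ := hR
    have hsum : ∀ j ∈ Finset.range b,
        ((if (m * j0 : ℕ) = m * j then (1:ℤ) else 0) = if j0 = j then 1 else 0) := by
      intro j _
      by_cases hjj : j0 = j
      · subst hjj; simp
      · rw [if_neg hjj, if_neg (fun hc => hjj (Nat.eq_of_mul_eq_mul_left hm hc))]
    rw [Finset.sum_congr rfl hsum, Finset.sum_ite_eq (Finset.range b) j0 (fun _ => (1:ℤ)),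
      if_pos (Finset.mem_range.mpr hj0b)]
    rw [if_pos (T_mul_mem j0)]
    split_ifs with h1 h2
    · exfalso; exact T_gamma hm cop hj0b h1 h2
    · ring
    · ring
  · have hsum0 : ∀ j ∈ Finset.range b, ((if k = m * j then (1:ℤ) else 0) = 0) := by
      intro j hj
      rw [if_neg (fun hc => hR ⟨j, Finset.mem_range.mp hj, hc⟩)]
    rw [Finset.sum_congr rfl hsum0, Finset.sum_const_zero]
    by_cases hk2 : b ≤ k
    · by_cases hk3 : k - b ∈ AddSubmonoid.closure ({m, b} : Set ℕ)
      · have hkT : k ∈ AddSubmonoid.closure ({m, b} : Set ℕ) := by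
          have := T_add_b hk3
          rwa [Nat.sub_add_cancel hk2] at this
        rw [if_pos hkT, if_pos hk2, if_pos hk3]
        ring
      · have hkT : k ∉ AddSubmonoid.closure ({m, b} : Set ℕ) := by
          intro hkT
          exact hR (T_delta hm hkT (Or.inr hk3))
        rw [if_neg hkT, if_pos hk2, if_neg hk3]
        ring
    · have hkT : k ∉ AddSubmonoid.closure ({m, b} : Set ℕ) := by
        intro hkT
        exact hR (T_delta hm hkT (Or.inl (by omega)))
      rw [if_neg hkT, if_neg hk2]
      ring

include hm hb cop in
lemma HT_spec :
    HT m b * ((1 - PowerSeries.X ^ m) * (1 - PowerSeries.X ^ b)) =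
      1 - (PowerSeries.X : PowerSeries ℤ) ^ (m * b) := by
  have hgm := geom_sum_mul ((PowerSeries.X : PowerSeries ℤ) ^ m) b
  have hpows : (∑ j ∈ Finset.range b, (PowerSeries.X : PowerSeries ℤ) ^ (m * j)) =
      ∑ j ∈ Finset.range b, ((PowerSeries.X : PowerSeries ℤ) ^ m) ^ j := by
    exact Finset.sum_congr rfl fun j _ => by rw [← pow_mul]
  calc HT m b * ((1 - PowerSeries.X ^ m) * (1 - PowerSeries.X ^ b))
      = (HT m b * (1 - PowerSeries.X ^ b)) * (1 - PowerSeries.X ^ m) := by ring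
    _ = (∑ j ∈ Finset.range b, (PowerSeries.X : PowerSeries ℤ) ^ (m * j)) *
          (1 - PowerSeries.X ^ m) := by rw [HT_mul_geom hm hb cop]
    _ = 1 - (PowerSeries.X : PowerSeries ℤ) ^ (m * b) := by
        rw [hpows, pow_mul]
        linear_combination -hgm

end Tside

open NumericalSemigroup

variable (S : NumericalSemigroup)

lemma gaps_coeff (k : ℕ) :
    (∑ s ∈ S.finite_compl.toFinset, (X : ℤ[X]) ^ s).coeff k =
      if k ∈ S.carrier then 0 else 1 := by
  rw [Polynomial.finset_sum_coeff]
  simp only [Polynomial.coeff_X_pow]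
  rw [Finset.sum_ite_eq S.finite_compl.toFinset k (fun _ => (1:ℤ))]
  by_cases hk : k ∈ S.carrier <;> simp [Set.Finite.mem_toFinset, hk]

lemma P_coeff_zero : S.P.coeff 0 = 1 := by
  have h := gaps_coeff S 0
  simp only [NumericalSemigroup.P, Polynomial.coeff_add, Polynomial.coeff_one,
    Polynomial.coeff_sub]
  rw [Polynomial.mul_coeff_zero]
  simp [h, S.zero_mem]

lemma P_coeff_succ (n : ℕ) :
    S.P.coeff (n + 1) = (if n + 1 ∈ S.carrier then (1:ℤ) else 0)
      - (if n ∈ S.carrier then (1:ℤ) else 0) := by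
  have e : ((X : ℤ[X]) - 1) * ∑ s ∈ S.finite_compl.toFinset, (X : ℤ[X]) ^ s
      = X * (∑ s ∈ S.finite_compl.toFinset, (X : ℤ[X]) ^ s)
        - ∑ s ∈ S.finite_compl.toFinset, (X : ℤ[X]) ^ s := by ring
  simp only [NumericalSemigroup.P, Polynomial.coeff_add, Polynomial.coeff_one, e,
    Polynomial.coeff_sub, Polynomial.coeff_X_mul, gaps_coeff S]
  by_cases h1 : n + 1 ∈ S.carrier <;> by_cases h2 : n ∈ S.carrier <;> simp [h1, h2]

lemma P_eval_one : S.P.eval 1 = 1 := by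
  simp [NumericalSemigroup.P]

lemma coe_P_eq : (S.P : PowerSeries ℤ) = (1 - PowerSeries.X) * S.H := by
  ext n
  rw [Polynomial.coeff_coe]
  rw [sub_mul, one_mul]
  rw [map_sub]
  cases n with
  | zero =>
    rw [PowerSeries.coeff_zero_X_mul, P_coeff_zero]
    simp [NumericalSemigroup.H, S.zero_mem]
  | succ n =>
    rw [PowerSeries.coeff_succ_X_mul, P_coeff_succ]
    simp [NumericalSemigroup.H]

lemma carrier_eq_univ (h1 : 1 ∈ S.carrier) : ∀ n, n ∈ S.carrier := by
  intro n
  induction n with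
  | zero => exact S.zero_mem
  | succ k ih => exact S.add_mem ih h1

lemma one_sub_X_pow_ne_zero {k : ℕ} (hk : 0 < k) :
    (1 - (PowerSeries.X : PowerSeries ℤ) ^ k) ≠ 0 := by
  intro h
  have := congrArg (PowerSeries.constantCoeff) h
  simp only [map_sub, map_one, map_pow, PowerSeries.constantCoeff_X,
    zero_pow hk.ne', map_zero, sub_zero] at this
  exact one_ne_zero this

/-- The key structural step: if `P_S = Φ_{ab} Φ_{bc} Φ_{abc}` then `S = ⟨ac, b⟩`. -/
lemma carrier_eq_of_P_eq {a b c : ℕ} (ha : a.Prime) (hb : b.Prime) (hc : c.Prime)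
    (hab : a ≠ b) (hac : a ≠ c) (hbc : b ≠ c) (S : NumericalSemigroup)
    (hP : S.P = cyclotomic (a*b) ℤ * cyclotomic (b*c) ℤ * cyclotomic (a*b*c) ℤ) :
    S.carrier = ↑(AddSubmonoid.closure ({a*c, b} : Set ℕ)) := by
  have hXb : (X : ℤ[X]) ^ b - 1 = cyclotomic 1 ℤ * cyclotomic b ℤ := by
    rw [← prod_cyclotomic_eq_X_pow_sub_one hb.pos ℤ, hb.divisors,
      Finset.prod_insert (by simpa using hb.one_lt.ne), Finset.prod_singleton]
  have hkey : S.P * ((X : ℤ[X]) ^ (a*c) - 1) * ((X : ℤ[X]) ^ b - 1)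
      = ((X : ℤ[X]) ^ (a*b*c) - 1) * ((X : ℤ[X]) - 1) := by
    rw [hP, hXb, X_pow_sub_one_two ha hc hac, X_pow_sub_one_three ha hb hc hab hac hbc,
      cyclotomic_one]
    ring
  have hcast : (S.P : PowerSeries ℤ) * ((PowerSeries.X : PowerSeries ℤ) ^ (a*c) - 1) *
      ((PowerSeries.X : PowerSeries ℤ) ^ b - 1)
      = ((PowerSeries.X : PowerSeries ℤ) ^ (a*b*c) - 1) * (PowerSeries.X - 1) := by
    have hc2 := congrArg (fun f : ℤ[X] => (f : PowerSeries ℤ)) hkey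
    simpa only [Polynomial.coe_mul, Polynomial.coe_sub, Polynomial.coe_pow,
      Polynomial.coe_one, Polynomial.coe_X] using hc2
  have hacpos : 0 < a * c := Nat.mul_pos ha.pos hc.pos
  have cop : (a*c).Coprime b :=
    Nat.Coprime.mul ((Nat.coprime_primes ha hb).mpr hab)
      ((Nat.coprime_primes hc hb).mpr (Ne.symm hbc))
  have hTspec := HT_spec hacpos hb.pos cop
  rw [show a*c*b = a*b*c from by ring] at hTspec
  have hD : ((1 - PowerSeries.X) * ((1 - PowerSeries.X ^ (a*c)) *
      (1 - PowerSeries.X ^ b)) : PowerSeries ℤ) ≠ 0 := by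
    refine mul_ne_zero ?_ (mul_ne_zero ?_ ?_)
    · simpa using one_sub_X_pow_ne_zero (k := 1) one_pos
    · exact one_sub_X_pow_ne_zero hacpos
    · exact one_sub_X_pow_ne_zero hb.pos
  have hmain : ((1 - PowerSeries.X) * ((1 - PowerSeries.X ^ (a*c)) *
        (1 - PowerSeries.X ^ b))) * S.H
      = ((1 - PowerSeries.X) * ((1 - PowerSeries.X ^ (a*c)) *
        (1 - PowerSeries.X ^ b))) * HT (a*c) b := by
    calc ((1 - PowerSeries.X) * ((1 - PowerSeries.X ^ (a*c)) *
        (1 - PowerSeries.X ^ b))) * S.H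
        = (S.P : PowerSeries ℤ) * ((1 - PowerSeries.X ^ (a*c)) * (1 - PowerSeries.X ^ b)) := by
          rw [coe_P_eq]; ring
      _ = (1 - PowerSeries.X ^ (a*b*c)) * (1 - PowerSeries.X) := by
          linear_combination hcast
      _ = (1 - PowerSeries.X) * (HT (a*c) b * ((1 - PowerSeries.X ^ (a*c)) *
            (1 - PowerSeries.X ^ b))) := by rw [hTspec]; ring
      _ = ((1 - PowerSeries.X) * ((1 - PowerSeries.X ^ (a*c)) *
            (1 - PowerSeries.X ^ b))) * HT (a*c) b := by ring
  have hH : S.H = HT (a*c) b := mul_left_cancel₀ hD hmain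
  ext n
  have hcoeff := congrArg (PowerSeries.coeff n) hH
  simp only [NumericalSemigroup.H, HT, PowerSeries.coeff_mk] at hcoeff
  constructor
  · intro h1
    by_contra h2
    rw [if_pos h1, if_neg (by simpa using h2)] at hcoeff
    norm_num at hcoeff
  · intro h2
    by_contra h1
    rw [if_neg h1, if_pos (by simpa using h2)] at hcoeff
    norm_num at hcoeff

end DepthPQR

open NumericalSemigroup in
/-- A cyclotomic numerical semigroup `S` has depth `d` and height `h` if
`P_S ∣ (x^d-1)^h`, `P_S` does not divide `(x^n-1)^{h-1}` for any positive `n`, and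
`P_S` does not divide `(x^{d₁}-1)^h` for any proper divisor `d₁` of `d`. -/
def HasDepthHeight (S : NumericalSemigroup) (d h : ℕ) : Prop :=
  S.P ∣ ((X : Polynomial ℤ) ^ d - 1) ^ h ∧
  (∀ n : ℕ, 0 < n → ¬ S.P ∣ ((X : Polynomial ℤ) ^ n - 1) ^ (h - 1)) ∧
  (∀ d₁ : ℕ, d₁ ∣ d → d₁ < d → ¬ S.P ∣ ((X : Polynomial ℤ) ^ d₁ - 1) ^ h)

open NumericalSemigroup in
/-- If `p, q, r` are distinct primes and `S` is a cyclotomic numerical semigroup of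
depth `pqr` and height `1`, then `S` is `⟨pr, q⟩`, `⟨pq, r⟩` or `⟨qr, p⟩`. -/
theorem depth_pqr_height_one (p q r : ℕ) (hp : p.Prime) (hq : q.Prime) (hr : r.Prime)
    (hpq : p ≠ q) (hpr : p ≠ r) (hqr : q ≠ r) (S : NumericalSemigroup)
    (hcyc : S.IsCyclotomicNS) (hdh : HasDepthHeight S (p * q * r) 1) :
    S.carrier = ↑(AddSubmonoid.closure ({p * r, q} : Set ℕ)) ∨
    S.carrier = ↑(AddSubmonoid.closure ({p * q, r} : Set ℕ)) ∨
    S.carrier = ↑(AddSubmonoid.closure ({q * r, p} : Set ℕ)) := by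
  classical
  have h2p := hp.two_le
  have h2q := hq.two_le
  have h2r := hr.two_le
  have hNpos : 0 < p * q * r := Nat.mul_pos (Nat.mul_pos hp.pos hq.pos) hr.pos
  obtain ⟨hdvd, hnot0, hmin⟩ := hdh
  rw [pow_one] at hdvd
  -- `S ≠ ℕ`, hence `1 ∉ S`
  have hone : 1 ∉ S.carrier := by
    intro h1
    have hall := DepthPQR.carrier_eq_univ S h1
    have hGempty : S.finite_compl.toFinset = ∅ := by
      ext s; simp [Set.Finite.mem_toFinset, hall s]
    have hP1 : S.P = 1 := by rw [NumericalSemigroup.P, hGempty]; simp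
    refine hnot0 1 one_pos ?_
    rw [hP1]
    simp
  -- factor `P` as a product of cyclotomic polynomials
  have hprimes : ∀ d ∈ (p*q*r).divisors, Prime (cyclotomic d ℤ) := fun d hd =>
    (UniqueFactorizationMonoid.irreducible_iff_prime).mp
      (cyclotomic.irreducible (Nat.pos_of_mem_divisors hd))
  have hdvd' : S.P ∣ ∏ d ∈ (p*q*r).divisors, cyclotomic d ℤ := by
    rwa [prod_cyclotomic_eq_X_pow_sub_one hNpos ℤ]
  obtain ⟨E, hE, hassoc⟩ :=
    DepthPQR.exists_assoc_subset_prod _ (p*q*r).divisors hprimes S.P hdvd'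
  obtain ⟨u, hu⟩ := hassoc
  obtain ⟨ε, hε, hεu⟩ := Polynomial.isUnit_iff.mp u.isUnit
  have hPu : S.P * C ε = ∏ e ∈ E, cyclotomic e ℤ := by rw [hεu]; exact hu
  have heval : ε = ∏ e ∈ E, eval 1 (cyclotomic e ℤ) := by
    have h := congrArg (eval 1) hPu
    rwa [eval_mul, DepthPQR.P_eval_one, one_mul, eval_C, eval_prod] at h
  have hEmem : ∀ e ∈ E, e = 1 ∨ e = p ∨ e = q ∨ e = r ∨ e = p*q ∨ e = p*r ∨ e = q*r ∨
      e = p*q*r := by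
    intro e he
    have h := hE he
    rw [DepthPQR.divisors_three_primes hp hq hr] at h
    simpa [Finset.mem_insert, Finset.mem_singleton] using h
  have h1E : 1 ∉ E := by
    intro h1
    have hz : (∏ e ∈ E, eval 1 (cyclotomic e ℤ)) = 0 :=
      Finset.prod_eq_zero h1 (by simp [cyclotomic_one])
    have : ε = 0 := heval.trans hz
    rcases Int.isUnit_iff.mp hε with rfl | rfl <;> norm_num at this
  haveI := Fact.mk hp
  haveI := Fact.mk hq
  haveI := Fact.mk hr
  have hvalpos : ∀ e ∈ E, 0 < eval 1 (cyclotomic e ℤ) := by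
    intro e he
    rcases hEmem e he with rfl | rfl | rfl | rfl | rfl | rfl | rfl | rfl
    · exact absurd he h1E
    · rw [eval_one_cyclotomic_prime]; exact_mod_cast hp.pos
    · rw [eval_one_cyclotomic_prime]; exact_mod_cast hq.pos
    · rw [eval_one_cyclotomic_prime]; exact_mod_cast hr.pos
    · rw [DepthPQR.eval_one_cyclotomic_two hp hq hpq]; norm_num
    · rw [DepthPQR.eval_one_cyclotomic_two hp hr hpr]; norm_num
    · rw [DepthPQR.eval_one_cyclotomic_two hq hr hqr]; norm_num
    · rw [DepthPQR.eval_one_cyclotomic_two_dvd hp hq hpq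
        ((dvd_mul_right p q).mul_right r) ((dvd_mul_left q p).mul_right r)]
      norm_num
  have hprodpos : 0 < ∏ e ∈ E, eval 1 (cyclotomic e ℤ) := Finset.prod_pos hvalpos
  have hε1 : ε = 1 := by
    rcases Int.isUnit_iff.mp hε with h | h
    · exact h
    · exfalso; rw [h] at heval; omega
  have hP : S.P = ∏ e ∈ E, cyclotomic e ℤ := by
    rw [← hPu, hε1, map_one, mul_one]
  have hprod1 : (∏ e ∈ E, eval 1 (cyclotomic e ℤ)) = 1 := by rw [← heval, hε1]
  -- no prime belongs to `E`
  have hnoprime : ∀ x : ℕ, x.Prime → x ∈ E → eval 1 (cyclotomic x ℤ) = (x:ℤ) → False := by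
    intro x hx hxE hxeval
    have hdvdprod : eval 1 (cyclotomic x ℤ) ∣ ∏ e ∈ E, eval 1 (cyclotomic e ℤ) :=
      Finset.dvd_prod_of_mem _ hxE
    rw [hxeval, hprod1] at hdvdprod
    have := Int.le_of_dvd one_pos hdvdprod
    have := hx.two_le
    omega
  have hpE : p ∉ E := fun h => hnoprime p hp h (by rw [eval_one_cyclotomic_prime])
  have hqE : q ∉ E := fun h => hnoprime q hq h (by rw [eval_one_cyclotomic_prime])
  have hrE : r ∉ E := fun h => hnoprime r hr h (by rw [eval_one_cyclotomic_prime])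
  have hE4 : ∀ e ∈ E, e = p*q ∨ e = p*r ∨ e = q*r ∨ e = p*q*r := by
    intro e he
    rcases hEmem e he with rfl | rfl | rfl | rfl | h | h | h | h
    · exact absurd he h1E
    · exact absurd he hpE
    · exact absurd he hqE
    · exact absurd he hrE
    · exact Or.inl h
    · exact Or.inr (Or.inl h)
    · exact Or.inr (Or.inr (Or.inl h))
    · exact Or.inr (Or.inr (Or.inr h))
  -- the coefficient of `x` in `P` is `-1`
  have hc1 : S.P.coeff 1 = -1 := by
    have h := DepthPQR.P_coeff_succ S 0
    simpa [hone, S.zero_mem] using h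
  -- sizes and distinctness of the four candidate indices
  have h1pq : 1 < p * q := by nlinarith
  have h1pr : 1 < p * r := by nlinarith
  have h1qr : 1 < q * r := by nlinarith
  have h1pqr : 1 < p * q * r := by nlinarith
  have hlt_pq : p * q < p * q * r := DepthPQR.lt_mul_right2 (by positivity) h2r
  have hlt_pr : p * r < p * q * r := by
    have e : p * q * r = p * r * q := by ring
    rw [e]; exact DepthPQR.lt_mul_right2 (by positivity) h2q
  have hlt_qr : q * r < p * q * r := by
    have e : p * q * r = q * r * p := by ring
    rw [e]; exact DepthPQR.lt_mul_right2 (by positivity) h2p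
  have hpq_pr : p * q ≠ p * r := fun h => hqr (Nat.eq_of_mul_eq_mul_left hp.pos h)
  have hpq_qr : p * q ≠ q * r := by
    rw [mul_comm p q]
    exact fun h => hpr (Nat.eq_of_mul_eq_mul_left hq.pos h)
  have hpr_qr : p * r ≠ q * r := fun h => hpq (Nat.eq_of_mul_eq_mul_right hr.pos h)
  have hcoeff0 : ∀ e ∈ E, (cyclotomic e ℤ).coeff 0 = 1 := by
    intro e he
    rcases hE4 e he with rfl | rfl | rfl | rfl
    · exact cyclotomic_coeff_zero ℤ h1pq
    · exact cyclotomic_coeff_zero ℤ h1pr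
    · exact cyclotomic_coeff_zero ℤ h1qr
    · exact cyclotomic_coeff_zero ℤ h1pqr
  have hsum : ∑ e ∈ E, (cyclotomic e ℤ).coeff 1 = -1 := by
    rw [← DepthPQR.prod_coeff_one E _ hcoeff0, ← hP, hc1]
  have hEL : E ⊆ ({p*q, p*r, q*r, p*q*r} : Finset ℕ) := by
    intro e he
    rcases hE4 e he with rfl | rfl | rfl | rfl <;>
      simp [Finset.mem_insert, Finset.mem_singleton]
  have hsum2 : ∑ e ∈ ({p*q, p*r, q*r, p*q*r} : Finset ℕ),
      (if e ∈ E then (cyclotomic e ℤ).coeff 1 else 0) = -1 := by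
    rw [Finset.sum_ite_mem, Finset.inter_eq_right.mpr hEL, hsum]
  rw [Finset.sum_insert (by
        simp only [Finset.mem_insert, Finset.mem_singleton]
        push_neg
        exact ⟨hpq_pr, hpq_qr, ne_of_lt hlt_pq⟩),
      Finset.sum_insert (by
        simp only [Finset.mem_insert, Finset.mem_singleton]
        push_neg
        exact ⟨hpr_qr, ne_of_lt hlt_pr⟩),
      Finset.sum_insert (by
        simp only [Finset.mem_singleton]
        exact ne_of_lt hlt_qr),
      Finset.sum_singleton,
      DepthPQR.coeff_one_cyclotomic_two hp hq hpq,
      DepthPQR.coeff_one_cyclotomic_two hp hr hpr,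
      DepthPQR.coeff_one_cyclotomic_two hq hr hqr,
      DepthPQR.coeff_one_cyclotomic_three hp hq hr hpq hpr hqr] at hsum2
  -- case analysis on which of the four indices belong to `E`
  by_cases m1 : p*q ∈ E <;> by_cases m2 : p*r ∈ E <;> by_cases m3 : q*r ∈ E <;>
    by_cases m4 : p*q*r ∈ E <;> simp only [m1, m2, m3, m4, if_pos, if_neg,
      if_true, if_false, not_false_iff] at hsum2 <;> try norm_num at hsum2
  -- six surviving cases
  -- case E = {p*q, p*r, p*q*r}
  · have hEeq : E = ({p*q, p*r, p*q*r} : Finset ℕ) := by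
      apply Finset.Subset.antisymm
      · intro e he
        rcases hE4 e he with rfl | rfl | rfl | rfl
        · simp
        · simp
        · exact absurd he m3
        · simp
      · intro e he
        simp only [Finset.mem_insert, Finset.mem_singleton] at he
        rcases he with rfl | rfl | rfl <;> assumption
    have hPfin : S.P = cyclotomic (p*q) ℤ * cyclotomic (p*r) ℤ * cyclotomic (p*q*r) ℤ := by
      rw [hP, hEeq]
      rw [Finset.prod_insert (by
            simp only [Finset.mem_insert, Finset.mem_singleton]
            push_neg
            exact ⟨hpq_pr, ne_of_lt hlt_pq⟩),
          Finset.prod_insert (by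
            simp only [Finset.mem_singleton]
            exact ne_of_lt hlt_pr),
          Finset.prod_singleton]
      ring
    refine Or.inr (Or.inr ?_)
    refine DepthPQR.carrier_eq_of_P_eq hq hp hr (Ne.symm hpq) hqr hpr S ?_
    rw [show q*p = p*q from mul_comm q p]
    exact hPfin
  -- case E = {p*q, q*r, p*q*r}
  · have hEeq : E = ({p*q, q*r, p*q*r} : Finset ℕ) := by
      apply Finset.Subset.antisymm
      · intro e he
        rcases hE4 e he with rfl | rfl | rfl | rfl
        · simp
        · exact absurd he m2
        · simp
        · simp
      · intro e he
        simp only [Finset.mem_insert, Finset.mem_singleton] at he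
        rcases he with rfl | rfl | rfl <;> assumption
    have hPfin : S.P = cyclotomic (p*q) ℤ * cyclotomic (q*r) ℤ * cyclotomic (p*q*r) ℤ := by
      rw [hP, hEeq]
      rw [Finset.prod_insert (by
            simp only [Finset.mem_insert, Finset.mem_singleton]
            push_neg
            exact ⟨hpq_qr, ne_of_lt hlt_pq⟩),
          Finset.prod_insert (by
            simp only [Finset.mem_singleton]
            exact ne_of_lt hlt_qr),
          Finset.prod_singleton]
      ring
    exact Or.inl (DepthPQR.carrier_eq_of_P_eq hp hq hr hpq hpr hqr S hPfin)
  -- case E = {p*q}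
  · exfalso
    have hEeq : E = ({p*q} : Finset ℕ) := by
      apply Finset.Subset.antisymm
      · intro e he
        rcases hE4 e he with rfl | rfl | rfl | rfl
        · simp
        · exact absurd he m2
        · exact absurd he m3
        · exact absurd he m4
      · intro e he
        simp only [Finset.mem_singleton] at he
        subst he; assumption
    have hPfin : S.P = cyclotomic (p*q) ℤ := by rw [hP, hEeq, Finset.prod_singleton]
    refine hmin (p*q) (dvd_mul_right _ _) hlt_pq ?_
    rw [pow_one, hPfin]
    exact cyclotomic.dvd_X_pow_sub_one (p*q) ℤ
  -- case E = {p*r, q*r, p*q*r}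
  · have hEeq : E = ({p*r, q*r, p*q*r} : Finset ℕ) := by
      apply Finset.Subset.antisymm
      · intro e he
        rcases hE4 e he with rfl | rfl | rfl | rfl
        · exact absurd he m1
        · simp
        · simp
        · simp
      · intro e he
        simp only [Finset.mem_insert, Finset.mem_singleton] at he
        rcases he with rfl | rfl | rfl <;> assumption
    have hPfin : S.P = cyclotomic (p*r) ℤ * cyclotomic (q*r) ℤ * cyclotomic (p*q*r) ℤ := by
      rw [hP, hEeq]
      rw [Finset.prod_insert (by
            simp only [Finset.mem_insert, Finset.mem_singleton]
            push_neg
            exact ⟨hpr_qr, ne_of_lt hlt_pr⟩),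
          Finset.prod_insert (by
            simp only [Finset.mem_singleton]
            exact ne_of_lt hlt_qr),
          Finset.prod_singleton]
      ring
    refine Or.inr (Or.inl ?_)
    refine DepthPQR.carrier_eq_of_P_eq hp hr hq hpr hpq (Ne.symm hqr) S ?_
    rw [show r*q = q*r from mul_comm r q, show p*r*q = p*q*r from by ring]
    exact hPfin
  -- case E = {p*r}
  · exfalso
    have hEeq : E = ({p*r} : Finset ℕ) := by
      apply Finset.Subset.antisymm
      · intro e he
        rcases hE4 e he with rfl | rfl | rfl | rfl
        · exact absurd he m1
        · simp
        · exact absurd he m3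
        · exact absurd he m4
      · intro e he
        simp only [Finset.mem_singleton] at he
        subst he; assumption
    have hPfin : S.P = cyclotomic (p*r) ℤ := by rw [hP, hEeq, Finset.prod_singleton]
    refine hmin (p*r) ⟨q, by ring⟩ hlt_pr ?_
    rw [pow_one, hPfin]
    exact cyclotomic.dvd_X_pow_sub_one (p*r) ℤ
  -- case E = {q*r}
  · exfalso
    have hEeq : E = ({q*r} : Finset ℕ) := by
      apply Finset.Subset.antisymm
      · intro e he
        rcases hE4 e he with rfl | rfl | rfl | rfl
        · exact absurd he m1
        · exact absurd he m2
        · simp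
        · exact absurd he m4
      · intro e he
        simp only [Finset.mem_singleton] at he
        subst he; assumption
    have hPfin : S.P = cyclotomic (q*r) ℤ := by rw [hP, hEeq, Finset.prod_singleton]
    refine hmin (q*r) ⟨p, by ring⟩ hlt_qr ?_
    rw [pow_one, hPfin]
    exact cyclotomic.dvd_X_pow_sub_one (q*r) ℤ
end

section
/- Let p and q be distinct primes and n a positive integer. If T is a cyclotomic numerical semigroup of depth p^n q and height 1, then T = ⟨p^n, q⟩. -/
open Polynomial
open scoped Classical

namespace DepthAux

/-- If each factor is ≡ 1 mod X^k, so is the product. -/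
lemma prod_sub_one_dvd {R : Type*} [CommRing R] (k : ℕ) (s : Finset ℕ) (F : ℕ → R[X])
    (h : ∀ i ∈ s, (X : R[X]) ^ k ∣ F i - 1) :
    (X : R[X]) ^ k ∣ (∏ i ∈ s, F i) - 1 := by
  classical
  induction s using Finset.induction_on with
  | empty => simp
  | @insert a s' hi ih =>
    rw [Finset.prod_insert hi]
    have h1 : (X : R[X]) ^ k ∣ F a - 1 := h a (Finset.mem_insert_self _ _)
    have h2 : (X : R[X]) ^ k ∣ (∏ i ∈ s', F i) - 1 := ih fun i hi' => h i (Finset.mem_insert_of_mem hi')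
    have : F a * ∏ i ∈ s', F i - 1
        = (F a - 1) * ∏ i ∈ s', F i + ((∏ i ∈ s', F i) - 1) := by ring
    rw [this]
    exact dvd_add (h1.mul_right _) h2

/-- A monic divisor of a product of cyclotomic polynomials over ℚ is itself a
product of a subset of them. -/
lemma monic_dvd_prod_cyclotomic (s : Finset ℕ) (hs : ∀ e ∈ s, 0 < e) :
    ∀ (P : ℚ[X]), P.Monic → P ∣ ∏ e ∈ s, cyclotomic e ℚ →
      ∃ t ⊆ s, P = ∏ e ∈ t, cyclotomic e ℚ := by
  classical
  induction s using Finset.induction_on with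
  | empty =>
    intro P hm hd
    simp only [Finset.prod_empty] at hd
    refine ⟨∅, Finset.Subset.refl _, ?_⟩
    simpa using hm.eq_one_of_isUnit (isUnit_of_dvd_one hd)
  | @insert e s' hi ih =>
    intro P hm hd
    rw [Finset.prod_insert hi] at hd
    have he : 0 < e := hs e (Finset.mem_insert_self _ _)
    have hs' : ∀ x ∈ s', 0 < x := fun x hx => hs x (Finset.mem_insert_of_mem hx)
    by_cases hc : cyclotomic e ℚ ∣ P
    · obtain ⟨P', rfl⟩ := hc
      have hm' : P'.Monic := (cyclotomic.monic e ℚ).of_mul_monic_left hm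
      have hd' : P' ∣ ∏ x ∈ s', cyclotomic x ℚ := by
        have hne : cyclotomic e ℚ ≠ 0 := cyclotomic_ne_zero e ℚ
        exact (mul_dvd_mul_iff_left hne).mp hd
      obtain ⟨t, hts, ht⟩ := ih hs' P' hm' hd'
      refine ⟨insert e t, Finset.insert_subset_insert _ hts, ?_⟩
      rw [Finset.prod_insert (fun hh => hi (hts hh)), ht]
    · have hirr : Irreducible (cyclotomic e ℚ) := cyclotomic.irreducible_rat he
      have hcop : IsCoprime (cyclotomic e ℚ) P := hirr.coprime_iff_not_dvd.mpr hc
      have hd' : P ∣ ∏ x ∈ s', cyclotomic x ℚ := hcop.symm.dvd_of_dvd_mul_left hd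
      obtain ⟨t, hts, ht⟩ := ih hs' P hm hd'
      exact ⟨t, hts.trans (Finset.subset_insert _ _), ht⟩



variable {p q : ℕ}

lemma divisors_pq (hp : p.Prime) (hq : q.Prime) : (p * q).divisors = {1, p, q, p * q} := by
  rw [Nat.divisors_mul, hp.divisors, hq.divisors]
  ext e
  simp only [Finset.mem_mul, Finset.mem_insert, Finset.mem_singleton]
  constructor
  · rintro ⟨a, ha, b, hb, rfl⟩
    rcases ha with rfl | rfl <;> rcases hb with rfl | rfl <;> simp
  · rintro (rfl | rfl | rfl | rfl)
    · exact ⟨1, Or.inl rfl, 1, Or.inl rfl, mul_one 1⟩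
    · exact ⟨_, Or.inr rfl, 1, Or.inl rfl, mul_one _⟩
    · exact ⟨1, Or.inl rfl, _, Or.inr rfl, one_mul _⟩
    · exact ⟨_, Or.inr rfl, _, Or.inr rfl, rfl⟩

lemma base_id (hp : p.Prime) (hq : q.Prime) (hpq : p ≠ q) :
    cyclotomic (p * q) ℤ * ((X ^ p - 1) * (X ^ q - 1)) = (X ^ (p * q) - 1) * (X - 1) := by
  have h2p : 2 ≤ p := hp.two_le
  have h2q : 2 ≤ q := hq.two_le
  have hppos : 0 < p := by omega
  have hqpos : 0 < q := by omega
  have hXp : (X : ℤ[X]) ^ p - 1 = ∏ e ∈ p.divisors, cyclotomic e ℤ :=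
    (prod_cyclotomic_eq_X_pow_sub_one hppos ℤ).symm
  have hXq : (X : ℤ[X]) ^ q - 1 = ∏ e ∈ q.divisors, cyclotomic e ℤ :=
    (prod_cyclotomic_eq_X_pow_sub_one hqpos ℤ).symm
  have hXpq : (X : ℤ[X]) ^ (p * q) - 1 = ∏ e ∈ (p * q).divisors, cyclotomic e ℤ :=
    (prod_cyclotomic_eq_X_pow_sub_one (Nat.mul_pos hppos hqpos) ℤ).symm
  rw [hXp, hXq, hXpq, divisors_pq hp hq, hp.divisors, hq.divisors]
  have h1p : (1 : ℕ) ≠ p := by omega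
  have h1q : (1 : ℕ) ≠ q := by omega
  have h1pq : (1 : ℕ) ≠ p * q := by nlinarith
  have hppq : p ≠ p * q := by nlinarith
  have hqpq : q ≠ p * q := by nlinarith
  rw [show ({1, p, q, p * q} : Finset ℕ) = insert 1 (insert p (insert q {p * q})) from rfl]
  rw [Finset.prod_insert (by simp [h1p, h1q, h1pq, hpq, hppq, hqpq]),
    Finset.prod_insert (by simp [h1p, h1q, h1pq, hpq, hppq, hqpq]),
    Finset.prod_insert (by simp [h1p, h1q, h1pq, hpq, hppq, hqpq]), Finset.prod_singleton,
    Finset.prod_insert (by simp [h1p, h1q, h1pq, hpq, hppq, hqpq]), Finset.prod_singleton,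
    Finset.prod_insert (by simp [h1p, h1q, h1pq, hpq, hppq, hqpq]), Finset.prod_singleton,
    cyclotomic_one]
  ring


lemma cyc_exp (hp : p.Prime) (m : ℕ) :
    cyclotomic (p ^ m * (p * q)) ℤ = expand ℤ (p ^ m) (cyclotomic (p * q) ℤ) := by
  induction m with
  | zero => simp [expand_one]
  | succ m ih =>
    have hdvd : p ∣ p ^ m * (p * q) := Dvd.dvd.mul_left (dvd_mul_right p q) _
    have h1 : cyclotomic (p ^ m * (p * q) * p) ℤ = expand ℤ p (cyclotomic (p ^ m * (p * q)) ℤ) :=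
      (cyclotomic_expand_eq_cyclotomic hp hdvd ℤ).symm
    have h2 : p ^ (m + 1) * (p * q) = p ^ m * (p * q) * p := by ring
    rw [h2, h1, ih, expand_expand]
    congr 1
    ring

lemma Xpow_sub_one_ne_zero {k : ℕ} (hk : 0 < k) : (X : ℤ[X]) ^ k - 1 ≠ 0 := by
  have := X_pow_sub_C_ne_zero (R := ℤ) hk 1
  simpa using this

lemma prod_Icc_succ_split (f : ℕ → ℤ[X]) (m : ℕ) :
    ∏ i ∈ Finset.Icc 1 (m + 1), f i = f 1 * ∏ i ∈ Finset.Icc 1 m, f (i + 1) := by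
  have h1 : Finset.Icc 1 (m + 1) = insert 1 (Finset.Icc 2 (m + 1)) := by
    ext e
    simp only [Finset.mem_Icc, Finset.mem_insert]
    omega
  have h2 : Finset.Icc 2 (m + 1) = (Finset.Icc 1 m).map (addRightEmbedding 1) := by
    rw [Finset.map_add_right_Icc]
  rw [h1, Finset.prod_insert (by simp), h2, Finset.prod_map]
  simp [addRightEmbedding]

lemma tele (hp : p.Prime) (hq : q.Prime) (hpq : p ≠ q) (m : ℕ) :
    (X ^ (p ^ m * q) - 1) * (X - 1) =
      ((X ^ (p ^ m) - 1) * (X ^ q - 1)) * ∏ i ∈ Finset.Icc 1 m, cyclotomic (p ^ i * q) ℤ := by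
  induction m with
  | zero =>
    rw [Finset.Icc_eq_empty (by omega), Finset.prod_empty, pow_zero, one_mul, pow_one, mul_one]
    ring
  | succ m ih =>
    have hppos : 0 < p := hp.pos
    apply mul_right_cancel₀ (Xpow_sub_one_ne_zero hppos)
    have hIH2 : (X ^ (p ^ (m + 1) * q) - 1) * (X ^ p - 1) =
        ((X ^ (p ^ (m + 1)) - 1) * (X ^ (p * q) - 1)) *
          ∏ i ∈ Finset.Icc 1 m, cyclotomic (p ^ (i + 1) * q) ℤ := by
      have h := congrArg (expand ℤ p) ih
      simp only [map_mul, map_sub, map_one, map_pow, expand_X, map_prod, ← pow_mul] at h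
      have h2 : ∀ x ∈ Finset.Icc 1 m, expand ℤ p (cyclotomic (p ^ x * q) ℤ)
          = cyclotomic (p ^ (x + 1) * q) ℤ := by
        intro i hi
        have hi1 : 1 ≤ i := (Finset.mem_Icc.mp hi).1
        have hdvd : p ∣ p ^ i * q := Dvd.dvd.mul_right (dvd_pow_self p (by omega)) q
        rw [cyclotomic_expand_eq_cyclotomic hp hdvd]
        congr 1
        ring
      rw [Finset.prod_congr rfl h2] at h
      linear_combination h
    rw [prod_Icc_succ_split (fun i => cyclotomic (p ^ i * q) ℤ) m]
    simp only [pow_one]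
    have hbase := base_id hp hq hpq
    linear_combination (X - (1 : ℤ[X])) * hIH2 -
      ((X ^ (p ^ (m + 1)) - 1) * ∏ i ∈ Finset.Icc 1 m, cyclotomic (p ^ (i + 1) * q) ℤ) * hbase

lemma cyclotomic_pq_coeffs (hp : p.Prime) (hq : q.Prime) (hpq : p ≠ q) :
    (cyclotomic (p * q) ℤ).coeff 0 = 1 ∧ (cyclotomic (p * q) ℤ).coeff 1 = -1 := by
  have h2p : 2 ≤ p := hp.two_le
  have h2q : 2 ≤ q := hq.two_le
  have hbase := base_id hp hq hpq
  set Φ := cyclotomic (p * q) ℤ with hΦ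
  have hB : ((X : ℤ[X]) ^ p - 1) * (X ^ q - 1) = X ^ (p + q) - X ^ p - X ^ q + 1 := by
    rw [pow_add]; ring
  have hR : ((X : ℤ[X]) ^ (p * q) - 1) * (X - 1) = X ^ (p * q + 1) - X ^ (p * q) - X + 1 := by
    rw [pow_succ]; ring
  have hpq2 : 2 ≤ p * q := by nlinarith
  have hpq4 : 4 ≤ p * q := by nlinarith
  have hc0 : Φ.coeff 0 = 1 := cyclotomic_coeff_zero ℤ (by nlinarith)
  have hc1 : Φ.coeff 1 = -1 := by
    have h1 := congrArg (fun f => Polynomial.coeff f 1) hbase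
    simp only [hB, hR, coeff_mul, Finset.Nat.sum_antidiagonal_eq_sum_range_succ_mk,
      Finset.sum_range_succ, Finset.sum_range_zero, coeff_sub, coeff_add, coeff_one,
      coeff_X_pow, coeff_X] at h1
    have n1 : (1:ℕ) ≠ p + q := by omega
    have n2 : (1:ℕ) ≠ p := by omega
    have n3 : (1:ℕ) ≠ q := by omega
    have n4 : (0:ℕ) ≠ p + q := by omega
    have n5 : (0:ℕ) ≠ p := by omega
    have n6 : (0:ℕ) ≠ q := by omega
    have n7 : (1:ℕ) ≠ p * q + 1 := by omega
    have n8 : (1:ℕ) ≠ p * q := by omega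
    have n9 : (1:ℕ) ≠ 0 := by omega
    simp only [Nat.sub_zero, Nat.sub_self, n1, n2, n3, n4, n5, n6, n7, n8, n9, if_false,
      if_true, eq_self_iff_true, hc0] at h1
    linarith [h1]
  exact ⟨hc0, hc1⟩

lemma cyc_low (hp : p.Prime) (hq : q.Prime) (hpq : p ≠ q) (i : ℕ) (hi : 1 ≤ i) :
    ∃ U : ℤ[X], cyclotomic (p ^ i * q) ℤ =
      1 - X ^ (p ^ (i - 1)) + X ^ (p ^ (i - 1)) * X ^ (p ^ (i - 1)) * U := by
  obtain ⟨hc0, hc1⟩ := cyclotomic_pq_coeffs hp hq hpq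
  have hdvd : (X : ℤ[X]) ^ 2 ∣ cyclotomic (p * q) ℤ - 1 + X := by
    rw [X_pow_dvd_iff]
    intro d hd
    interval_cases d <;>
      simp [coeff_sub, coeff_add, coeff_one, coeff_X, hc0, hc1]
  obtain ⟨U0, hU0⟩ := hdvd
  have hΦ : cyclotomic (p * q) ℤ = 1 - X + X * X * U0 := by
    linear_combination hU0
  refine ⟨expand ℤ (p ^ (i - 1)) U0, ?_⟩
  have he : p ^ (i - 1) * (p * q) = p ^ i * q := by
    have h1 : i - 1 + 1 = i := by omega
    calc p ^ (i - 1) * (p * q) = p ^ (i - 1) * p * q := by ring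
      _ = p ^ (i - 1 + 1) * q := by rw [pow_succ]
      _ = p ^ i * q := by rw [h1]
  rw [← he, cyc_exp hp, hΦ]
  simp only [map_add, map_sub, map_one, map_mul, expand_X]



noncomputable def chi (T : NumericalSemigroup) (m : ℕ) : ℤ :=
  if m ∈ T.carrier then 1 else 0

lemma chi_zero (T : NumericalSemigroup) : chi T 0 = 1 := by
  simp [chi, T.zero_mem]

lemma chi_nonneg (T : NumericalSemigroup) (m : ℕ) : 0 ≤ chi T m := by
  unfold chi; split <;> norm_num

lemma chi_le_one (T : NumericalSemigroup) (m : ℕ) : chi T m ≤ 1 := by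
  unfold chi; split <;> norm_num

lemma gapQ_coeff (T : NumericalSemigroup) (m : ℕ) :
    (∑ s ∈ T.finite_compl.toFinset, (X : ℤ[X]) ^ s).coeff m = 1 - chi T m := by
  rw [finset_sum_coeff]
  simp only [coeff_X_pow]
  rw [Finset.sum_ite_eq (T.finite_compl.toFinset) m (fun _ => (1 : ℤ))]
  by_cases h : m ∈ T.carrier <;>
    simp [h, chi, Set.Finite.mem_toFinset]

lemma P_coeff_zero (T : NumericalSemigroup) : T.P.coeff 0 = 1 := by
  unfold NumericalSemigroup.P
  rw [coeff_add, mul_coeff_zero, gapQ_coeff]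
  simp [chi_zero]

lemma P_coeff_succ (T : NumericalSemigroup) (t : ℕ) :
    T.P.coeff (t + 1) = chi T (t + 1) - chi T t := by
  unfold NumericalSemigroup.P
  have hXm : ((X - 1) * ∑ s ∈ T.finite_compl.toFinset, (X : ℤ[X]) ^ s)
      = X * (∑ s ∈ T.finite_compl.toFinset, (X : ℤ[X]) ^ s)
        - ∑ s ∈ T.finite_compl.toFinset, (X : ℤ[X]) ^ s := by ring
  rw [coeff_add, hXm, coeff_sub, coeff_X_mul, gapQ_coeff, gapQ_coeff, coeff_one,
    if_neg (by omega)]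
  ring

lemma P_mul_geom_coeff (T : NumericalSemigroup) (c m : ℕ) :
    (T.P * ∑ k ∈ Finset.range c, (X : ℤ[X]) ^ k).coeff m
      = chi T m - if c ≤ m then chi T (m - c) else 0 := by
  induction c with
  | zero => simp
  | succ c ih =>
    rw [Finset.sum_range_succ, mul_add, coeff_add, ih, coeff_mul_X_pow']
    rcases Nat.lt_trichotomy m c with h | h | h
    · rw [if_neg (by omega), if_neg (by omega), if_neg (by omega)]
      ring
    · subst h
      rw [if_pos le_rfl, if_pos le_rfl, if_neg (by omega), Nat.sub_self, P_coeff_zero, chi_zero]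
      ring
    · have h1 : c ≤ m := by omega
      have h2 : c + 1 ≤ m := by omega
      have h3 : m - c = (m - (c + 1)) + 1 := by omega
      rw [if_pos h1, if_pos h1, if_pos h2, h3, P_coeff_succ]
      ring

end DepthAux
open NumericalSemigroup in
/-- If `p ≠ q` are primes, `n ≥ 1`, and `T` is a cyclotomic numerical semigroup of
depth `p^n·q` and height `1`, then `T = ⟨p^n, q⟩`. -/
theorem depth_pnq_height_one (p q : ℕ) (hp : p.Prime) (hq : q.Prime) (hpq : p ≠ q)
    (n : ℕ) (hn : 0 < n) (T : NumericalSemigroup)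
    (hcyc : T.IsCyclotomicNS) (hdh : HasDepthHeight T (p ^ n * q) 1) :
    T.carrier = ↑(AddSubmonoid.closure ({p ^ n, q} : Set ℕ)) := by
  classical
  obtain ⟨hdvd1, hh2, hh3⟩ := hdh
  have h2p : 2 ≤ p := hp.two_le
  have h2q : 2 ≤ q := hq.two_le
  have hqpos : 0 < q := by omega
  have hppos : 0 < p := by omega
  have hdpos : 0 < p ^ n * q := by positivity
  have hPdvd : T.P ∣ (X : ℤ[X]) ^ (p ^ n * q) - 1 := by rwa [pow_one] at hdvd1
  -- the set of gaps is nonempty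
  have hne : T.finite_compl.toFinset.Nonempty := by
    rw [Finset.nonempty_iff_ne_empty]
    intro h
    have hP1 : T.P = 1 := by
      unfold NumericalSemigroup.P; rw [h]; simp
    have := hh2 1 one_pos
    rw [hP1] at this
    exact this (one_dvd _)
  -- T.P is monic
  have hmonic : T.P.Monic := by
    set G := T.finite_compl.toFinset with hG
    set F := G.max' hne with hF
    set Q : ℤ[X] := ∑ s ∈ G, X ^ s with hQ
    have hFmem : F ∈ G := G.max'_mem hne
    have hFnotmem : F ∉ T.carrier := by
      have := hFmem
      rw [hG, Set.Finite.mem_toFinset] at this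
      exact this
    have hcF : Q.coeff F = 1 := by
      rw [hQ, DepthAux.gapQ_coeff T F]
      simp [DepthAux.chi, hFnotmem]
    have hdegle : Q.degree ≤ (F : WithBot ℕ) := by
      refine (Polynomial.degree_sum_le _ _).trans ?_
      refine Finset.sup_le fun s hs => ?_
      rw [degree_X_pow]
      exact_mod_cast G.le_max' s hs
    have hQne : Q ≠ 0 := fun h => by simp [h] at hcF
    have hnat : Q.natDegree = F := by
      refine le_antisymm (natDegree_le_iff_degree_le.mpr hdegle) ?_
      exact le_natDegree_of_ne_zero (by rw [hcF]; norm_num)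
    have hQm : Q.Monic := by
      rw [Polynomial.Monic, Polynomial.leadingCoeff, hnat, hcF]
    have hXm : ((X : ℤ[X]) - 1).Monic := by simpa using monic_X_sub_C (1 : ℤ)
    have hm' : ((X - 1) * Q).Monic := hXm.mul hQm
    have hdegQ : Q.degree = (F : WithBot ℕ) := by
      rw [degree_eq_natDegree hQne, hnat]
    have hdegX : ((X : ℤ[X]) - 1).degree = 1 := by
      have : ((X : ℤ[X]) - 1) = X - C 1 := by simp
      rw [this, degree_X_sub_C]
    have hdegm : ((X - 1) * Q).degree = ((1 + F : ℕ) : WithBot ℕ) := by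
      rw [degree_mul, hdegX, hdegQ]
      push_cast
      rfl
    have hlt : (1 : ℤ[X]).degree < ((X - 1) * Q).degree := by
      rw [degree_one, hdegm]
      exact_mod_cast (by omega : 0 < 1 + F)
    have hP : T.P = (X - 1) * Q + 1 := by
      unfold NumericalSemigroup.P
      rw [add_comm]
    rw [hP]
    exact hm'.add_of_left hlt
  -- factor T.P into cyclotomics
  have hmapdvd : (T.P.map (Int.castRingHom ℚ)) ∣ ∏ e ∈ (p ^ n * q).divisors, cyclotomic e ℚ := by
    rw [prod_cyclotomic_eq_X_pow_sub_one hdpos ℚ]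
    have h := Polynomial.map_dvd (Int.castRingHom ℚ) hPdvd
    simpa using h
  obtain ⟨t, hts, htP⟩ := DepthAux.monic_dvd_prod_cyclotomic (p ^ n * q).divisors
    (fun e he => Nat.pos_of_mem_divisors he) _ (hmonic.map _) hmapdvd
  have hPt : T.P = ∏ e ∈ t, cyclotomic e ℤ := by
    apply Polynomial.map_injective (Int.castRingHom ℚ)
      (fun a b hab => by simpa using hab)
    rw [htP, Polynomial.map_prod]
    exact (Finset.prod_congr rfl fun e _ => (map_cyclotomic_int e ℚ)).symm
  -- eval at 1
  have hev1 : T.P.eval 1 = 1 := by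
    unfold NumericalSemigroup.P; simp
  have hprod1 : ∏ e ∈ t, (cyclotomic e ℤ).eval 1 = 1 := by
    rw [← Polynomial.eval_prod, ← hPt, hev1]
  have h1nt : (1 : ℕ) ∉ t := by
    intro h1t
    have hz : (cyclotomic 1 ℤ).eval 1 = 0 := by simp [cyclotomic_one]
    have := Finset.prod_eq_zero (f := fun e => (cyclotomic e ℤ).eval 1) h1t hz
    rw [hprod1] at this
    norm_num at this
  have hnotpp : ∀ e ∈ t, ¬ IsPrimePow e := by
    intro e het hpp
    obtain ⟨r, k, hr, hk, hrk⟩ := hpp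
    have hrnat : r.Prime := hr.nat_prime
    haveI : Fact r.Prime := ⟨hrnat⟩
    obtain ⟨k', rfl⟩ : ∃ k', k = k' + 1 := ⟨k - 1, by omega⟩
    have hev : (cyclotomic e ℤ).eval 1 = r := by
      rw [← hrk]
      exact_mod_cast eval_one_cyclotomic_prime_pow k'
    have hdvd : ((r : ℤ)) ∣ 1 := by
      rw [← hprod1, ← hev]
      exact Finset.dvd_prod_of_mem _ het
    have := Int.le_of_dvd one_pos hdvd
    have := hrnat.two_le
    omega
  -- every element of t has the form p^i * q with 1 ≤ i ≤ n
  have hform : ∀ e ∈ t, ∃ i, 1 ≤ i ∧ i ≤ n ∧ e = p ^ i * q := by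
    intro e het
    have hed : e ∣ p ^ n * q := (Nat.mem_divisors.mp (hts het)).1
    by_cases hqe : q ∣ e
    · obtain ⟨e', rfl⟩ := hqe
      have h1 : q * e' ∣ q * p ^ n := by rwa [mul_comm (p ^ n) q] at hed
      have he' : e' ∣ p ^ n := (mul_dvd_mul_iff_left (by omega : q ≠ 0)).mp h1
      obtain ⟨i, hile, rfl⟩ := (Nat.dvd_prime_pow hp).mp he'
      have hi0 : i ≠ 0 := by
        rintro rfl
        exact hnotpp _ het (by simpa using hq.isPrimePow)
      exact ⟨i, by omega, hile, by ring⟩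
    · have hcop : Nat.Coprime e q := ((Nat.Prime.coprime_iff_not_dvd hq).mpr hqe).symm
      have he' : e ∣ p ^ n := (Nat.Coprime.dvd_of_dvd_mul_right hcop) hed
      obtain ⟨i, hile, rfl⟩ := (Nat.dvd_prime_pow hp).mp he'
      rcases Nat.eq_zero_or_pos i with rfl | hipos
      · exact absurd het (by simpa using h1nt)
      · exact absurd ⟨p, i, hp.prime, hipos, rfl⟩ (hnotpp _ het)
  -- the index set I
  set I : Finset ℕ := (Finset.Icc 1 n).filter (fun i => p ^ i * q ∈ t) with hI
  have hpqinj : ∀ i j : ℕ, p ^ i * q = p ^ j * q → i = j := by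
    intro i j hij
    have : p ^ i = p ^ j := Nat.eq_of_mul_eq_mul_right hqpos hij
    exact Nat.pow_right_injective h2p this
  have htI : t = I.image (fun i => p ^ i * q) := by
    ext e
    constructor
    · intro het
      obtain ⟨i, hi1, hin, rfl⟩ := hform e het
      exact Finset.mem_image.mpr ⟨i, Finset.mem_filter.mpr
        ⟨Finset.mem_Icc.mpr ⟨hi1, hin⟩, het⟩, rfl⟩
    · intro hei
      obtain ⟨i, hiI, rfl⟩ := Finset.mem_image.mp hei
      exact (Finset.mem_filter.mp hiI).2
  have hPI : T.P = ∏ i ∈ I, cyclotomic (p ^ i * q) ℤ := by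
    rw [hPt, htI, Finset.prod_image]
    intro i _ j _ hij
    exact hpqinj i j hij
  -- n belongs to I, by depth minimality
  have hnI : n ∈ I := by
    by_contra hnot
    have hpnq : p ^ n * q ∉ t := by
      intro hmem
      exact hnot (Finset.mem_filter.mpr ⟨Finset.mem_Icc.mpr ⟨hn, le_rfl⟩, hmem⟩)
    have hsub : t ⊆ (p ^ (n - 1) * q).divisors := by
      intro e het
      obtain ⟨i, hi1, hin, rfl⟩ := hform e het
      have hine : i ≠ n := by
        rintro rfl
        exact hpnq het
      refine Nat.mem_divisors.mpr ⟨?_, by positivity⟩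
      exact mul_dvd_mul_right (pow_dvd_pow p (by omega)) q
    have hdvd' : T.P ∣ (X : ℤ[X]) ^ (p ^ (n - 1) * q) - 1 := by
      rw [hPt, ← prod_cyclotomic_eq_X_pow_sub_one (by positivity) ℤ]
      exact Finset.prod_dvd_prod_of_subset t _ _ hsub
    refine hh3 (p ^ (n - 1) * q) (mul_dvd_mul_right (pow_dvd_pow p (by omega)) q) ?_ ?_
    · have : p ^ (n - 1) < p ^ n := Nat.pow_lt_pow_right h2p (by omega)
      exact (Nat.mul_lt_mul_right hqpos).mpr this
    · rwa [pow_one]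
  -- completeness: every i in [1, n] belongs to I
  have hIcc : Finset.Icc 1 n ⊆ I := by
    by_contra hnot
    have hex : ((Finset.Icc 1 n) \ I).Nonempty := by
      rwa [Finset.sdiff_nonempty]
    set j := ((Finset.Icc 1 n) \ I).min' hex with hj
    have hjmem := Finset.min'_mem _ hex
    rw [Finset.mem_sdiff] at hjmem
    obtain ⟨hjIcc, hjnI⟩ := hjmem
    rw [Finset.mem_Icc] at hjIcc
    obtain ⟨hj1, hjn⟩ := hjIcc
    have hjmin : ∀ i, 1 ≤ i → i < j → i ∈ I := by
      intro i hi1 hij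
      by_contra hiI
      have : j ≤ i := Finset.min'_le _ _ (Finset.mem_sdiff.mpr
        ⟨Finset.mem_Icc.mpr ⟨hi1, by omega⟩, hiI⟩)
      omega
    -- split the product
    have hA : I.filter (fun i => i < j) = Finset.Icc 1 (j - 1) := by
      ext i
      rw [Finset.mem_filter, Finset.mem_Icc]
      constructor
      · intro ⟨hiI, hij⟩
        have h := Finset.mem_Icc.mp (Finset.filter_subset _ _ hiI)
        exact ⟨h.1, by omega⟩
      · intro ⟨h1, h2⟩
        exact ⟨hjmin i h1 (by omega), by omega⟩
    set B := I.filter (fun i => ¬ i < j) with hB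
    have hsplitP : T.P = (∏ i ∈ Finset.Icc 1 (j - 1), cyclotomic (p ^ i * q) ℤ) *
        (∏ i ∈ B, cyclotomic (p ^ i * q) ℤ) := by
      rw [hPI, ← Finset.prod_filter_mul_prod_filter_not I (fun i => i < j), hA]
    have hnB : n ∈ B := by
      refine Finset.mem_filter.mpr ⟨hnI, ?_⟩
      simp only [not_lt]
      omega
    set a := B.min' ⟨n, hnB⟩ with ha
    have haB : a ∈ B := Finset.min'_mem _ _
    have haI : a ∈ I := (Finset.mem_filter.mp haB).1
    have hja : j < a := by
      have h1 : ¬ a < j := (Finset.mem_filter.mp haB).2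
      have h2 : a ≠ j := by
        intro h
        rw [h] at haI
        exact hjnI haI
      omega
    have han : a ≤ n := (Finset.mem_Icc.mp (Finset.filter_subset _ _ haI)).2
    have ha1 : 1 ≤ a := by omega
    obtain ⟨c, hc⟩ : ∃ c, c = p ^ (j - 1) := ⟨_, rfl⟩
    obtain ⟨M, hMdef⟩ : ∃ M, M = p ^ (a - 1) := ⟨_, rfl⟩
    have hcpos : 0 < c := by rw [hc]; positivity
    have hMpos : 0 < M := by rw [hMdef]; positivity
    have hcM : c < M := by
      rw [hc, hMdef]
      exact Nat.pow_lt_pow_right h2p (by omega)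
    -- the B-product is 1 - X^M + X^(M+1) * J
    obtain ⟨J, hJ⟩ : ∃ J : ℤ[X], ∏ i ∈ B, cyclotomic (p ^ i * q) ℤ
        = 1 - X ^ M + X ^ (M + 1) * J := by
      have herase : ∀ i ∈ B.erase a, (X : ℤ[X]) ^ (M + 1) ∣ cyclotomic (p ^ i * q) ℤ - 1 := by
        intro i hi
        have hiB : i ∈ B := Finset.mem_of_mem_erase hi
        have hia : a < i := by
          have h1 := Finset.min'_le B i hiB
          have h2 := Finset.ne_of_mem_erase hi
          omega
        have hi1 : 1 ≤ i := by omega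
        obtain ⟨U, hU⟩ := DepthAux.cyc_low hp hq hpq i hi1
        have hle : M + 1 ≤ p ^ (i - 1) := by
          have h1 : p ^ a ≤ p ^ (i - 1) := Nat.pow_le_pow_right (by omega) (by omega)
          have h2 : 2 * M ≤ p ^ a := by
            rw [hMdef]
            calc 2 * p ^ (a - 1) ≤ p * p ^ (a - 1) := by
                  exact Nat.mul_le_mul_right _ h2p
              _ = p ^ (a - 1 + 1) := by rw [pow_succ, mul_comm]
              _ = p ^ a := by congr 1; omega
          omega
        have : cyclotomic (p ^ i * q) ℤ - 1
            = X ^ (p ^ (i - 1)) * (X ^ (p ^ (i - 1)) * U - 1) := by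
          rw [hU]; ring
        rw [this]
        exact Dvd.dvd.mul_right (pow_dvd_pow X hle) _
      obtain ⟨V, hV⟩ := DepthAux.prod_sub_one_dvd (M + 1) (B.erase a)
        (fun i => cyclotomic (p ^ i * q) ℤ) herase
      obtain ⟨U, hU⟩ := DepthAux.cyc_low hp hq hpq a ha1
      rw [← hMdef] at hU
      obtain ⟨M', hM'⟩ : ∃ M', M = M' + 1 := ⟨M - 1, by omega⟩
      refine ⟨X ^ M' * U + V * (1 - X ^ M + X ^ M * X ^ M * U), ?_⟩
      have hBsplit : ∏ i ∈ B, cyclotomic (p ^ i * q) ℤ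
          = cyclotomic (p ^ a * q) ℤ * ∏ i ∈ B.erase a, cyclotomic (p ^ i * q) ℤ :=
        (Finset.mul_prod_erase B _ haB).symm
      have hprodE : ∏ i ∈ B.erase a, cyclotomic (p ^ i * q) ℤ = 1 + X ^ (M + 1) * V := by
        linear_combination hV
      rw [hBsplit, hprodE, hU, hM']
      ring
    -- main polynomial identity
    have hXone_ne : ((X : ℤ[X]) - 1) ≠ 0 := by
      have := DepthAux.Xpow_sub_one_ne_zero (k := 1) one_pos
      simpa using this
    have hXq_ne : ((X : ℤ[X]) ^ q - 1) ≠ 0 := DepthAux.Xpow_sub_one_ne_zero hqpos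
    have hmain : T.P * (∑ k ∈ Finset.range c, (X : ℤ[X]) ^ k)
        = (∑ k ∈ Finset.range c, (X : ℤ[X]) ^ (q * k)) *
            ∏ i ∈ B, cyclotomic (p ^ i * q) ℤ := by
      apply mul_right_cancel₀ (mul_ne_zero hXone_ne hXq_ne)
      have g1 : (∑ k ∈ Finset.range c, (X : ℤ[X]) ^ k) * (X - 1) = X ^ c - 1 :=
        geom_sum_mul X c
      have g2 : (∑ k ∈ Finset.range c, (X : ℤ[X]) ^ (q * k)) * (X ^ q - 1)
          = X ^ (q * c) - 1 := by
        have h := geom_sum_mul ((X : ℤ[X]) ^ q) c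
        simpa [← pow_mul] using h
      have ht := DepthAux.tele hp hq hpq (j - 1)
      rw [← hc] at ht
      linear_combination
        ((∑ k ∈ Finset.range c, (X : ℤ[X]) ^ k) * (X - 1) * (X ^ q - 1)) * hsplitP +
        ((∏ i ∈ Finset.Icc 1 (j-1), cyclotomic (p ^ i * q) ℤ) *
          (∏ i ∈ B, cyclotomic (p ^ i * q) ℤ) * (X ^ q - 1)) * g1 -
        (∏ i ∈ B, cyclotomic (p ^ i * q) ℤ) * ht -
        ((∏ i ∈ B, cyclotomic (p ^ i * q) ℤ) * (X - 1)) * g2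
    -- coefficients of the right-hand side
    set Sq := ∑ k ∈ Finset.range c, (X : ℤ[X]) ^ (q * k) with hSq
    have hSqpow : ∀ b : ℕ, Sq.coeff (p ^ b) = 0 := by
      intro b
      rw [hSq, finset_sum_coeff]
      refine Finset.sum_eq_zero fun k hk => ?_
      rw [coeff_X_pow, if_neg]
      intro hcon
      have : q ∣ p ^ b := ⟨k, hcon⟩
      have := Nat.Prime.dvd_of_dvd_pow hq this
      exact hpq ((Nat.prime_dvd_prime_iff_eq hq hp).mp this).symm
    have hSq0 : Sq.coeff 0 = 1 := by
      rw [hSq, finset_sum_coeff]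
      rw [Finset.sum_eq_single 0]
      · simp
      · intro k hk hkne
        rw [coeff_X_pow, if_neg]
        intro hcon
        rcases Nat.mul_eq_zero.mp hcon.symm with h | h <;> omega
      · intro h
        exact absurd (Finset.mem_range.mpr hcpos) h
    have hRcoeff : ∀ m, m ≤ M → (Sq * ∏ i ∈ B, cyclotomic (p ^ i * q) ℤ).coeff m
        = Sq.coeff m - (if M ≤ m then Sq.coeff (m - M) else 0) := by
      intro m hm
      rw [hJ]
      have hexp : Sq * (1 - X ^ M + X ^ (M + 1) * J)
          = Sq - Sq * X ^ M + (Sq * J) * X ^ (M + 1) := by ring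
      have hcond : ¬ (M + 1 ≤ m) := by omega
      rw [hexp, coeff_add, coeff_sub, coeff_mul_X_pow', coeff_mul_X_pow', if_neg hcond]
      ring
    have hSqc : Sq.coeff c = 0 := by rw [hc]; exact hSqpow (j - 1)
    have hSqM : Sq.coeff M = 0 := by rw [hMdef]; exact hSqpow (a - 1)
    -- extract: c ∈ T.carrier
    have hchic : DepthAux.chi T c = 1 := by
      have h1 := congrArg (fun f => Polynomial.coeff f c) hmain
      have hcond : ¬ (M ≤ c) := by omega
      rw [DepthAux.P_mul_geom_coeff, hRcoeff c (by omega), if_pos le_rfl,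
        if_neg hcond, Nat.sub_self, DepthAux.chi_zero, hSqc] at h1
      linarith [h1]
    -- extract: contradiction at M
    have h2 := congrArg (fun f => Polynomial.coeff f M) hmain
    rw [DepthAux.P_mul_geom_coeff, hRcoeff M le_rfl, if_pos (by omega : c ≤ M),
      if_pos le_rfl, Nat.sub_self, hSq0, hSqM] at h2
    have hchiMc : DepthAux.chi T (M - c) = 1 := by
      have h3 := DepthAux.chi_nonneg T M
      have h4 := DepthAux.chi_le_one T (M - c)
      have h5 := DepthAux.chi_nonneg T (M - c)
      linarith [h2]
    have hchiM0 : DepthAux.chi T M = 0 := by linarith [h2, hchiMc]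
    have hmemc : c ∈ T.carrier := by
      by_contra hmem
      rw [DepthAux.chi, if_neg hmem] at hchic
      norm_num at hchic
    have hmemMc : M - c ∈ T.carrier := by
      by_contra hmem
      rw [DepthAux.chi, if_neg hmem] at hchiMc
      norm_num at hchiMc
    have hmemM : M ∈ T.carrier := by
      have := T.add_mem hmemMc hmemc
      rwa [Nat.sub_add_cancel (by omega : c ≤ M)] at this
    rw [DepthAux.chi, if_pos hmemM] at hchiM0
    norm_num at hchiM0
  -- conclude I = Icc 1 n and the full product formula
  have hIeq : I = Finset.Icc 1 n := Finset.Subset.antisymm (Finset.filter_subset _ _) hIcc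
  have hPfull : T.P = ∏ i ∈ Finset.Icc 1 n, cyclotomic (p ^ i * q) ℤ := by
    rw [hPI, hIeq]
  -- the final identity
  have hXone_ne : ((X : ℤ[X]) - 1) ≠ 0 := by
    have := DepthAux.Xpow_sub_one_ne_zero (k := 1) one_pos
    simpa using this
  have hXpn_ne : ((X : ℤ[X]) ^ (p ^ n) - 1) ≠ 0 :=
    DepthAux.Xpow_sub_one_ne_zero (by positivity)
  have hmain2 : T.P * (∑ k ∈ Finset.range q, (X : ℤ[X]) ^ k)
      = ∑ k ∈ Finset.range q, (X : ℤ[X]) ^ (p ^ n * k) := by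
    apply mul_right_cancel₀ (mul_ne_zero hXone_ne hXpn_ne)
    have g1 : (∑ k ∈ Finset.range q, (X : ℤ[X]) ^ k) * (X - 1) = X ^ q - 1 :=
      geom_sum_mul X q
    have g2 : (∑ k ∈ Finset.range q, (X : ℤ[X]) ^ (p ^ n * k)) * (X ^ (p ^ n) - 1)
        = X ^ (p ^ n * q) - 1 := by
      have h := geom_sum_mul ((X : ℤ[X]) ^ (p ^ n)) q
      simpa [← pow_mul] using h
    have ht := DepthAux.tele hp hq hpq n
    linear_combination
      ((∑ k ∈ Finset.range q, (X : ℤ[X]) ^ k) * (X - 1) * (X ^ (p ^ n) - 1)) * hPfull +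
      ((∏ i ∈ Finset.Icc 1 n, cyclotomic (p ^ i * q) ℤ) * (X ^ (p ^ n) - 1)) * g1 -
      ht - ((X : ℤ[X]) - 1) * g2
  -- coefficient relation
  have hScoeff : ∀ m : ℕ, (∑ k ∈ Finset.range q, (X : ℤ[X]) ^ (p ^ n * k)).coeff m
      = if ∃ k, k < q ∧ m = p ^ n * k then 1 else 0 := by
    intro m
    rw [finset_sum_coeff]
    by_cases hex : ∃ k, k < q ∧ m = p ^ n * k
    · obtain ⟨k₀, hk₀, rfl⟩ := hex
      rw [if_pos ⟨k₀, hk₀, rfl⟩]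
      rw [Finset.sum_eq_single_of_mem k₀ (Finset.mem_range.mpr hk₀)]
      · rw [coeff_X_pow, if_pos rfl]
      · intro k hk hkne
        rw [coeff_X_pow, if_neg]
        intro hcon
        exact hkne (Nat.eq_of_mul_eq_mul_left (by positivity) hcon.symm)
    · rw [if_neg hex]
      refine Finset.sum_eq_zero fun k hk => ?_
      rw [coeff_X_pow, if_neg]
      intro hcon
      exact hex ⟨k, Finset.mem_range.mp hk, hcon⟩
  have hrel : ∀ m : ℕ, DepthAux.chi T m - (if q ≤ m then DepthAux.chi T (m - q) else 0)
      = if ∃ k, k < q ∧ m = p ^ n * k then 1 else 0 := by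
    intro m
    have h := congrArg (fun f => Polynomial.coeff f m) hmain2
    rw [DepthAux.P_mul_geom_coeff, hScoeff] at h
    exact h
  -- p ^ n and q are in the carrier
  have hmempn : p ^ n ∈ T.carrier := by
    have h := hrel (p ^ n)
    have hex1 : ∃ k, k < q ∧ p ^ n = p ^ n * k := ⟨1, by omega, by ring⟩
    rw [if_pos hex1] at h
    have h2 : (if q ≤ p ^ n then DepthAux.chi T (p ^ n - q) else 0) ≥ 0 := by
      split
      · exact DepthAux.chi_nonneg T _
      · norm_num
    have h3 := DepthAux.chi_le_one T (p ^ n)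
    have h4 : DepthAux.chi T (p ^ n) = 1 := by linarith
    by_contra hmem
    rw [DepthAux.chi, if_neg hmem] at h4
    norm_num at h4
  have hmemq : q ∈ T.carrier := by
    have h := hrel q
    have hnok : ¬ ∃ k, k < q ∧ q = p ^ n * k := by
      rintro ⟨k, hk, hqk⟩
      have hdvd : p ∣ q := dvd_trans (dvd_pow_self p (by omega)) ⟨k, hqk⟩
      exact hpq ((Nat.prime_dvd_prime_iff_eq hp hq).mp hdvd)
    rw [if_neg hnok, if_pos le_rfl, Nat.sub_self, DepthAux.chi_zero] at h
    have h4 : DepthAux.chi T q = 1 := by linarith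
    by_contra hmem
    rw [DepthAux.chi, if_neg hmem] at h4
    norm_num at h4
  -- the two sets are equal
  have forward : ∀ m : ℕ, m ∈ T.carrier → m ∈ AddSubmonoid.closure ({p ^ n, q} : Set ℕ) := by
    intro m
    induction m using Nat.strong_induction_on with
    | _ m ih =>
      intro hm
      have h := hrel m
      by_cases hex : ∃ k, k < q ∧ m = p ^ n * k
      · obtain ⟨k, hk, rfl⟩ := hex
        have hpn : (p ^ n : ℕ) ∈ AddSubmonoid.closure ({p ^ n, q} : Set ℕ) :=
          AddSubmonoid.subset_closure (by simp)
        have := AddSubmonoid.nsmul_mem _ hpn k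
        rwa [smul_eq_mul, mul_comm] at this
      · rw [if_neg hex, DepthAux.chi, if_pos hm] at h
        have hq_le : q ≤ m := by
          by_contra hqle
          rw [if_neg hqle] at h
          norm_num at h
        rw [if_pos hq_le] at h
        have hchi : DepthAux.chi T (m - q) = 1 := by linarith
        have hmemmq : m - q ∈ T.carrier := by
          by_contra hmem
          rw [DepthAux.chi, if_neg hmem] at hchi
          norm_num at hchi
        have hlt : m - q < m := by omega
        have h1 := ih (m - q) hlt hmemmq
        have h2 : (q : ℕ) ∈ AddSubmonoid.closure ({p ^ n, q} : Set ℕ) :=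
          AddSubmonoid.subset_closure (by simp)
        have := AddSubmonoid.add_mem _ h1 h2
        rwa [Nat.sub_add_cancel hq_le] at this
  have backward : ∀ m : ℕ, m ∈ AddSubmonoid.closure ({p ^ n, q} : Set ℕ) → m ∈ T.carrier := by
    have hle : AddSubmonoid.closure ({p ^ n, q} : Set ℕ) ≤
        { carrier := T.carrier, zero_mem' := T.zero_mem,
          add_mem' := fun ha hb => T.add_mem ha hb } := by
      rw [AddSubmonoid.closure_le]
      rintro x (rfl | rfl)
      · exact hmempn
      · exact hmemq
    exact fun m hm => hle hm
  ext m
  exact ⟨fun hm => forward m hm, fun hm => backward m hm⟩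
end

section
/- Let p and q be distinct primes, k ≥ 1 an integer, and e_1, ..., e_k ∈ {0,1} with e_k = 1. If Φ_{pq}(x)^{e_1} · Φ_{p^2 q}(x)^{e_2} · ... · Φ_{p^k q}(x)^{e_k} = P_T(x) for some numerical semigroup T, then e_i = 1 for all 1 ≤ i ≤ k and T = ⟨p^k, q⟩. -/
open Polynomial
open scoped Classical

namespace CycAux

noncomputable def myH (s : Set ℕ) : PowerSeries ℤ :=
  PowerSeries.mk fun n => if n ∈ s then 1 else 0

noncomputable def onE : PowerSeries ℤ := PowerSeries.mk fun _ => (1 : ℤ)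

lemma one_sub_X_mul_onE : (1 - PowerSeries.X) * onE = (1 : PowerSeries ℤ) := by
  ext n
  rw [sub_mul, one_mul, map_sub]
  cases n with
  | zero => simp [onE]
  | succ m => simp [onE, PowerSeries.coeff_succ_X_mul, PowerSeries.coeff_one]

def Scl (a b : ℕ) : Set ℕ := ↑(AddSubmonoid.closure ({a, b} : Set ℕ))

lemma mem_Scl {a b n : ℕ} : n ∈ Scl a b ↔ ∃ α β : ℕ, α * a + β * b = n := by
  show n ∈ AddSubmonoid.closure ({a, b} : Set ℕ) ↔ _
  rw [AddSubmonoid.mem_closure_pair]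
  simp [smul_eq_mul]

noncomputable def gI (a b n : ℕ) : ℤ := if n ∈ Scl a b then 1 else 0
noncomputable def wI (a b n : ℕ) : ℤ := if ∃ β, β < a ∧ n = β * b then 1 else 0

lemma hAp (a b : ℕ) (ha : 1 ≤ a) (hb : 1 ≤ b) (hab : Nat.Coprime a b) (n : ℕ) :
    gI a b n - (if a ≤ n then gI a b (n - a) else 0) = wI a b n := by
  by_cases hw : ∃ β, β < a ∧ n = β * b
  · obtain ⟨β, hβa, rfl⟩ := hw
    have hw' : ∃ β', β' < a ∧ β * b = β' * b := ⟨β, hβa, rfl⟩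
    have hmem : β * b ∈ Scl a b := mem_Scl.2 ⟨0, β, by ring⟩
    unfold wI gI
    rw [if_pos hw', if_pos hmem]
    by_cases hle : a ≤ β * b
    · rw [if_pos hle]
      have hnot : β * b - a ∉ Scl a b := by
        intro hm
        obtain ⟨α, β', hαβ⟩ := mem_Scl.1 hm
        have h3 : β * b - a + a = β * b := Nat.sub_add_cancel hle
        have h2 : α * a + β' * b + a = β * b := by omega
        have hb' : β' < β := by
          have : β' * b < β * b := by omega
          exact Nat.lt_of_mul_lt_mul_right this
        obtain ⟨δ, hδ1, hδ2⟩ : ∃ δ, β = β' + δ ∧ 1 ≤ δ := ⟨β - β', by omega, by omega⟩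
        have h6 : (β' + δ) * b = β' * b + δ * b := by ring
        have h5 : δ * b = α * a + a := by rw [hδ1] at h2; omega
        have hra : a * (α + 1) = α * a + a := by ring
        have hdvd : a ∣ δ * b := ⟨α + 1, by omega⟩
        have hdvd2 : a ∣ δ := hab.dvd_of_dvd_mul_right hdvd
        have : a ≤ δ := Nat.le_of_dvd (by omega) hdvd2
        omega
      rw [if_neg hnot]; norm_num
    · rw [if_neg hle]; norm_num
  · unfold wI gI
    rw [if_neg hw]
    by_cases hle : a ≤ n
    · rw [if_pos hle]
      have hiff : n ∈ Scl a b ↔ n - a ∈ Scl a b := by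
        constructor
        · intro hm
          obtain ⟨α, β, hαβ⟩ := mem_Scl.1 hm
          rcases Nat.eq_zero_or_pos α with hα0 | hαpos
          · subst hα0
            have hz : (0 : ℕ) * a = 0 := by ring
            have hn : n = β * b := by omega
            have hβa : a ≤ β := by
              by_contra hc
              exact hw ⟨β, by omega, hn⟩
            refine mem_Scl.2 ⟨b - 1, β - a, ?_⟩
            have e1 : (b - 1) * a = b * a - a := Nat.sub_one_mul b a
            have e2 : (β - a) * b = β * b - a * b := Nat.sub_mul β a b
            have e3 : a * b ≤ β * b := Nat.mul_le_mul_right b hβa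
            have e4 : a ≤ a * b := Nat.le_mul_of_pos_right a hb
            have e5 : b * a = a * b := Nat.mul_comm b a
            omega
          · refine mem_Scl.2 ⟨α - 1, β, ?_⟩
            have e1 : (α - 1) * a = α * a - a := Nat.sub_one_mul α a
            have e2 : a ≤ α * a := Nat.le_mul_of_pos_left a hαpos
            omega
        · intro hm
          obtain ⟨α, β, hαβ⟩ := mem_Scl.1 hm
          refine mem_Scl.2 ⟨α + 1, β, ?_⟩
          have e1 : (α + 1) * a = α * a + a := by ring
          omega
      by_cases h1 : n ∈ Scl a b
      · rw [if_pos h1, if_pos (hiff.1 h1)]; ring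
      · rw [if_neg h1, if_neg (fun hc => h1 (hiff.2 hc))]; ring
    · rw [if_neg hle]
      have hnm : n ∉ Scl a b := by
        intro hm
        obtain ⟨α, β, hαβ⟩ := mem_Scl.1 hm
        have hα0 : α = 0 := by
          rcases Nat.eq_zero_or_pos α with h | h
          · exact h
          · exfalso; have : a ≤ α * a := Nat.le_mul_of_pos_left a h; omega
        subst hα0
        have hz : (0 : ℕ) * a = 0 := by ring
        have hn : n = β * b := by omega
        have hβ : β < a := by
          have : β ≤ β * b := Nat.le_mul_of_pos_right β hb
          omega
        exact hw ⟨β, hβ, hn⟩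
      rw [if_neg hnm]; ring

lemma hW (a b : ℕ) (ha : 1 ≤ a) (hb : 1 ≤ b) (n : ℕ) :
    wI a b n - (if b ≤ n then wI a b (n - b) else 0) =
      (if n = 0 then 1 else 0) - (if n = a * b then 1 else 0) := by
  by_cases hn0 : n = 0
  · subst hn0
    have h1 : ∃ β, β < a ∧ (0 : ℕ) = β * b := ⟨0, by omega, by ring⟩
    have hab : a * b ≠ 0 := by positivity
    unfold wI
    rw [if_pos h1, if_neg (by omega : ¬ b ≤ 0), if_pos rfl, if_neg (by omega : ¬ (0:ℕ) = a * b)]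
  · by_cases hnab : n = a * b
    · subst hnab
      have h1 : ¬ ∃ β, β < a ∧ a * b = β * b := by
        rintro ⟨β, hβ, hβe⟩
        have : β * b < a * b := (Nat.mul_lt_mul_right (by omega : 0 < b)).2 hβ
        omega
      have hble : b ≤ a * b := Nat.le_mul_of_pos_left b ha
      have h2 : ∃ β, β < a ∧ a * b - b = β * b := by
        refine ⟨a - 1, by omega, ?_⟩
        have e1 : (a - 1) * b = a * b - b := Nat.sub_one_mul a b
        omega
      unfold wI
      rw [if_pos hble, if_neg h1, if_pos h2, if_pos rfl, if_neg hn0]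
    · have hRHS : (if n = 0 then (1:ℤ) else 0) - (if n = a * b then 1 else 0) = 0 := by
        rw [if_neg hn0, if_neg hnab]; ring
      rw [hRHS]
      by_cases hw : ∃ β, β < a ∧ n = β * b
      · obtain ⟨β, hβ, rfl⟩ := hw
        have hβ1 : 1 ≤ β := by
          rcases Nat.eq_zero_or_pos β with h | h
          · exfalso; apply hn0; rw [h]; ring
          · exact h
        have hble : b ≤ β * b := Nat.le_mul_of_pos_left b hβ1
        have h2 : ∃ β', β' < a ∧ β * b - b = β' * b := by
          refine ⟨β - 1, by omega, ?_⟩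
          have e1 : (β - 1) * b = β * b - b := Nat.sub_one_mul β b
          omega
        unfold wI
        rw [if_pos ⟨β, hβ, rfl⟩, if_pos hble, if_pos h2]
        try ring
      · unfold wI
        rw [if_neg hw]
        by_cases hble : b ≤ n
        · rw [if_pos hble]
          have h2 : ¬ ∃ β', β' < a ∧ n - b = β' * b := by
            rintro ⟨β', hβ', hβe⟩
            have e1 : (β' + 1) * b = β' * b + b := by ring
            have hβ'1 : β' + 1 < a ∨ β' + 1 = a := by omega
            rcases hβ'1 with h | h
            · exact hw ⟨β' + 1, h, by omega⟩
            · apply hnab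
              have : (β' + 1) * b = a * b := by rw [h]
              omega
          rw [if_neg h2]; ring
        · rw [if_neg hble]; ring

lemma Zid (a b : ℕ) (ha : 1 ≤ a) (hb : 1 ≤ b) (hab : Nat.Coprime a b) (n : ℕ) :
    gI a b n - (if a ≤ n then gI a b (n - a) else 0) - (if b ≤ n then gI a b (n - b) else 0)
      + (if a + b ≤ n then gI a b (n - (a + b)) else 0) =
      (if n = 0 then 1 else 0) - (if n = a * b then 1 else 0) := by
  have h1 := hAp a b ha hb hab n
  have h3 := hW a b ha hb n
  have h2 : (if b ≤ n then gI a b (n - b) else 0) - (if a + b ≤ n then gI a b (n - (a + b)) else 0)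
      = (if b ≤ n then wI a b (n - b) else 0) := by
    by_cases hble : b ≤ n
    · rw [if_pos hble, if_pos hble, ← hAp a b ha hb hab (n - b)]
      have e : (if a + b ≤ n then gI a b (n - (a + b)) else 0)
          = (if a ≤ n - b then gI a b (n - b - a) else 0) := by
        have e1 : n - (a + b) = n - b - a := by omega
        rw [e1]
        exact if_congr (by omega) rfl rfl
      rw [e]
    · rw [if_neg hble, if_neg hble, if_neg (by omega : ¬ a + b ≤ n)]
      ring
  linarith

lemma Gmul (a b : ℕ) (ha : 1 ≤ a) (hb : 1 ≤ b) (hab : Nat.Coprime a b) :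
    myH (Scl a b) * ((1 - PowerSeries.X ^ a) * (1 - PowerSeries.X ^ b)) =
      1 - (PowerSeries.X : PowerSeries ℤ) ^ (a * b) := by
  have hexp : ((1 : PowerSeries ℤ) - PowerSeries.X ^ a) * (1 - PowerSeries.X ^ b)
      = 1 - PowerSeries.X ^ a - PowerSeries.X ^ b + PowerSeries.X ^ (a + b) := by
    rw [pow_add]; ring
  rw [hexp, mul_add, mul_sub, mul_sub, mul_one]
  ext n
  rw [map_add, map_sub, map_sub, map_sub, PowerSeries.coeff_mul_X_pow',
    PowerSeries.coeff_mul_X_pow', PowerSeries.coeff_mul_X_pow',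
    PowerSeries.coeff_one, PowerSeries.coeff_X_pow]
  have hg : ∀ m : ℕ, (PowerSeries.coeff m) (myH (Scl a b)) = gI a b m := by
    intro m; rw [myH, PowerSeries.coeff_mk]; rfl
  simp only [hg]
  exact Zid a b ha hb hab n

lemma divisors_pq {p q : ℕ} (hp : p.Prime) (hq : q.Prime) :
    (p * q).divisors = {1, p, q, p * q} := by
  ext d
  rw [Nat.mem_divisors]
  constructor
  · rintro ⟨hd, -⟩
    simp only [Finset.mem_insert, Finset.mem_singleton]
    by_cases hpd : p ∣ d
    · obtain ⟨d', rfl⟩ := hpd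
      have hd' : d' ∣ q := (Nat.mul_dvd_mul_iff_left hp.pos).1 hd
      rcases hq.eq_one_or_self_of_dvd d' hd' with h | h
      · subst h; simp
      · subst h; simp
    · have hcop : Nat.Coprime d p := ((hp.coprime_iff_not_dvd).2 hpd).symm
      have : d ∣ q := hcop.dvd_of_dvd_mul_left hd
      rcases hq.eq_one_or_self_of_dvd d this with h | h <;> simp [h]
  · intro hd
    have hq0 : q ≠ 0 := hq.pos.ne'
    have hp0 : p ≠ 0 := hp.pos.ne'
    simp only [Finset.mem_insert, Finset.mem_singleton] at hd
    rcases hd with rfl | rfl | rfl | rfl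
    · exact ⟨one_dvd _, by positivity⟩
    · exact ⟨dvd_mul_right _ _, by positivity⟩
    · exact ⟨dvd_mul_left _ _, by positivity⟩
    · exact ⟨dvd_rfl, by positivity⟩

lemma base_id {p q : ℕ} (hp : p.Prime) (hq : q.Prime) (hpq : p ≠ q) :
    cyclotomic (p * q) ℤ * ((X ^ p - 1) * (X ^ q - 1)) = (X ^ (p * q) - 1) * (X - 1) := by
  have hp2 := hp.two_le
  have hq2 := hq.two_le
  have hppq : p < p * q := (Nat.lt_mul_iff_one_lt_right hp.pos).2 hq.one_lt
  have hqpq : q < p * q := (Nat.lt_mul_iff_one_lt_left hq.pos).2 hp.one_lt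
  have h1 : ∏ i ∈ (p * q).divisors, cyclotomic i ℤ = X ^ (p * q) - 1 :=
    prod_cyclotomic_eq_X_pow_sub_one (by positivity) ℤ
  have h2 : ∏ i ∈ p.divisors, cyclotomic i ℤ = X ^ p - 1 :=
    prod_cyclotomic_eq_X_pow_sub_one hp.pos ℤ
  have h3 : ∏ i ∈ q.divisors, cyclotomic i ℤ = X ^ q - 1 :=
    prod_cyclotomic_eq_X_pow_sub_one hq.pos ℤ
  rw [divisors_pq hp hq] at h1
  rw [hp.divisors] at h2
  rw [hq.divisors] at h3
  rw [Finset.prod_insert (by simp; omega), Finset.prod_insert (by simp; omega),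
    Finset.prod_insert (by simp; omega), Finset.prod_singleton] at h1
  rw [Finset.prod_insert (by simp; omega), Finset.prod_singleton] at h2
  rw [Finset.prod_insert (by simp; omega), Finset.prod_singleton] at h3
  rw [cyclotomic_one] at h1 h2 h3
  rw [← h1, ← h2, ← h3]
  ring

lemma antidiag_one : (Finset.HasAntidiagonal.antidiagonal (1 : ℕ)) = {(0,1),(1,0)} := rfl

lemma coeff_mul_one_aux (f g : ℤ[X]) :
    (f * g).coeff 1 = f.coeff 0 * g.coeff 1 + f.coeff 1 * g.coeff 0 := by
  rw [Polynomial.coeff_mul, antidiag_one]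
  rw [Finset.sum_insert (by decide), Finset.sum_singleton]

lemma cyclo_pq_coeff_one {p q : ℕ} (hp : p.Prime) (hq : q.Prime) (hpq : p ≠ q) :
    (cyclotomic (p * q) ℤ).coeff 1 = -1 := by
  have hp2 := hp.two_le
  have hq2 := hq.two_le
  have hpq1 : 1 < p * q := by nlinarith
  have h0 : (cyclotomic (p * q) ℤ).coeff 0 = 1 := cyclotomic_coeff_zero ℤ hpq1
  have hb := base_id hp hq hpq
  have hG0 : ((X ^ p - 1 : ℤ[X]) * (X ^ q - 1)).coeff 0 = 1 := by
    rw [Polynomial.mul_coeff_zero]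
    simp only [Polynomial.coeff_sub, coeff_X_pow, Polynomial.coeff_one]
    split_ifs <;> first | contradiction | omega | norm_num
  have hG1 : ((X ^ p - 1 : ℤ[X]) * (X ^ q - 1)).coeff 1 = 0 := by
    rw [coeff_mul_one_aux]
    simp only [Polynomial.coeff_sub, coeff_X_pow, Polynomial.coeff_one]
    split_ifs <;> first | contradiction | omega | norm_num
  have hR : ((X ^ (p * q) - 1 : ℤ[X]) * (X - 1)).coeff 1 = -1 := by
    rw [coeff_mul_one_aux]
    simp only [Polynomial.coeff_sub, coeff_X_pow, Polynomial.coeff_one,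
      Polynomial.coeff_X_one, Polynomial.coeff_X_zero]
    split_ifs <;> first | contradiction | omega | norm_num
  have hc := congrArg (fun f : ℤ[X] => f.coeff 1) hb
  rw [coeff_mul_one_aux, hG0, hG1, h0, hR] at hc
  linarith

lemma expandC {p q : ℕ} (hp : p.Prime) (i : ℕ) (hi : 1 ≤ i) :
    cyclotomic (p ^ i * q) ℤ = expand ℤ (p ^ (i - 1)) (cyclotomic (p * q) ℤ) := by
  induction i with
  | zero => omega
  | succ m ih =>
    rcases Nat.eq_zero_or_pos m with rfl | hm
    · simp [expand_one]
    · have ihm := ih hm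
      have hdvd : p ∣ p ^ m * q := Dvd.dvd.mul_right (dvd_pow_self p hm.ne') q
      have hstep : cyclotomic (p ^ (m + 1) * q) ℤ = expand ℤ p (cyclotomic (p ^ m * q) ℤ) := by
        rw [cyclotomic_expand_eq_cyclotomic hp hdvd]
        congr 1
        rw [pow_succ]; ring
      rw [hstep, ihm, expand_expand]
      have hexp : p * p ^ (m - 1) = p ^ (m + 1 - 1) := by
        rw [← pow_succ']
        congr 1
        omega
      rw [hexp]

lemma dagger {p q : ℕ} (hp : p.Prime) (hq : q.Prime) (hpq : p ≠ q) (j : ℕ) :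
    (∏ i ∈ Finset.Icc 1 j, cyclotomic (p ^ i * q) ℤ) * ((X ^ (p ^ j) - 1) * (X ^ q - 1))
      = (X ^ (p ^ j * q) - 1) * (X - 1) := by
  induction j with
  | zero => simp; ring
  | succ m ih =>
    have hE : expand ℤ (p ^ m) (cyclotomic (p * q) ℤ) = cyclotomic (p ^ (m + 1) * q) ℤ := by
      rw [expandC hp (m + 1) (by omega)]
      norm_num
    have hTT := congrArg (fun f : ℤ[X] => expand ℤ (p ^ m) f) (base_id hp hq hpq)
    simp only [map_mul, map_sub, map_one, map_pow, expand_X] at hTT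
    rw [hE, ← pow_mul, ← pow_mul, ← pow_mul] at hTT
    rw [show p ^ m * p = p ^ (m + 1) from (pow_succ p m).symm,
      show p ^ m * (p * q) = p ^ (m + 1) * q from by rw [pow_succ]; ring] at hTT
    have hsplit : ∏ i ∈ Finset.Icc 1 (m + 1), cyclotomic (p ^ i * q) ℤ
        = (∏ i ∈ Finset.Icc 1 m, cyclotomic (p ^ i * q) ℤ) * cyclotomic (p ^ (m + 1) * q) ℤ :=
      Finset.prod_Icc_succ_top (by omega) _
    have hX0 : (X ^ (p ^ m) - 1 : ℤ[X]) ≠ 0 := by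
      intro hc
      have h' := congrArg (fun f : ℤ[X] => f.coeff 0) hc
      simp only [Polynomial.coeff_sub, coeff_X_pow, Polynomial.coeff_zero,
        Polynomial.coeff_one] at h'
      simp at h'
      rw [if_neg (Nat.pow_pos hp.pos (n := m)).ne] at h'
      norm_num at h'
    apply mul_right_cancel₀ hX0
    rw [hsplit]
    linear_combination (cyclotomic (p ^ (m + 1) * q) ℤ * (X ^ (p ^ (m + 1)) - 1)) * ih
      + (X - 1) * hTT

lemma keyL {p q : ℕ} (hp : p.Prime) (hq : q.Prime) (hpq : p ≠ q) (j : ℕ) :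
    ((∏ i ∈ Finset.Icc 1 j, cyclotomic (p ^ i * q) ℤ : Polynomial ℤ) : PowerSeries ℤ)
      = (1 - PowerSeries.X) * myH (Scl (p ^ j) q) := by
  have ha : 1 ≤ p ^ j := Nat.pow_pos hp.pos
  have hq1 : 1 ≤ q := hq.pos
  have hcop : Nat.Coprime (p ^ j) q := Nat.Coprime.pow_left j ((Nat.coprime_primes hp hq).2 hpq)
  have hds := congrArg (fun f : Polynomial ℤ => (f : PowerSeries ℤ)) (dagger hp hq hpq j)
  simp only [Polynomial.coe_mul, Polynomial.coe_sub, Polynomial.coe_pow, Polynomial.coe_one,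
    Polynomial.coe_X] at hds
  have hG := Gmul (p ^ j) q ha hq1 hcop
  have hZ : ((1 : PowerSeries ℤ) - PowerSeries.X ^ (p ^ j)) * (1 - PowerSeries.X ^ q) ≠ 0 := by
    intro hc
    have h0 := congrArg (PowerSeries.constantCoeff) hc
    simp only [map_mul, map_sub, map_one, map_pow, PowerSeries.constantCoeff_X, map_zero] at h0
    rw [zero_pow (by omega : p ^ j ≠ 0), zero_pow (by omega : q ≠ 0)] at h0
    norm_num at h0
  apply mul_right_cancel₀ hZ
  linear_combination hds - (1 - PowerSeries.X) * hG

lemma Pser (T : NumericalSemigroup) :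
    ((T.P : Polynomial ℤ) : PowerSeries ℤ) = (1 - PowerSeries.X) * myH T.carrier := by
  have hg : ∀ m : ℕ, (∑ s ∈ T.finite_compl.toFinset, (X : Polynomial ℤ) ^ s).coeff m
      = if m ∈ T.carrier then 0 else 1 := by
    intro m
    rw [Polynomial.finset_sum_coeff]
    simp only [coeff_X_pow]
    rw [Finset.sum_ite_eq]
    by_cases hm : m ∈ T.carrier
    · rw [if_neg (by simp [Set.Finite.mem_toFinset]; exact hm), if_pos hm]
    · rw [if_pos (by simp [Set.Finite.mem_toFinset]; exact hm), if_neg hm]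
  ext n
  rw [Polynomial.coeff_coe, NumericalSemigroup.P]
  have hRHS : (PowerSeries.coeff n) ((1 - PowerSeries.X) * myH T.carrier)
      = (PowerSeries.coeff n) (myH T.carrier)
        - (PowerSeries.coeff n) (PowerSeries.X * myH T.carrier) := by
    rw [sub_mul, one_mul, map_sub]
  rw [hRHS]
  rw [Polynomial.coeff_add, Polynomial.coeff_one, sub_mul, one_mul, Polynomial.coeff_sub]
  cases n with
  | zero =>
    rw [if_pos rfl]
    rw [Polynomial.mul_coeff_zero, Polynomial.coeff_X_zero, zero_mul]
    rw [hg 0, if_pos T.zero_mem]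
    rw [PowerSeries.coeff_zero_X_mul]
    rw [myH, PowerSeries.coeff_mk, if_pos T.zero_mem]
    norm_num
  | succ m =>
    rw [if_neg (by omega : ¬ m + 1 = 0)]
    rw [Polynomial.coeff_X_mul, hg m, hg (m + 1)]
    rw [PowerSeries.coeff_succ_X_mul]
    rw [myH, PowerSeries.coeff_mk, PowerSeries.coeff_mk]
    by_cases h1 : m ∈ T.carrier <;> by_cases h2 : (m + 1) ∈ T.carrier <;>
      simp [h1, h2]

end CycAux

open NumericalSemigroup in
/-- Let `p ≠ q` be primes, `k ≥ 1`, and `e_1, …, e_k ∈ {0,1}` with `e_k = 1`. If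
`Φ_{pq}^{e_1}·Φ_{p²q}^{e_2}·⋯·Φ_{p^k q}^{e_k} = P_T` for a numerical semigroup `T`, then
`e_i = 1` for all `1 ≤ i ≤ k` and `T = ⟨p^k, q⟩`. -/
theorem cyclotomic_product_eq_semigroupPolynomial (p q : ℕ) (hp : p.Prime) (hq : q.Prime)
    (hpq : p ≠ q) (k : ℕ) (hk : 1 ≤ k) (e : ℕ → ℕ)
    (he : ∀ i, 1 ≤ i → i ≤ k → e i ≤ 1) (hek : e k = 1) (T : NumericalSemigroup)
    (h : ∏ i ∈ Finset.Icc 1 k, Polynomial.cyclotomic (p ^ i * q) ℤ ^ e i = T.P) :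
    (∀ i, 1 ≤ i → i ≤ k → e i = 1) ∧
    T.carrier = ↑(AddSubmonoid.closure ({p ^ k, q} : Set ℕ)) := by
  classical
  have hp2 := hp.two_le
  have hq2 := hq.two_le
  have h1pq : 1 < p * q := by nlinarith
  have hPser := CycAux.Pser T
  have hXne : (1 - PowerSeries.X : PowerSeries ℤ) ≠ 0 := by
    intro hc
    have h0 := congrArg (PowerSeries.constantCoeff) hc
    simp only [map_sub, map_one, PowerSeries.constantCoeff_X, map_zero] at h0
    norm_num at h0
  have part1 : ∀ i, 1 ≤ i → i ≤ k → e i = 1 := by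
    by_contra hcon
    push_neg at hcon
    obtain ⟨i0, hi01, hi0k, hi0e⟩ := hcon
    have hex : ∃ i, 1 ≤ i ∧ i ≤ k ∧ e i = 0 :=
      ⟨i0, hi01, hi0k, by have := he i0 hi01 hi0k; omega⟩
    obtain ⟨hi11, hi1k, hi1e⟩ := Nat.find_spec hex
    set i1 := Nat.find hex with hi1def
    have hi1klt : i1 < k := by
      rcases Nat.lt_or_ge i1 k with hlt | hge
      · exact hlt
      · exfalso
        have hik : i1 = k := by omega
        rw [hik] at hi1e
        omega
    have hmin1 : ∀ i, 1 ≤ i → i < i1 → e i = 1 := by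
      intro i ha1 ha3
      have h4 := Nat.find_min hex ha3
      have h5 := he i ha1 (by omega)
      by_contra hne
      exact h4 ⟨ha1, by omega, by omega⟩
    have hex2 : ∃ i, i1 < i ∧ i ≤ k ∧ e i = 1 := ⟨k, hi1klt, le_refl k, hek⟩
    obtain ⟨hri1, hrk, hre⟩ := Nat.find_spec hex2
    set r := Nat.find hex2 with hrdef
    have hminr : ∀ i, i1 < i → i < r → e i = 0 := by
      intro i ha1 ha2
      have h3 := Nat.find_min hex2 ha2
      have h5 := he i (by omega) (by omega)
      by_contra hne
      exact h3 ⟨ha1, by omega, by omega⟩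
    set j := i1 - 1 with hjdef
    have hji1 : j + 1 = i1 := by omega
    have hjr : j + 2 ≤ r := by omega
    have hjk : j ≤ k := by omega
    set c := p ^ (r - 1) with hcdef
    have hc1 : 1 ≤ c := Nat.pow_pos hp.pos
    have hcpj : p ^ j < c := Nat.pow_lt_pow_right hp.one_lt (by omega)
    have hsplit : (∏ i ∈ Finset.Icc 1 k, Polynomial.cyclotomic (p ^ i * q) ℤ ^ e i)
        = (∏ i ∈ Finset.Icc 1 j, Polynomial.cyclotomic (p ^ i * q) ℤ)
          * ∏ i ∈ Finset.Ioc j k, Polynomial.cyclotomic (p ^ i * q) ℤ ^ e i := by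
      rw [show Finset.Icc 1 k = Finset.Ioc 0 k from Finset.Icc_add_one_left_eq_Ioc 0 k]
      rw [← Finset.prod_Ioc_consecutive _ (Nat.zero_le j) hjk]
      congr 1
      rw [← Finset.Icc_add_one_left_eq_Ioc 0 j]
      apply Finset.prod_congr rfl
      intro i hi
      rw [Finset.mem_Icc] at hi
      rw [hmin1 i hi.1 (by omega), pow_one]
    have hBsplit : (∏ i ∈ Finset.Ioc j k, Polynomial.cyclotomic (p ^ i * q) ℤ ^ e i)
        = Polynomial.cyclotomic (p ^ r * q) ℤ
          * ∏ i ∈ Finset.Ioc r k, Polynomial.cyclotomic (p ^ i * q) ℤ ^ e i := by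
      rw [← Finset.prod_Ioc_consecutive _ (by omega : j ≤ r - 1) (by omega : r - 1 ≤ k)]
      have hone : ∏ i ∈ Finset.Ioc j (r - 1), Polynomial.cyclotomic (p ^ i * q) ℤ ^ e i = 1 := by
        apply Finset.prod_eq_one
        intro i hi
        rw [Finset.mem_Ioc] at hi
        rcases Nat.lt_or_ge i1 i with hgt | hle
        · rw [hminr i hgt (by omega), pow_zero]
        · have hii : i = i1 := by omega
          rw [hii, hi1e, pow_zero]
      rw [hone, one_mul]
      have h2 : Finset.Ioc (r - 1) k = Finset.Icc r k := by
        rw [← Finset.Icc_add_one_left_eq_Ioc (r - 1) k]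
        congr 1
        omega
      rw [h2, Finset.Icc_eq_cons_Ioc hrk, Finset.prod_cons, hre, pow_one]
    have hp2c : ∀ i, r < i → i ≤ k →
        (X : Polynomial ℤ) ^ (2 * c) ∣ Polynomial.cyclotomic (p ^ i * q) ℤ - 1 := by
      intro i hri hik
      rw [Polynomial.X_pow_dvd_iff]
      intro d hd
      have h2c : 2 * c ≤ p ^ (i - 1) := by
        have e1 : 2 * c ≤ p * c := Nat.mul_le_mul_right c hp2
        have e2 : p * c = p ^ r := by
          rw [hcdef, ← pow_succ']
          congr 1
          omega
        have e3 : p ^ r ≤ p ^ (i - 1) := Nat.pow_le_pow_right hp.pos (by omega)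
        omega
      rw [Polynomial.coeff_sub, CycAux.expandC hp i (by omega),
        Polynomial.coeff_expand (Nat.pow_pos hp.pos), Polynomial.coeff_one]
      rcases Nat.eq_zero_or_pos d with rfl | hdpos
      · rw [if_pos (dvd_zero _), Nat.zero_div, Polynomial.cyclotomic_coeff_zero ℤ h1pq,
          if_pos rfl]
        ring
      · rw [if_neg, if_neg (by omega)]
        · ring
        · intro hdvd
          have := Nat.le_of_dvd hdpos hdvd
          omega
    have hCrdecomp : ∃ g0 : Polynomial ℤ,
        Polynomial.cyclotomic (p ^ r * q) ℤ = 1 - X ^ c + X ^ (2 * c) * g0 := by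
      have hdvd : (X : Polynomial ℤ) ^ (2 * c) ∣
          Polynomial.cyclotomic (p ^ r * q) ℤ - (1 - X ^ c) := by
        rw [Polynomial.X_pow_dvd_iff]
        intro d hd
        rw [Polynomial.coeff_sub, Polynomial.coeff_sub, Polynomial.coeff_one, coeff_X_pow]
        rw [CycAux.expandC hp r (by omega), Polynomial.coeff_expand (Nat.pow_pos hp.pos)]
        rw [← hcdef]
        by_cases hd0 : d = 0
        · subst hd0
          rw [if_pos (dvd_zero _), Nat.zero_div, Polynomial.cyclotomic_coeff_zero ℤ h1pq,
            if_pos rfl, if_neg (by omega : ¬ (0 : ℕ) = c)]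
          ring
        · by_cases hdc : d = c
          · subst hdc
            rw [if_pos dvd_rfl, Nat.div_self (by omega), CycAux.cyclo_pq_coeff_one hp hq hpq,
              if_neg hd0, if_pos rfl]
            ring
          · rw [if_neg, if_neg hd0, if_neg hdc]
            · ring
            · rintro ⟨t, rfl⟩
              have ht2 : t < 2 := by
                by_contra hge
                push_neg at hge
                have e1 : 2 * c = c * 2 := by ring
                have e2 : c * 2 ≤ c * t := Nat.mul_le_mul_left c hge
                omega
              interval_cases t
              · exact hd0 (mul_zero c)
              · exact hdc (mul_one c)
      obtain ⟨g0, hg0⟩ := hdvd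
      exact ⟨g0, by linear_combination hg0⟩
    have hRdecomp : ∃ G : Polynomial ℤ,
        (∏ i ∈ Finset.Ioc r k, Polynomial.cyclotomic (p ^ i * q) ℤ ^ e i)
          = 1 + X ^ (2 * c) * G := by
      have hgen : ∀ s : Finset ℕ, (∀ i ∈ s, r < i ∧ i ≤ k) →
          ∃ G, (∏ i ∈ s, Polynomial.cyclotomic (p ^ i * q) ℤ ^ e i) = 1 + X ^ (2 * c) * G := by
        intro s
        induction s using Finset.induction_on with
        | empty => exact fun _ => ⟨0, by simp⟩
        | @insert a s hnm ih =>
          intro hmem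
          obtain ⟨G, hG⟩ := ih (fun i hi => hmem i (Finset.mem_insert_of_mem hi))
          rw [Finset.prod_insert hnm]
          have hai := hmem a (Finset.mem_insert_self a s)
          have hea : e a = 0 ∨ e a = 1 := by
            have := he a (by omega) hai.2
            omega
          rcases hea with h0 | h1
          · rw [h0, pow_zero, one_mul]
            exact ⟨G, hG⟩
          · rw [h1, pow_one]
            obtain ⟨ga, hga⟩ := hp2c a hai.1 hai.2
            refine ⟨ga + G + X ^ (2 * c) * ga * G, ?_⟩
            have hCa : Polynomial.cyclotomic (p ^ a * q) ℤ = 1 + X ^ (2 * c) * ga := by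
              linear_combination hga
            rw [hCa, hG]
            ring
      apply hgen
      intro i hi
      rw [Finset.mem_Ioc] at hi
      exact ⟨hi.1, hi.2⟩
    obtain ⟨G, hGdec⟩ := hRdecomp
    obtain ⟨g0, hg0dec⟩ := hCrdecomp
    have hBdec : (∏ i ∈ Finset.Ioc j k, Polynomial.cyclotomic (p ^ i * q) ℤ ^ e i)
        = 1 - X ^ c + X ^ (2 * c) * (g0 + G - X ^ c * G + X ^ (2 * c) * g0 * G) := by
      rw [hBsplit, hGdec, hg0dec]
      ring
    have hfs : (∏ i ∈ Finset.Icc 1 j, Polynomial.cyclotomic (p ^ i * q) ℤ)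
        * (∏ i ∈ Finset.Ioc j k, Polynomial.cyclotomic (p ^ i * q) ℤ ^ e i) = T.P := by
      rw [← hsplit]
      exact h
    have hser : ((∏ i ∈ Finset.Icc 1 j, Polynomial.cyclotomic (p ^ i * q) ℤ : Polynomial ℤ) :
          PowerSeries ℤ)
        * ((∏ i ∈ Finset.Ioc j k, Polynomial.cyclotomic (p ^ i * q) ℤ ^ e i : Polynomial ℤ) :
          PowerSeries ℤ)
        = (1 - PowerSeries.X) * CycAux.myH T.carrier := by
      rw [← Polynomial.coe_mul, hfs, hPser]
    rw [CycAux.keyL hp hq hpq j] at hser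
    have hHB : CycAux.myH (CycAux.Scl (p ^ j) q)
        * ((∏ i ∈ Finset.Ioc j k, Polynomial.cyclotomic (p ^ i * q) ℤ ^ e i : Polynomial ℤ) :
          PowerSeries ℤ)
        = CycAux.myH T.carrier := by
      apply mul_left_cancel₀ hXne
      calc (1 - PowerSeries.X) * (CycAux.myH (CycAux.Scl (p ^ j) q) * _)
          = ((1 - PowerSeries.X) * CycAux.myH (CycAux.Scl (p ^ j) q)) * _ := by ring
        _ = (1 - PowerSeries.X) * CycAux.myH T.carrier := hser
    obtain ⟨G2, hG2⟩ : ∃ G2 : PowerSeries ℤ,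
        ((∏ i ∈ Finset.Ioc j k, Polynomial.cyclotomic (p ^ i * q) ℤ ^ e i : Polynomial ℤ) :
          PowerSeries ℤ) = 1 - PowerSeries.X ^ c + PowerSeries.X ^ (2 * c) * G2 := by
      refine ⟨((g0 + G - X ^ c * G + X ^ (2 * c) * g0 * G : Polynomial ℤ) : PowerSeries ℤ), ?_⟩
      rw [hBdec]
      simp only [Polynomial.coe_add, Polynomial.coe_sub, Polynomial.coe_mul, Polynomial.coe_pow,
        Polynomial.coe_one, Polynomial.coe_X]
    have hmemT : ∀ N, N < 2 * c → ((if N ∈ T.carrier then (1 : ℤ) else 0)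
        = (if N ∈ CycAux.Scl (p ^ j) q then 1 else 0)
          - (if c ≤ N then (if N - c ∈ CycAux.Scl (p ^ j) q then (1 : ℤ) else 0) else 0)) := by
      intro N hN
      have h1 := congrArg (PowerSeries.coeff N) hHB
      rw [hG2] at h1
      rw [mul_add, mul_sub, mul_one] at h1
      rw [map_add, map_sub] at h1
      have hz : (PowerSeries.coeff N)
          (CycAux.myH (CycAux.Scl (p ^ j) q) * (PowerSeries.X ^ (2 * c) * G2)) = 0 := by
        have hassoc : CycAux.myH (CycAux.Scl (p ^ j) q) * (PowerSeries.X ^ (2 * c) * G2)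
            = (CycAux.myH (CycAux.Scl (p ^ j) q) * G2) * PowerSeries.X ^ (2 * c) := by ring
        rw [hassoc, PowerSeries.coeff_mul_X_pow', if_neg (by omega : ¬ 2 * c ≤ N)]
      rw [hz] at h1
      rw [PowerSeries.coeff_mul_X_pow'] at h1
      simp only [CycAux.myH, PowerSeries.coeff_mk] at h1
      linarith [h1]
    have hmem_pj : p ^ j ∈ CycAux.Scl (p ^ j) q := CycAux.mem_Scl.2 ⟨1, 0, by ring⟩
    have hmem_c : c ∈ CycAux.Scl (p ^ j) q := by
      refine CycAux.mem_Scl.2 ⟨p ^ (r - 1 - j), 0, ?_⟩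
      rw [hcdef]
      simp only [zero_mul, add_zero]
      rw [← pow_add]
      congr 1
      omega
    have hmem_0 : 0 ∈ CycAux.Scl (p ^ j) q := CycAux.mem_Scl.2 ⟨0, 0, by ring⟩
    have hTpj : p ^ j ∈ T.carrier := by
      have h1 := hmemT (p ^ j) (by omega)
      rw [if_pos hmem_pj, if_neg (by omega : ¬ c ≤ p ^ j)] at h1
      by_contra hn
      rw [if_neg hn] at h1
      norm_num at h1
    have hTcnot : c ∉ T.carrier := by
      have h1 := hmemT c (by omega)
      rw [if_pos hmem_c, if_pos (le_refl c), Nat.sub_self, if_pos hmem_0] at h1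
      intro hcT
      rw [if_pos hcT] at h1
      norm_num at h1
    apply hTcnot
    have hmul : ∀ (m : ℕ), m * p ^ j ∈ T.carrier := by
      intro m
      induction m with
      | zero => simpa using T.zero_mem
      | succ n ihn =>
        have hsm : (n + 1) * p ^ j = n * p ^ j + p ^ j := by ring
        rw [hsm]
        exact T.add_mem ihn hTpj
    have heq : p ^ (r - 1 - j) * p ^ j = c := by
      rw [hcdef, ← pow_add]
      congr 1
      omega
    have := hmul (p ^ (r - 1 - j))
    rwa [heq] at this
  refine ⟨part1, ?_⟩
  have hprod : (∏ i ∈ Finset.Icc 1 k, Polynomial.cyclotomic (p ^ i * q) ℤ ^ e i)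
      = ∏ i ∈ Finset.Icc 1 k, Polynomial.cyclotomic (p ^ i * q) ℤ := by
    apply Finset.prod_congr rfl
    intro i hi
    rw [Finset.mem_Icc] at hi
    rw [part1 i hi.1 hi.2, pow_one]
  rw [hprod] at h
  have h2 : ((∏ i ∈ Finset.Icc 1 k, Polynomial.cyclotomic (p ^ i * q) ℤ : Polynomial ℤ) :
      PowerSeries ℤ) = (1 - PowerSeries.X) * CycAux.myH T.carrier := by
    rw [h]
    exact hPser
  rw [CycAux.keyL hp hq hpq k] at h2
  have hfin : CycAux.myH (CycAux.Scl (p ^ k) q) = CycAux.myH T.carrier :=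
    mul_left_cancel₀ hXne h2
  ext n
  have hcoeff := congrArg (PowerSeries.coeff n) hfin
  simp only [CycAux.myH, PowerSeries.coeff_mk] at hcoeff
  have hiff : n ∈ CycAux.Scl (p ^ k) q ↔ n ∈ T.carrier := by
    constructor
    · intro h1
      by_contra h2'
      rw [if_pos h1, if_neg h2'] at hcoeff
      norm_num at hcoeff
    · intro h1
      by_contra h2'
      rw [if_neg h2', if_pos h1] at hcoeff
      norm_num at hcoeff
  exact ⟨fun hn => hiff.2 hn, fun hn => hiff.1 hn⟩
end

section
/- Suppose S and T are numerical semigroups, w ≥ 1 an integer, and f ∈ ℤ[x] a polynomial with H_S(x^w)·f(x) = H_T(x) as formal power series. Then: (a) f(0) = 1; (b) f(1) = w; (c) 2·f′(1) = w·(2·g(T) − 2w·g(S) + w − 1), where g denotes the genus; and (d) F(T) = w·F(S) + deg f. -/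
open Polynomial
open scoped Classical

namespace NSAux

open NumericalSemigroup PowerSeries

noncomputable def sig (S : NumericalSemigroup) : Polynomial ℤ :=
  ∑ s ∈ S.finite_compl.toFinset, Polynomial.X ^ s

lemma P_eq (S : NumericalSemigroup) : S.P = 1 + (Polynomial.X - 1) * sig S := rfl

lemma coeff_sig (S : NumericalSemigroup) (n : ℕ) :
    (sig S).coeff n = if n ∈ S.carrier then 0 else 1 := by
  unfold sig
  rw [Polynomial.finset_sum_coeff]
  simp only [Polynomial.coeff_X_pow]
  rw [Finset.sum_ite_eq S.finite_compl.toFinset n fun _ => (1 : ℤ)]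
  simp only [Set.Finite.mem_toFinset, Set.mem_compl_iff]
  split_ifs with h1 h2 h2 <;> tauto

lemma coeff_P_zero (S : NumericalSemigroup) : S.P.coeff 0 = 1 := by
  rw [P_eq, Polynomial.coeff_add, Polynomial.mul_coeff_zero, coeff_sig]
  simp [S.zero_mem]

lemma coeff_P_succ (S : NumericalSemigroup) (n : ℕ) :
    S.P.coeff (n + 1) =
      (if n + 1 ∈ S.carrier then 1 else 0) - (if n ∈ S.carrier then 1 else 0) := by
  rw [P_eq, Polynomial.coeff_add, sub_mul, one_mul, Polynomial.coeff_sub,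
    Polynomial.coeff_X_mul, coeff_sig, coeff_sig]
  simp only [Polynomial.coeff_one, Nat.succ_ne_zero, if_false]
  split_ifs <;> ring

lemma coeff_Hexp (S : NumericalSemigroup) {w : ℕ} (hw : 0 < w) (n : ℕ) :
    PowerSeries.coeff n (S.Hexp w) = if w ∣ n ∧ n / w ∈ S.carrier then 1 else 0 := by
  rw [Hexp, PowerSeries.coeff_mk]
  congr 1
  simp only [eq_iff_iff]
  constructor
  · rintro ⟨s, hs, rfl⟩
    exact ⟨⟨s, rfl⟩, by rwa [Nat.mul_div_cancel_left _ hw]⟩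
  · rintro ⟨hd, hmem⟩
    exact ⟨n / w, hmem, (Nat.mul_div_cancel' hd).symm⟩

lemma coe_Pexp (S : NumericalSemigroup) {w : ℕ} (hw : 0 < w) :
    ((expand ℤ w S.P : Polynomial ℤ) : PowerSeries ℤ)
      = (1 - PowerSeries.X ^ w) * S.Hexp w := by
  ext n
  rw [Polynomial.coeff_coe, Polynomial.coeff_expand hw, sub_mul, one_mul, map_sub,
    PowerSeries.coeff_X_pow_mul']
  simp only [coeff_Hexp S hw]
  by_cases hd : w ∣ n
  · obtain ⟨k, rfl⟩ := hd
    rw [if_pos (dvd_mul_right w k), Nat.mul_div_cancel_left _ hw]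
    cases k with
    | zero =>
      simp only [Nat.mul_zero]
      rw [coeff_P_zero, if_neg (by omega : ¬ w ≤ 0),
        if_pos ⟨dvd_zero w, by simpa using S.zero_mem⟩]
      ring
    | succ k =>
      have hle : w ≤ w * (k + 1) := Nat.le_mul_of_pos_right w (Nat.succ_pos k)
      have hsub : w * (k + 1) - w = w * k := by
        rw [Nat.mul_succ, Nat.add_sub_cancel]
      rw [if_pos hle, hsub]
      simp only [dvd_mul_right, true_and, Nat.mul_div_cancel_left _ hw]
      rw [coeff_P_succ]
  · rw [if_neg hd, if_neg (fun hc => hd hc.1)]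
    by_cases hle : w ≤ n
    · rw [if_pos hle, if_neg, sub_zero]
      rintro ⟨hd2, -⟩
      apply hd
      have h2 := Nat.dvd_add hd2 (dvd_refl w)
      rwa [Nat.sub_add_cancel hle] at h2
    · rw [if_neg hle, sub_zero]

lemma Hexp_one (S : NumericalSemigroup) : S.Hexp 1 = S.H := by
  ext n
  rw [Hexp, H, PowerSeries.coeff_mk, PowerSeries.coeff_mk]
  congr 1
  simp [eq_comm]

lemma coe_P (S : NumericalSemigroup) :
    ((S.P : Polynomial ℤ) : PowerSeries ℤ) = (1 - PowerSeries.X) * S.H := by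
  have := coe_Pexp S (w := 1) one_pos
  rwa [Polynomial.expand_one, pow_one, Hexp_one] at this

lemma eval_one_sig (S : NumericalSemigroup) : (sig S).eval 1 = (S.genus : ℤ) := by
  unfold sig
  rw [Polynomial.eval_finset_sum]
  simp [genus]

lemma eval_one_P (S : NumericalSemigroup) : S.P.eval 1 = 1 := by
  rw [P_eq]; simp

lemma eval_one_derivative_P (S : NumericalSemigroup) :
    (Polynomial.derivative S.P).eval 1 = (S.genus : ℤ) := by
  rw [P_eq]
  simp [eval_one_sig]

lemma monic_P (S : NumericalSemigroup) :
    S.P.Monic ∧ S.Frob = (S.P.natDegree : ℤ) - 1 := by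
  rcases Finset.eq_empty_or_nonempty S.finite_compl.toFinset with hG | hne
  · have hP : S.P = 1 := by rw [P_eq]; unfold sig; rw [hG]; simp
    have hF : S.Frob = -1 := by
      unfold Frob
      refine le_antisymm (Finset.max'_le _ _ _ fun y hy => ?_) (Finset.le_max' _ _ (Finset.mem_insert_self _ _))
      rw [hG, Finset.image_empty] at hy
      simp only [Finset.mem_insert, Finset.notMem_empty, or_false] at hy
      omega
    rw [hP, hF]
    exact ⟨monic_one, by simp⟩
  · set M := S.finite_compl.toFinset.max' hne with hM
    have hMmem : M ∈ S.finite_compl.toFinset := Finset.max'_mem _ hne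
    have hsig_le : (sig S).natDegree ≤ M := by
      unfold sig
      refine Polynomial.natDegree_sum_le_of_forall_le _ _ fun i hi => ?_
      exact (Polynomial.natDegree_X_pow i).le.trans (Finset.le_max' _ i hi)
    have hsig_coeff : (sig S).coeff M = 1 := by
      rw [coeff_sig, if_neg]
      simpa [Set.Finite.mem_toFinset] using hMmem
    have hP_le : S.P.natDegree ≤ M + 1 := by
      rw [P_eq]
      refine (Polynomial.natDegree_add_le _ _).trans ?_
      simp only [Polynomial.natDegree_one, Nat.zero_le, max_le_iff, true_and]
      refine (Polynomial.natDegree_mul_le).trans ?_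
      have : (Polynomial.X - 1 : Polynomial ℤ).natDegree ≤ 1 := by
        refine (Polynomial.natDegree_sub_le _ _).trans ?_
        simp
      omega
    have hP_coeff : S.P.coeff (M + 1) = 1 := by
      rw [coeff_P_succ]
      have h1 : M ∉ S.carrier := by simpa [Set.Finite.mem_toFinset] using hMmem
      have h2 : M + 1 ∈ S.carrier := by
        by_contra hc
        have : M + 1 ∈ S.finite_compl.toFinset := by
          simpa [Set.Finite.mem_toFinset] using hc
        have := Finset.le_max' _ _ this
        omega
      simp [h1, h2]
    have hmonic : S.P.Monic :=
      Polynomial.monic_of_natDegree_le_of_coeff_eq_one _ hP_le hP_coeff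
    have hdeg : S.P.natDegree = M + 1 := by
      refine le_antisymm hP_le ?_
      exact Polynomial.le_natDegree_of_ne_zero (by rw [hP_coeff]; norm_num)
    have hF : S.Frob = (M : ℤ) := by
      unfold Frob
      rw [Finset.max'_insert (-1 : ℤ) _ (hne.image _),
        Finset.max'_image (fun a b hab => by exact_mod_cast hab)]
      exact max_eq_right (by omega)
    rw [hF, hdeg]
    exact ⟨hmonic, by push_cast; ring⟩

lemma monic_geom (w : ℕ) (hw : 1 ≤ w) :
    (∑ i ∈ Finset.range w, (Polynomial.X : Polynomial ℤ) ^ i).Monic ∧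
      (∑ i ∈ Finset.range w, (Polynomial.X : Polynomial ℤ) ^ i).natDegree = w - 1 := by
  have hle : (∑ i ∈ Finset.range w, (Polynomial.X : Polynomial ℤ) ^ i).natDegree ≤ w - 1 := by
    refine Polynomial.natDegree_sum_le_of_forall_le _ _ fun i hi => ?_
    rw [Finset.mem_range] at hi
    exact (Polynomial.natDegree_X_pow i).le.trans (by omega)
  have hcoeff : (∑ i ∈ Finset.range w, (Polynomial.X : Polynomial ℤ) ^ i).coeff (w - 1) = 1 := by
    rw [Polynomial.finset_sum_coeff]
    simp only [Polynomial.coeff_X_pow]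
    rw [Finset.sum_ite_eq (Finset.range w) (w - 1) fun _ => (1 : ℤ)]
    rw [if_pos (Finset.mem_range.mpr (by omega))]
  refine ⟨Polynomial.monic_of_natDegree_le_of_coeff_eq_one _ hle hcoeff, ?_⟩
  exact le_antisymm hle (Polynomial.le_natDegree_of_ne_zero (by rw [hcoeff]; norm_num))

lemma coe_geom (w : ℕ) :
    ((∑ i ∈ Finset.range w, (Polynomial.X : Polynomial ℤ) ^ i : Polynomial ℤ) : PowerSeries ℤ)
      = ∑ i ∈ Finset.range w, PowerSeries.X ^ i := by
  rw [← Polynomial.coeToPowerSeries.ringHom_apply, map_sum]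
  simp [Polynomial.coeToPowerSeries.ringHom_apply]

lemma keyPoly (S T : NumericalSemigroup) (w : ℕ) (hw : 1 ≤ w)
    (f : Polynomial ℤ) (h : S.Hexp w * (f : PowerSeries ℤ) = T.H) :
    expand ℤ w S.P * f = (∑ i ∈ Finset.range w, (Polynomial.X : Polynomial ℤ) ^ i) * T.P := by
  have hw0 : 0 < w := hw
  refine Polynomial.coe_inj.mp ?_
  rw [Polynomial.coe_mul, Polynomial.coe_mul, coe_Pexp S hw0, coe_geom, coe_P]
  have hgeo : (1 - PowerSeries.X ^ w : PowerSeries ℤ)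
      = (∑ i ∈ Finset.range w, PowerSeries.X ^ i) * (1 - PowerSeries.X) := by
    linear_combination geom_sum_mul (PowerSeries.X : PowerSeries ℤ) w
  rw [hgeo, mul_assoc, mul_assoc, h]

end NSAux

open NumericalSemigroup in
/-- If `H_S(x^w)·f(x) = H_T(x)` with `f ∈ ℤ[x]` and `w ≥ 1`, then:
(a) `f(0) = 1`; (b) `f(1) = w`; (c) `2·f'(1) = w·(2·g(T) − 2w·g(S) + w − 1)`;
(d) `F(T) = w·F(S) + deg f`. -/
theorem polynomially_related_basic (S T : NumericalSemigroup) (w : ℕ) (hw : 1 ≤ w)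
    (f : Polynomial ℤ) (h : S.Hexp w * (f : PowerSeries ℤ) = T.H) :
    f.eval 0 = 1 ∧
    f.eval 1 = (w : ℤ) ∧
    2 * f.derivative.eval 1
      = (w : ℤ) * (2 * (T.genus : ℤ) - 2 * (w : ℤ) * (S.genus : ℤ) + (w : ℤ) - 1) ∧
    T.Frob = (w : ℤ) * S.Frob + (f.natDegree : ℤ) := by
  have hw0 : 0 < w := hw
  obtain ⟨hmS, hfS⟩ := NSAux.monic_P S
  obtain ⟨hmT, hfT⟩ := NSAux.monic_P T
  obtain ⟨hmσ, hdσ⟩ := NSAux.monic_geom w hw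
  have key := NSAux.keyPoly S T w hw f h
  -- (a)
  have ha : f.eval 0 = 1 := by
    have h0 := congrArg (PowerSeries.constantCoeff (R := ℤ)) h
    rw [map_mul, Hexp, H] at h0
    simp only [PowerSeries.constantCoeff_mk, Polynomial.constantCoeff_coe] at h0
    rw [if_pos ⟨0, S.zero_mem, by ring⟩, if_pos T.zero_mem, one_mul,
      Polynomial.coeff_zero_eq_eval_zero] at h0
    exact h0
  refine ⟨ha, ?_, ?_, ?_⟩
  -- (b)
  case _ =>
    have h1 := congrArg (Polynomial.eval 1) key
    simp only [Polynomial.eval_mul, Polynomial.expand_eval, one_pow, NSAux.eval_one_P,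
      Polynomial.eval_finset_sum, Polynomial.eval_pow, Polynomial.eval_X,
      Finset.sum_const, Finset.card_range, nsmul_eq_mul, mul_one, one_mul] at h1
    exact h1
  -- (c)
  case _ =>
    have hb : f.eval 1 = (w : ℤ) := by
      have h1 := congrArg (Polynomial.eval 1) key
      simp only [Polynomial.eval_mul, Polynomial.expand_eval, one_pow, NSAux.eval_one_P,
        Polynomial.eval_finset_sum, Polynomial.eval_pow, Polynomial.eval_X,
        Finset.sum_const, Finset.card_range, nsmul_eq_mul, mul_one, one_mul] at h1
      exact h1
    have hgs := NSAux.eval_one_derivative_P S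
    have hgt := NSAux.eval_one_derivative_P T
    have hσ1 : (∑ i ∈ Finset.range w, (Polynomial.X : Polynomial ℤ) ^ i).eval 1 = (w : ℤ) := by
      rw [Polynomial.eval_finset_sum]; simp
    have hσ'1 : (Polynomial.derivative
        (∑ i ∈ Finset.range w, (Polynomial.X : Polynomial ℤ) ^ i)).eval 1
          = ∑ i ∈ Finset.range w, (i : ℤ) := by
      rw [Polynomial.derivative_sum, Polynomial.eval_finset_sum]
      refine Finset.sum_congr rfl fun i _ => ?_
      rw [Polynomial.derivative_X_pow]
      simp
    have hE1 : (expand ℤ w S.P).eval 1 = 1 := by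
      rw [Polynomial.expand_eval, one_pow, NSAux.eval_one_P]
    have hE'1 : (Polynomial.derivative (expand ℤ w S.P)).eval 1 = (S.genus : ℤ) * w := by
      rw [Polynomial.derivative_expand]
      simp [Polynomial.expand_eval, hgs]
    have hder := congrArg (fun p => Polynomial.eval 1 (Polynomial.derivative p)) key
    simp only [Polynomial.derivative_mul, Polynomial.eval_add, Polynomial.eval_mul,
      hE1, hE'1, hσ1, hσ'1, hgt, hb, NSAux.eval_one_P T, one_mul, mul_one] at hder
    have hsum : (∑ i ∈ Finset.range w, (i : ℤ)) * 2 = (w : ℤ) * ((w : ℤ) - 1) := by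
      have h4 := congrArg (Nat.cast : ℕ → ℤ) (Finset.sum_range_id_mul_two w)
      push_cast [Nat.cast_sub hw] at h4
      exact h4
    linear_combination 2 * hder + hsum
  -- (d)
  case _ =>
    have hf0 : f ≠ 0 := fun hf => by simp [hf] at ha
    have hndeg := congrArg Polynomial.natDegree key
    rw [Polynomial.natDegree_mul (hmS.expand hw0).ne_zero hf0,
      Polynomial.natDegree_mul hmσ.ne_zero hmT.ne_zero,
      Polynomial.natDegree_expand, hdσ] at hndeg
    have hz : (S.P.natDegree : ℤ) * w + f.natDegree = (w : ℤ) - 1 + T.P.natDegree := by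
      have h5 := congrArg (Nat.cast : ℕ → ℤ) hndeg
      push_cast [Nat.cast_sub hw] at h5
      linarith [h5]
    rw [hfS, hfT]
    linear_combination -hz
end

section
/- Let p and q be distinct primes and m, n positive integers, and let S = ⟨p^m, q^n⟩. Then the cyclotomic polynomial Φ_{p^m q^n}(x) divides P_S(x) in ℤ[x], and the quotient Q(x) = P_S(x)/Φ_{p^m q^n}(x) is a monic polynomial with Q(0) = 1 whose nonzero coefficients, read in order of increasing degree, alternate between +1 and −1, beginning with +1. -/
open Polynomial
open scoped Classical

/-- The nonzero coefficients of `Q`, read in order of increasing degree, alternate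
between `+1` and `-1`: each coefficient is `0`, `1` or `-1`, and any two consecutive
nonzero coefficients have opposite signs. -/
def AlternatingCoeffs (Q : Polynomial ℤ) : Prop :=
  (∀ i, Q.coeff i = 0 ∨ Q.coeff i = 1 ∨ Q.coeff i = -1) ∧
  ∀ i j, i < j → Q.coeff i ≠ 0 → Q.coeff j ≠ 0 →
    (∀ k, i < k → k < j → Q.coeff k = 0) → Q.coeff j = -Q.coeff i

namespace SGAux


/-- The set `{e i + f j + c k : i < r1, j < r2, k ∈ ℕ}`. -/
def V (e f c r1 r2 : ℕ) : Set ℕ :=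
  {x | ∃ i, i < r1 ∧ ∃ j, j < r2 ∧ ∃ k, x = e * i + f * j + c * k}

/-- The finite set of "small" elements `{e i + f j : i < r1, j < r2}`. -/
noncomputable def T (e f r1 r2 : ℕ) : Finset ℕ :=
  (Finset.range r1 ×ˢ Finset.range r2).image fun ij => e * ij.1 + f * ij.2

lemma mem_T {e f r1 r2 x : ℕ} :
    x ∈ T e f r1 r2 ↔ ∃ i, i < r1 ∧ ∃ j, j < r2 ∧ x = e * i + f * j := by
  simp only [T, Finset.mem_image, Finset.mem_product, Finset.mem_range, Prod.exists]
  constructor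
  · rintro ⟨i, j, ⟨hi, hj⟩, rfl⟩; exact ⟨i, hi, j, hj, rfl⟩
  · rintro ⟨i, hi, j, hj, rfl⟩; exact ⟨i, j, ⟨hi, hj⟩, rfl⟩

variable {e f c r1 r2 : ℕ}

/-- The injectivity hypothesis. -/
def Inj (e f c r1 r2 : ℕ) : Prop :=
  ∀ i i' j j' k, i < r1 → i' < r1 → j < r2 → j' < r2 →
    e * i + f * j = e * i' + f * j' + c * k → i = i' ∧ j = j' ∧ k = 0

lemma zero_mem_V (hr1 : 0 < r1) (hr2 : 0 < r2) : 0 ∈ V e f c r1 r2 :=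
  ⟨0, hr1, 0, hr2, 0, by simp⟩

lemma exists_T_modEq (hc : 0 < c) (hmul : r1 * r2 = c) (hinj : Inj e f c r1 r2)
    (x : ℕ) : ∃ t ∈ T e f r1 r2, t ≡ x [MOD c] := by
  haveI : NeZero c := ⟨hc.ne'⟩
  have hinj2 : ∀ t ∈ T e f r1 r2, ∀ t' ∈ T e f r1 r2, t ≡ t' [MOD c] → t = t' := by
    have key : ∀ t t' : ℕ, t ∈ T e f r1 r2 → t' ∈ T e f r1 r2 → t ≤ t' →
        t ≡ t' [MOD c] → t = t' := by
      intro t t' ht ht' hle hmod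
      obtain ⟨i, hi, j, hj, rfl⟩ := mem_T.mp ht
      obtain ⟨i', hi', j', hj', rfl⟩ := mem_T.mp ht'
      obtain ⟨k, hk⟩ := (Nat.modEq_iff_dvd' hle).mp hmod
      have heq : e * i' + f * j' = e * i + f * j + c * k := by omega
      obtain ⟨h1, h2, h3⟩ := hinj i' i j' j k hi' hi hj' hj heq
      subst h1; subst h2; rfl
    intro t ht t' ht' hmod
    rcases le_total t t' with h | h
    · exact key t t' ht ht' h hmod
    · exact (key t' t ht' ht h hmod.symm).symm
  have hcardT : (T e f r1 r2).card = c := by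
    rw [T, Finset.card_image_of_injOn, Finset.card_product, Finset.card_range,
      Finset.card_range, hmul]
    rintro ⟨i, j⟩ hij ⟨i', j'⟩ hij' h
    simp only [Finset.coe_product, Set.mem_prod, Finset.mem_coe, Finset.mem_range] at hij hij'
    have heq : e * i + f * j = e * i' + f * j' + c * 0 := by simpa using h
    obtain ⟨h1, h2, -⟩ := hinj i i' j j' 0 hij.1 hij'.1 hij.2 hij'.2 heq
    simp [h1, h2]
  have himg : (T e f r1 r2).image (fun t : ℕ => (t : ZMod c)) = Finset.univ := by
    apply Finset.eq_univ_of_card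
    rw [Finset.card_image_of_injOn, hcardT, ZMod.card]
    intro t ht t' ht' h
    exact hinj2 t (Finset.mem_coe.mp ht) t' (Finset.mem_coe.mp ht')
      ((ZMod.natCast_eq_natCast_iff _ _ _).mp h)
  have : ((x : ZMod c)) ∈ (T e f r1 r2).image (fun t : ℕ => (t : ZMod c)) := by
    rw [himg]; exact Finset.mem_univ _
  obtain ⟨t, ht, hteq⟩ := Finset.mem_image.mp this
  exact ⟨t, ht, (ZMod.natCast_eq_natCast_iff _ _ _).mp hteq⟩

lemma exists_bound (hc : 0 < c) (hmul : r1 * r2 = c) (hinj : Inj e f c r1 r2) :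
    ∃ N, ∀ x : ℕ, N ≤ x → x ∈ V e f c r1 r2 := by
  refine ⟨(T e f r1 r2).sup id, fun x hx => ?_⟩
  obtain ⟨t, ht, hmod⟩ := exists_T_modEq hc hmul hinj x
  have hle : t ≤ x := le_trans (Finset.le_sup (f := id) ht) hx
  obtain ⟨k, hk⟩ := (Nat.modEq_iff_dvd' hle).mp hmod
  obtain ⟨i, hi, j, hj, rfl⟩ := mem_T.mp ht
  exact ⟨i, hi, j, hj, k, by omega⟩



noncomputable def chi (Vs : Set ℕ) (n : ℕ) : ℤ := if n ∈ Vs then 1 else 0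

lemma chi_cases (Vs : Set ℕ) (n : ℕ) : chi Vs n = 0 ∨ chi Vs n = 1 := by
  unfold chi; split_ifs <;> simp

lemma coeff_sum_pow (F : Finset ℕ) (d : ℕ) :
    (∑ s ∈ F, (X : Polynomial ℤ) ^ s).coeff d = if d ∈ F then 1 else 0 := by
  rw [Polynomial.finset_sum_coeff]
  simp only [Polynomial.coeff_X_pow]
  exact Finset.sum_ite_eq F d (fun _ => 1)

/-- Coefficients of `1 + (X-1) * ∑_{s ∈ F} X^s` where `F` lists the complement of `Vs`. -/
lemma coeffQ (Vs : Set ℕ) (h0 : 0 ∈ Vs) (F : Finset ℕ) (hF : ∀ d, d ∈ F ↔ d ∉ Vs)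
    (nn : ℕ) :
    (1 + (X - 1) * ∑ s ∈ F, X ^ s : Polynomial ℤ).coeff nn =
      chi Vs nn - (if nn = 0 then 0 else chi Vs (nn - 1)) := by
  have hrw : (1 + (X - 1) * ∑ s ∈ F, X ^ s : Polynomial ℤ) =
      1 + ((∑ s ∈ F, X ^ s) * X ^ 1 - ∑ s ∈ F, X ^ s) := by ring
  rw [hrw, Polynomial.coeff_add, Polynomial.coeff_sub, Polynomial.coeff_mul_X_pow',
    coeff_sum_pow, coeff_sum_pow, Polynomial.coeff_one]
  rcases nn with _ | k
  · have : (0 : ℕ) ∉ F := fun h => (hF 0).mp h h0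
    simp [this, chi, h0]
  · have h1 : (k+1) - 1 = k := rfl
    simp only [h1, chi]
    have hFk := hF k
    have hFk1 := hF (k+1)
    by_cases hk : k ∈ Vs <;> by_cases hk1 : (k+1) ∈ Vs <;>
      simp [hk, hk1, hFk, hFk1, Nat.succ_ne_zero]


variable {e f c r1 r2 : ℕ}

lemma chi_star (hc : 0 < c) (hinj : Inj e f c r1 r2) (n : ℕ) :
    chi (V e f c r1 r2) n - (if c ≤ n then chi (V e f c r1 r2) (n - c) else 0) =
      if n ∈ T e f r1 r2 then 1 else 0 := by
  by_cases hT : n ∈ T e f r1 r2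
  · obtain ⟨i, hi, j, hj, rfl⟩ := mem_T.mp hT
    set n := e * i + f * j with hn
    have hnV : n ∈ V e f c r1 r2 := ⟨i, hi, j, hj, 0, by omega⟩
    rw [if_pos hT]
    by_cases hcn : c ≤ n
    · have hnc : n - c ∉ V e f c r1 r2 := by
        rintro ⟨i', hi', j', hj', k, hk⟩
        have heq : e * i + f * j = e * i' + f * j' + c * (k + 1) := by
          have hck : c * (k + 1) = c * k + c := by ring
          omega
        obtain ⟨-, -, h3⟩ := hinj i i' j j' (k+1) hi hi' hj hj' heq
        omega
      rw [if_pos hcn]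
      simp [chi, hnV, hnc]
    · rw [if_neg hcn]
      simp [chi, hnV]
  · rw [if_neg hT]
    by_cases hnV : n ∈ V e f c r1 r2
    · obtain ⟨i, hi, j, hj, k, hk⟩ := hnV
      have hk0 : k ≠ 0 := by
        rintro rfl
        exact hT (mem_T.mpr ⟨i, hi, j, hj, by omega⟩)
      obtain ⟨k', rfl⟩ : ∃ k', k = k' + 1 := ⟨k - 1, by omega⟩
      have hcn : c ≤ n := by
        have hck : c * (k' + 1) = c * k' + c := by ring
        omega
      have hncV : n - c ∈ V e f c r1 r2 := by
        refine ⟨i, hi, j, hj, k', ?_⟩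
        have : c * (k' + 1) = c * k' + c := by ring
        omega
      rw [if_pos hcn]
      have hnV' : n ∈ V e f c r1 r2 := ⟨i, hi, j, hj, k' + 1, hk⟩
      simp [chi, hnV', hncV]
    · have h2 : ∀ h : c ≤ n, n - c ∉ V e f c r1 r2 := by
        intro hcn
        rintro ⟨i, hi, j, hj, k, hk⟩
        exact hnV ⟨i, hi, j, hj, k + 1, by
          have : c * (k + 1) = c * k + c := by ring
          omega⟩
      by_cases hcn : c ≤ n
      · rw [if_pos hcn]; simp [chi, hnV, h2 hcn]
      · rw [if_neg hcn]; simp [chi, hnV]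



/-- coercion of `Q` is `(1 - X) * H`. -/
lemma coeQ (Vs : Set ℕ) (h0 : 0 ∈ Vs) (F : Finset ℕ) (hF : ∀ d, d ∈ F ↔ d ∉ Vs) :
    ((1 + (X - 1) * ∑ s ∈ F, X ^ s : Polynomial ℤ) : PowerSeries ℤ) =
      (1 - PowerSeries.X) * PowerSeries.mk (chi Vs) := by
  ext nn
  rw [Polynomial.coeff_coe, coeffQ Vs h0 F hF]
  have : (1 - PowerSeries.X) * PowerSeries.mk (chi Vs) =
      PowerSeries.mk (chi Vs) - PowerSeries.mk (chi Vs) * PowerSeries.X ^ 1 := by ring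
  rw [this, map_sub, PowerSeries.coeff_mul_X_pow', PowerSeries.coeff_mk]
  rcases nn with _ | k
  · simp
  · simp [PowerSeries.coeff_mk]

lemma HVmul (hc : 0 < c) (hinj : Inj e f c r1 r2) :
    PowerSeries.mk (chi (V e f c r1 r2)) * (1 - PowerSeries.X ^ c) =
      ((∑ t ∈ T e f r1 r2, X ^ t : Polynomial ℤ) : PowerSeries ℤ) := by
  ext nn
  rw [Polynomial.coeff_coe, coeff_sum_pow]
  rw [mul_sub, mul_one, map_sub, PowerSeries.coeff_mul_X_pow', PowerSeries.coeff_mk]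
  have := chi_star (e := e) (f := f) (r1 := r1) (r2 := r2) hc hinj nn
  rcases le_or_gt c nn with h | h
  · rw [if_pos h] at this ⊢
    rw [PowerSeries.coeff_mk]
    exact this
  · rw [if_neg (not_le.mpr h)] at this ⊢
    exact this

lemma GV_eq (hinj : Inj e f c r1 r2) :
    (∑ t ∈ T e f r1 r2, (X : Polynomial ℤ) ^ t) =
    (∑ i ∈ Finset.range r1, (X ^ e : Polynomial ℤ) ^ i) *
      (∑ j ∈ Finset.range r2, (X ^ f : Polynomial ℤ) ^ j) := by
  rw [Finset.sum_mul_sum, T, Finset.sum_image, Finset.sum_product]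
  · apply Finset.sum_congr rfl; intro i _; apply Finset.sum_congr rfl; intro j _
    rw [← pow_mul, ← pow_mul, ← pow_add]
  · intro x hx y hy hxy
    simp only [Finset.coe_product, Set.mem_prod, Finset.mem_coe, Finset.mem_product, Finset.mem_range] at hx hy
    have heq : e * x.1 + f * x.2 = e * y.1 + f * y.2 + c * 0 := by simpa using hxy
    obtain ⟨h1, h2, -⟩ := hinj _ _ _ _ 0 hx.1 hy.1 hx.2 hy.2 heq
    exact Prod.ext h1 h2

/-- The main product identity. -/
lemma prodId (Vs : Set ℕ) (hVs : Vs = V e f c r1 r2) (hc : 0 < c)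
    (hr1 : 0 < r1) (hr2 : 0 < r2) (hinj : Inj e f c r1 r2)
    (F : Finset ℕ) (hF : ∀ d, d ∈ F ↔ d ∉ Vs) :
    (1 + (X - 1) * ∑ s ∈ F, X ^ s : Polynomial ℤ) * (X ^ c - 1) * (X ^ e - 1) *
      (X ^ f - 1) = (X - 1) * (X ^ (e * r1) - 1) * (X ^ (f * r2) - 1) := by
  subst hVs
  have h0 : (0 : ℕ) ∈ V e f c r1 r2 := ⟨0, hr1, 0, hr2, 0, by simp⟩
  have h6 : (1 + (X - 1) * ∑ s ∈ F, X ^ s : Polynomial ℤ) * (1 - X ^ c) =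
      (1 - X) * ∑ t ∈ T e f r1 r2, X ^ t := by
    apply Polynomial.coe_inj.mp
    have e1 : ((((1 + (X - 1) * ∑ s ∈ F, X ^ s) * (1 - X ^ c) : Polynomial ℤ)) :
        PowerSeries ℤ) =
        ((1 + (X - 1) * ∑ s ∈ F, X ^ s : Polynomial ℤ) : PowerSeries ℤ) *
          (1 - PowerSeries.X ^ c) := by
      rw [Polynomial.coe_mul, Polynomial.coe_sub, Polynomial.coe_one,
        Polynomial.coe_pow, Polynomial.coe_X]
    have e2 : (((1 - X) * ∑ t ∈ T e f r1 r2, X ^ t : Polynomial ℤ) : PowerSeries ℤ) =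
        (1 - PowerSeries.X) *
          ((∑ t ∈ T e f r1 r2, X ^ t : Polynomial ℤ) : PowerSeries ℤ) := by
      rw [Polynomial.coe_mul, Polynomial.coe_sub, Polynomial.coe_one, Polynomial.coe_X]
    rw [e1, e2, coeQ (V e f c r1 r2) h0 F hF, mul_assoc, HVmul hc hinj]
  have h7 : (∑ t ∈ T e f r1 r2, (X : Polynomial ℤ) ^ t) * (X ^ e - 1) * (X ^ f - 1) =
      (X ^ (e * r1) - 1) * (X ^ (f * r2) - 1) := by
    rw [GV_eq hinj]
    have g1 := geom_sum_mul ((X : Polynomial ℤ) ^ e) r1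
    have g2 := geom_sum_mul ((X : Polynomial ℤ) ^ f) r2
    calc (∑ i ∈ Finset.range r1, ((X : Polynomial ℤ) ^ e) ^ i) *
          (∑ j ∈ Finset.range r2, ((X : Polynomial ℤ) ^ f) ^ j) * (X ^ e - 1) *
          (X ^ f - 1)
        = ((∑ i ∈ Finset.range r1, ((X : Polynomial ℤ) ^ e) ^ i) * (X ^ e - 1)) *
          ((∑ j ∈ Finset.range r2, ((X : Polynomial ℤ) ^ f) ^ j) * (X ^ f - 1)) := by
          ring
      _ = (((X : Polynomial ℤ) ^ e) ^ r1 - 1) * (((X : Polynomial ℤ) ^ f) ^ r2 - 1) := by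
          rw [g1, g2]
      _ = (X ^ (e * r1) - 1) * (X ^ (f * r2) - 1) := by rw [← pow_mul, ← pow_mul]
  calc (1 + (X - 1) * ∑ s ∈ F, X ^ s : Polynomial ℤ) * (X ^ c - 1) * (X ^ e - 1) *
        (X ^ f - 1)
      = -((1 + (X - 1) * ∑ s ∈ F, X ^ s : Polynomial ℤ) * (1 - X ^ c)) * (X ^ e - 1) *
        (X ^ f - 1) := by ring
    _ = -((1 - X) * ∑ t ∈ T e f r1 r2, X ^ t) * (X ^ e - 1) * (X ^ f - 1) := by
        rw [h6]
    _ = (X - 1) * ((∑ t ∈ T e f r1 r2, (X : Polynomial ℤ) ^ t) * (X ^ e - 1) *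
        (X ^ f - 1)) := by ring
    _ = (X - 1) * ((X ^ (e * r1) - 1) * (X ^ (f * r2) - 1)) := by rw [h7]
    _ = (X - 1) * (X ^ (e * r1) - 1) * (X ^ (f * r2) - 1) := by ring



lemma alt_of_chi (Q : Polynomial ℤ) (χ : ℕ → ℤ) (hv : ∀ n, χ n = 0 ∨ χ n = 1)
    (hco : ∀ nn, Q.coeff nn = χ nn - (if nn = 0 then 0 else χ (nn - 1))) :
    AlternatingCoeffs Q := by
  constructor
  · intro i
    have h1 := hv i
    have h2 : (if i = 0 then (0:ℤ) else χ (i-1)) = 0 ∨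
        (if i = 0 then (0:ℤ) else χ (i-1)) = 1 := by
      split_ifs
      · left; rfl
      · exact hv _
    rw [hco i]
    omega
  · intro i j hij hi hj hz
    have hj0 : j ≠ 0 := by omega
    have hconst : ∀ k, i ≤ k → k < j → χ k = χ i := by
      intro k
      induction k with
      | zero =>
        intro h _
        have : i = 0 := by omega
        rw [this]
      | succ k ih =>
        intro hik hkj
        rcases Nat.lt_or_ge i (k+1) with h | h
        · have hcz := hz (k+1) h hkj
          rw [hco (k+1), if_neg (Nat.succ_ne_zero k)] at hcz
          simp only [Nat.add_sub_cancel] at hcz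
          have h5 : χ (k+1) = χ k := by omega
          rw [h5, ih (by omega) (by omega)]
        · have : i = k+1 := by omega
          rw [this]
    have hcj : Q.coeff j = χ j - χ i := by
      rw [hco j, if_neg hj0, hconst (j-1) (by omega) (by omega)]
    have hci := hco i
    have hv1 := hv i
    have hv2 := hv j
    rw [hcj] at hj ⊢
    by_cases h0 : i = 0
    · rw [if_pos h0] at hci
      rw [hci] at hi ⊢
      omega
    · rw [if_neg h0] at hci
      have hv3 := hv (i-1)
      rw [hci] at hi ⊢
      omega

lemma monic_of_chi (Q : Polynomial ℤ) (χ : ℕ → ℤ) (hv : ∀ n, χ n = 0 ∨ χ n = 1)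
    (hco : ∀ nn, Q.coeff nn = χ nn - (if nn = 0 then 0 else χ (nn - 1)))
    (h0 : χ 0 = 1) (N : ℕ) (hN : ∀ n, N ≤ n → χ n = 1) : Q.Monic := by
  by_cases hA : ∀ n, χ n = 1
  · apply Polynomial.monic_of_natDegree_le_of_coeff_eq_one 0
    · rw [Polynomial.natDegree_le_iff_coeff_eq_zero]
      intro nn hnn
      rw [hco nn, if_neg (by omega), hA nn, hA (nn-1)]
      ring
    · rw [hco 0, if_pos rfl, h0]; ring
  · push_neg at hA
    obtain ⟨n0, hn0⟩ := hA
    have hn0' : χ n0 = 0 := by rcases hv n0 with h | h; exact h; exact absurd h hn0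
    set G : Finset ℕ := (Finset.range N).filter (fun n => χ n = 0) with hG
    have hGne : G.Nonempty := by
      refine ⟨n0, ?_⟩
      rw [hG, Finset.mem_filter, Finset.mem_range]
      refine ⟨?_, hn0'⟩
      by_contra h
      exact hn0 (hN n0 (by omega))
    obtain ⟨g, hgmem, hgmax⟩ : ∃ g ∈ G, ∀ x ∈ G, x ≤ g :=
      ⟨G.max' hGne, G.max'_mem hGne, fun x hx => G.le_max' x hx⟩
    rw [hG, Finset.mem_filter] at hgmem
    have hgz : χ g = 0 := hgmem.2
    have hgt : ∀ nn, g < nn → χ nn = 1 := by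
      intro nn hnn
      rcases hv nn with h | h
      · exfalso
        have hmem : nn ∈ G := by
          rw [hG, Finset.mem_filter, Finset.mem_range]
          refine ⟨?_, h⟩
          by_contra hc
          have := hN nn (by omega)
          omega
        have := hgmax nn hmem
        omega
      · exact h
    apply Polynomial.monic_of_natDegree_le_of_coeff_eq_one (g + 1)
    · rw [Polynomial.natDegree_le_iff_coeff_eq_zero]
      intro nn hnn
      rw [hco nn, if_neg (by omega), hgt nn (by omega), hgt (nn-1) (by omega)]
      ring
    · rw [hco (g+1), if_neg (by omega)]
      simp only [Nat.add_sub_cancel]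
      rw [hgt (g+1) (by omega), hgz]
      ring



lemma divisors_pq {p q : ℕ} (hp : p.Prime) (hq : q.Prime) (hpq : p ≠ q) :
    (p * q).divisors = {1, p, q, p * q} := by
  ext d
  simp only [Nat.mem_divisors, Finset.mem_insert, Finset.mem_singleton]
  constructor
  · rintro ⟨hd, -⟩
    by_cases hpd : p ∣ d
    · obtain ⟨e, rfl⟩ := hpd
      have he : e ∣ q := (Nat.mul_dvd_mul_iff_left hp.pos).mp hd
      rcases (Nat.dvd_prime hq).mp he with rfl | rfl
      · right; left; exact mul_one p
      · right; right; right; rfl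
    · have hco : d.Coprime p := Nat.Coprime.symm ((Nat.Prime.coprime_iff_not_dvd hp).mpr hpd)
      have hdq : d ∣ q := hco.dvd_of_dvd_mul_left hd
      rcases (Nat.dvd_prime hq).mp hdq with rfl | rfl
      · left; rfl
      · right; right; left; rfl
  · have hpq0 : p * q ≠ 0 := Nat.mul_ne_zero hp.pos.ne' hq.pos.ne'
    rintro (rfl | rfl | rfl | rfl)
    · exact ⟨one_dvd _, hpq0⟩
    · exact ⟨dvd_mul_right _ _, hpq0⟩
    · exact ⟨dvd_mul_left _ _, hpq0⟩
    · exact ⟨dvd_rfl, hpq0⟩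

lemma cyclo_pq_identity {p q : ℕ} (hp : p.Prime) (hq : q.Prime) (hpq : p ≠ q) :
    cyclotomic (p * q) ℤ * (X ^ p - 1) * (X ^ q - 1) = (X ^ (p * q) - 1) * (X - 1) := by
  have h2p := hp.two_le
  have h2q := hq.two_le
  have hppq : p < p * q := by nlinarith
  have hqpq : q < p * q := by nlinarith
  have hprod := Polynomial.prod_cyclotomic_eq_X_pow_sub_one (by positivity) ℤ
    (n := p * q)
  rw [divisors_pq hp hq hpq] at hprod
  rw [Finset.prod_insert (by simp; omega), Finset.prod_insert (by simp; omega),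
    Finset.prod_insert (by simp; omega), Finset.prod_singleton] at hprod
  have hXp : (X : Polynomial ℤ) ^ p - 1 = cyclotomic 1 ℤ * cyclotomic p ℤ := by
    rw [← Polynomial.prod_cyclotomic_eq_X_pow_sub_one hp.pos ℤ, hp.divisors,
      Finset.prod_insert (by simp; omega), Finset.prod_singleton]
  have hXq : (X : Polynomial ℤ) ^ q - 1 = cyclotomic 1 ℤ * cyclotomic q ℤ := by
    rw [← Polynomial.prod_cyclotomic_eq_X_pow_sub_one hq.pos ℤ, hq.divisors,
      Finset.prod_insert (by simp; omega), Finset.prod_singleton]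
  rw [hXp, hXq, ← hprod, Polynomial.cyclotomic_one]
  ring

lemma expand_pow_cyclo {r : ℕ} (hr : r.Prime) :
    ∀ (k N : ℕ), r ∣ N → (Polynomial.expand ℤ (r ^ k)) (cyclotomic N ℤ) =
      cyclotomic (N * r ^ k) ℤ := by
  intro k
  induction k with
  | zero => intro N _; simp
  | succ k ih =>
    intro N hdvd
    have h1 : r ^ (k + 1) = r ^ k * r := by ring
    rw [h1, ← Polynomial.expand_expand,
      Polynomial.cyclotomic_expand_eq_cyclotomic hr hdvd,
      ih (N * r) (Dvd.intro_left N rfl)]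
    congr 1
    ring


end SGAux

open NumericalSemigroup in
/-- For distinct primes `p, q`, positive `m, n` and `S = ⟨p^m, q^n⟩`: `Φ_{p^m q^n}`
divides `P_S` in `ℤ[x]`, and the quotient `Q = P_S / Φ_{p^m q^n}` is monic with
`Q(0) = 1` and its nonzero coefficients alternate between `+1` and `-1`,
beginning with `+1`. -/
theorem semigroupPolynomial_div_cyclotomic (p q : ℕ) (hp : p.Prime) (hq : q.Prime)
    (hpq : p ≠ q) (m n : ℕ) (hm : 0 < m) (hn : 0 < n) (S : NumericalSemigroup)
    (hS : S.carrier = ↑(AddSubmonoid.closure ({p ^ m, q ^ n} : Set ℕ))) :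
    Polynomial.cyclotomic (p ^ m * q ^ n) ℤ ∣ S.P ∧
    ∃ Q : Polynomial ℤ, S.P = Polynomial.cyclotomic (p ^ m * q ^ n) ℤ * Q ∧
      Q.Monic ∧ Q.coeff 0 = 1 ∧ AlternatingCoeffs Q := by
  classical
  have h2p := hp.two_le
  have h2q := hq.two_le
  set a := p ^ m with ha
  set b := q ^ n with hb
  have ha0 : 0 < a := pow_pos hp.pos m
  have hb0 : 0 < b := pow_pos hq.pos n
  have hcop : Nat.Coprime a b := Nat.Coprime.pow m n ((Nat.coprime_primes hp hq).mpr hpq)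
  -- ===== instance 1 : S itself =====
  have hinj1 : SGAux.Inj a b (a * b) b a := by
    intro i i' j j' k hi hi' hj hj' heq
    have h1 : (a * i) % b = (a * i') % b := by
      have e1 : a * i + b * j = a * i' + b * (j' + a * k) := by rw [heq]; ring
      calc (a * i) % b = (a * i + b * j) % b := (Nat.add_mul_mod_self_left _ _ _).symm
        _ = (a * i' + b * (j' + a * k)) % b := by rw [e1]
        _ = (a * i') % b := Nat.add_mul_mod_self_left _ _ _
    have hii : i = i' := by
      have h2 : i % b = i' % b := Nat.ModEq.cancel_left_of_coprime hcop.symm h1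
      rwa [Nat.mod_eq_of_lt hi, Nat.mod_eq_of_lt hi'] at h2
    subst hii
    have h3 : b * j = b * (j' + a * k) := by
      apply Nat.add_left_cancel (n := a * i)
      rw [heq]; ring
    have h5 : j = j' + a * k := Nat.eq_of_mul_eq_mul_left hb0 h3
    have hk : k = 0 := by
      by_contra hk0
      have h6 : 1 ≤ k := Nat.one_le_iff_ne_zero.mpr hk0
      have h7 : a * 1 ≤ a * k := Nat.mul_le_mul_left a h6
      omega
    refine ⟨rfl, ?_, hk⟩
    rw [hk, Nat.mul_zero, Nat.add_zero] at h5
    exact h5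
  have hV1 : S.carrier = SGAux.V a b (a * b) b a := by
    ext x
    rw [hS]
    simp only [SetLike.mem_coe, AddSubmonoid.mem_closure_pair, smul_eq_mul]
    constructor
    · rintro ⟨I, J, rfl⟩
      refine ⟨I % b, Nat.mod_lt _ hb0, J % a, Nat.mod_lt _ ha0, I / b + J / a, ?_⟩
      calc I * a + J * b
          = (b * (I / b) + I % b) * a + (a * (J / a) + J % a) * b := by
            rw [Nat.div_add_mod, Nat.div_add_mod]
        _ = a * (I % b) + b * (J % a) + a * b * (I / b + J / a) := by ring
    · rintro ⟨i, hi, j, hj, k, rfl⟩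
      exact ⟨i + b * k, j, by ring⟩
  have hF1 : ∀ d, d ∈ S.finite_compl.toFinset ↔ d ∉ SGAux.V a b (a * b) b a := by
    intro d
    rw [Set.Finite.mem_toFinset, Set.mem_compl_iff, hV1]
  have g1 := SGAux.prodId (SGAux.V a b (a * b) b a) rfl (Nat.mul_pos ha0 hb0) hb0 ha0
      hinj1 S.finite_compl.toFinset hF1
  rw [show b * a = a * b from Nat.mul_comm b a] at g1
  have hP : S.P = 1 + (Polynomial.X - 1) * ∑ s ∈ S.finite_compl.toFinset, Polynomial.X ^ s := rfl
  rw [← hP] at g1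
  -- ===== instance 2 : the quotient =====
  have hm1 : p ^ (m - 1) * p = a := by
    rw [ha, ← pow_succ]; congr 1; omega
  have hn1 : q ^ (n - 1) * q = b := by
    rw [hb, ← pow_succ]; congr 1; omega
  have hu0 : 0 < p ^ (m - 1) := pow_pos hp.pos _
  have hv0 : 0 < q ^ (n - 1) := pow_pos hq.pos _
  have hcu : Nat.Coprime (p ^ (m - 1)) b :=
    Nat.Coprime.pow _ _ ((Nat.coprime_primes hp hq).mpr hpq)
  have hcv : Nat.Coprime (q ^ (n - 1)) a :=
    Nat.Coprime.pow _ _ ((Nat.coprime_primes hq hp).mpr (Ne.symm hpq))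
  have hinj2 : SGAux.Inj a b (q ^ (n - 1) * p ^ (m - 1)) (q ^ (n - 1)) (p ^ (m - 1)) := by
    intro i i' j j' k hi hi' hj hj' heq
    have hjj : j = j' := by
      have h1 : (b * j) % (p ^ (m - 1)) = (b * j') % (p ^ (m - 1)) := by
        have e1 : a * i + b * j = b * j + p ^ (m - 1) * (p * i) := by
          rw [← hm1]; ring
        have e2 : a * i' + b * j' + (q ^ (n - 1) * p ^ (m - 1)) * k
            = b * j' + p ^ (m - 1) * (p * i' + q ^ (n - 1) * k) := by
          rw [← hm1]; ring
        calc (b * j) % (p ^ (m - 1))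
            = (b * j + p ^ (m - 1) * (p * i)) % (p ^ (m - 1)) :=
              (Nat.add_mul_mod_self_left _ _ _).symm
          _ = (b * j' + p ^ (m - 1) * (p * i' + q ^ (n - 1) * k)) % (p ^ (m - 1)) := by
              rw [← e1, heq, e2]
          _ = (b * j') % (p ^ (m - 1)) := Nat.add_mul_mod_self_left _ _ _
      have h2 : j % (p ^ (m - 1)) = j' % (p ^ (m - 1)) :=
        Nat.ModEq.cancel_left_of_coprime hcu h1
      rwa [Nat.mod_eq_of_lt hj, Nat.mod_eq_of_lt hj'] at h2
    subst hjj
    have hii : i = i' := by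
      have h1 : (a * i) % (q ^ (n - 1)) = (a * i') % (q ^ (n - 1)) := by
        have e1 : a * i + b * j = a * i + q ^ (n - 1) * (q * j) := by
          rw [← hn1]; ring
        have e2 : a * i' + b * j + (q ^ (n - 1) * p ^ (m - 1)) * k
            = a * i' + q ^ (n - 1) * (q * j + p ^ (m - 1) * k) := by
          rw [← hn1]; ring
        calc (a * i) % (q ^ (n - 1))
            = (a * i + q ^ (n - 1) * (q * j)) % (q ^ (n - 1)) :=
              (Nat.add_mul_mod_self_left _ _ _).symm
          _ = (a * i' + q ^ (n - 1) * (q * j + p ^ (m - 1) * k)) % (q ^ (n - 1)) := by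
              rw [← e1, heq, e2]
          _ = (a * i') % (q ^ (n - 1)) := Nat.add_mul_mod_self_left _ _ _
      have h2 : i % (q ^ (n - 1)) = i' % (q ^ (n - 1)) :=
        Nat.ModEq.cancel_left_of_coprime hcv h1
      rwa [Nat.mod_eq_of_lt hi, Nat.mod_eq_of_lt hi'] at h2
    subst hii
    refine ⟨rfl, rfl, ?_⟩
    have h8 : (q ^ (n - 1) * p ^ (m - 1)) * k = 0 := by omega
    rcases Nat.mul_eq_zero.mp h8 with h | h
    · exfalso
      have := Nat.mul_pos hv0 hu0
      omega
    · exact h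
  obtain ⟨N2, hN2⟩ := SGAux.exists_bound (Nat.mul_pos hv0 hu0) rfl hinj2
  have hfin2 : (SGAux.V a b (q ^ (n - 1) * p ^ (m - 1)) (q ^ (n - 1)) (p ^ (m - 1)))ᶜ.Finite := by
    apply Set.Finite.subset (Set.finite_Iio N2)
    intro x hx
    rw [Set.mem_compl_iff] at hx
    rw [Set.mem_Iio]
    by_contra h
    exact hx (hN2 x (by omega))
  have hF2 : ∀ d, d ∈ hfin2.toFinset ↔
      d ∉ SGAux.V a b (q ^ (n - 1) * p ^ (m - 1)) (q ^ (n - 1)) (p ^ (m - 1)) := by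
    intro d
    rw [Set.Finite.mem_toFinset, Set.mem_compl_iff]
  set Qp : Polynomial ℤ := 1 + (Polynomial.X - 1) * ∑ s ∈ hfin2.toFinset, Polynomial.X ^ s
    with hQp
  have hV20 : (0 : ℕ) ∈ SGAux.V a b (q ^ (n - 1) * p ^ (m - 1)) (q ^ (n - 1)) (p ^ (m - 1)) :=
    SGAux.zero_mem_V hv0 hu0
  have g2 := SGAux.prodId _ rfl (Nat.mul_pos hv0 hu0) hv0 hu0 hinj2 hfin2.toFinset hF2
  rw [← hQp] at g2
  -- ===== cyclotomic identity =====
  have hbase := SGAux.cyclo_pq_identity hp hq hpq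
  have hPhi : (Polynomial.expand ℤ (q ^ (n - 1) * p ^ (m - 1)))
      (Polynomial.cyclotomic (p * q) ℤ) = Polynomial.cyclotomic (a * b) ℤ := by
    rw [← Polynomial.expand_expand,
      SGAux.expand_pow_cyclo hp (m - 1) (p * q) (dvd_mul_right p q),
      SGAux.expand_pow_cyclo hq (n - 1) (p * q * p ^ (m - 1)) ((dvd_mul_left q p).mul_right _)]
    congr 1
    rw [← hm1, ← hn1]; ring
  have g3 := congrArg (fun r => (Polynomial.expand ℤ (q ^ (n - 1) * p ^ (m - 1))) r) hbase
  simp only [map_mul, map_sub, map_one, map_pow, Polynomial.expand_X] at g3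
  rw [hPhi, ← pow_mul, ← pow_mul, ← pow_mul] at g3
  have e3a : q ^ (n - 1) * p ^ (m - 1) * p = a * q ^ (n - 1) := by rw [← hm1]; ring
  have e3b : q ^ (n - 1) * p ^ (m - 1) * q = b * p ^ (m - 1) := by rw [← hn1]; ring
  have e3c : q ^ (n - 1) * p ^ (m - 1) * (p * q) = a * b := by rw [← hm1, ← hn1]; ring
  rw [e3a, e3b, e3c] at g3
  -- ===== combine =====
  have hXne : ∀ k : ℕ, 0 < k → (Polynomial.X : Polynomial ℤ) ^ k - 1 ≠ 0 := by
    intro k hk hzero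
    have h1 : ((Polynomial.X : Polynomial ℤ) ^ k - 1).coeff 0 = -1 := by
      rw [Polynomial.coeff_sub, Polynomial.coeff_X_pow, Polynomial.coeff_one,
        if_neg (by omega : ¬(0 = k))]
      norm_num
    rw [hzero] at h1
    simp at h1
  have hMne : ((Polynomial.X : Polynomial ℤ) ^ (a * b) - 1) *
      ((Polynomial.X : Polynomial ℤ) ^ (q ^ (n - 1) * p ^ (m - 1)) - 1) *
      ((Polynomial.X : Polynomial ℤ) ^ a - 1) * ((Polynomial.X : Polynomial ℤ) ^ b - 1) *
      ((Polynomial.X : Polynomial ℤ) ^ (a * q ^ (n - 1)) - 1) *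
      ((Polynomial.X : Polynomial ℤ) ^ (b * p ^ (m - 1)) - 1) ≠ 0 := by
    apply mul_ne_zero
    apply mul_ne_zero
    apply mul_ne_zero
    apply mul_ne_zero
    apply mul_ne_zero
    · exact hXne _ (Nat.mul_pos ha0 hb0)
    · exact hXne _ (Nat.mul_pos hv0 hu0)
    · exact hXne _ ha0
    · exact hXne _ hb0
    · exact hXne _ (Nat.mul_pos ha0 hv0)
    · exact hXne _ (Nat.mul_pos hb0 hu0)
  have hkey : S.P * (((Polynomial.X : Polynomial ℤ) ^ (a * b) - 1) *
      ((Polynomial.X : Polynomial ℤ) ^ (q ^ (n - 1) * p ^ (m - 1)) - 1) *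
      ((Polynomial.X : Polynomial ℤ) ^ a - 1) * ((Polynomial.X : Polynomial ℤ) ^ b - 1) *
      ((Polynomial.X : Polynomial ℤ) ^ (a * q ^ (n - 1)) - 1) *
      ((Polynomial.X : Polynomial ℤ) ^ (b * p ^ (m - 1)) - 1)) =
      (Polynomial.cyclotomic (a * b) ℤ * Qp) * (((Polynomial.X : Polynomial ℤ) ^ (a * b) - 1) *
      ((Polynomial.X : Polynomial ℤ) ^ (q ^ (n - 1) * p ^ (m - 1)) - 1) *
      ((Polynomial.X : Polynomial ℤ) ^ a - 1) * ((Polynomial.X : Polynomial ℤ) ^ b - 1) *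
      ((Polynomial.X : Polynomial ℤ) ^ (a * q ^ (n - 1)) - 1) *
      ((Polynomial.X : Polynomial ℤ) ^ (b * p ^ (m - 1)) - 1)) := by
    linear_combination
      (((Polynomial.X : Polynomial ℤ) ^ (q ^ (n - 1) * p ^ (m - 1)) - 1) *
        ((Polynomial.X : Polynomial ℤ) ^ (a * q ^ (n - 1)) - 1) *
        ((Polynomial.X : Polynomial ℤ) ^ (b * p ^ (m - 1)) - 1)) * g1
      - (((Polynomial.X : Polynomial ℤ) - 1) * ((Polynomial.X : Polynomial ℤ) ^ (a * b) - 1) *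
        ((Polynomial.X : Polynomial ℤ) ^ (a * q ^ (n - 1)) - 1) *
        ((Polynomial.X : Polynomial ℤ) ^ (b * p ^ (m - 1)) - 1)) * g3
      - (Polynomial.cyclotomic (a * b) ℤ * ((Polynomial.X : Polynomial ℤ) ^ (a * b) - 1) *
        ((Polynomial.X : Polynomial ℤ) ^ (a * q ^ (n - 1)) - 1) *
        ((Polynomial.X : Polynomial ℤ) ^ (b * p ^ (m - 1)) - 1)) * g2
  have hPQ : S.P = Polynomial.cyclotomic (a * b) ℤ * Qp := mul_right_cancel₀ hMne hkey
  have hco2 : ∀ nn, Qp.coeff nn =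
      SGAux.chi (SGAux.V a b (q ^ (n - 1) * p ^ (m - 1)) (q ^ (n - 1)) (p ^ (m - 1))) nn -
      (if nn = 0 then 0 else
        SGAux.chi (SGAux.V a b (q ^ (n - 1) * p ^ (m - 1)) (q ^ (n - 1)) (p ^ (m - 1))) (nn - 1)) := by
    intro nn
    rw [hQp]
    exact SGAux.coeffQ _ hV20 _ hF2 nn
  have hchiv := SGAux.chi_cases (SGAux.V a b (q ^ (n - 1) * p ^ (m - 1)) (q ^ (n - 1)) (p ^ (m - 1)))
  refine ⟨⟨Qp, hPQ⟩, Qp, hPQ, ?_, ?_, ?_⟩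
  · exact SGAux.monic_of_chi Qp _ hchiv hco2 (by simp [SGAux.chi, hV20]) N2
      (fun nn h => by simp [SGAux.chi, hN2 nn h])
  · rw [hco2 0, if_pos rfl]
    simp [SGAux.chi, hV20]
  · exact SGAux.alt_of_chi Qp _ hchiv hco2
end

section
/- Let p and q be distinct primes and m, n positive integers. Every element t of T = ⟨p^m, q^n⟩ can be written in a unique way as t = α·p^m + β·q^n + s·p^{m−1}q^{n−1} with integers 0 ≤ α ≤ q^{n−1} − 1, 0 ≤ β ≤ p^{m−1} − 1, and s ∈ ⟨p, q⟩. -/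
open Polynomial
open scoped Classical

lemma cancel_aux {k r a b u v : ℕ} (hcop : Nat.Coprime r k) (ha : a < k) (hb : b < k)
    (h : a * r + k * u = b * r + k * v) : a = b := by
  have h1 : a * r ≡ b * r [MOD k] := by
    calc a * r % k = (a * r + k * u) % k := by rw [Nat.add_mul_mod_self_left]
      _ = (b * r + k * v) % k := by rw [h]
      _ = b * r % k := by rw [Nat.add_mul_mod_self_left]
  have h2 : a % k = b % k := Nat.ModEq.cancel_right_of_coprime hcop.symm h1
  rwa [Nat.mod_eq_of_lt ha, Nat.mod_eq_of_lt hb] at h2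

open NumericalSemigroup in
/-- For distinct primes `p, q` and positive `m, n`: every element `t` of
`T = ⟨p^m, q^n⟩` can be written in a unique way as
`t = α·p^m + β·q^n + s·p^{m-1}·q^{n-1}` with `0 ≤ α ≤ q^{n-1} - 1`,
`0 ≤ β ≤ p^{m-1} - 1` and `s ∈ ⟨p, q⟩`. -/
theorem unique_decomposition_powers (p q : ℕ) (hp : p.Prime) (hq : q.Prime) (hpq : p ≠ q)
    (m n : ℕ) (hm : 0 < m) (hn : 0 < n) (T : NumericalSemigroup)
    (hT : T.carrier = ↑(AddSubmonoid.closure ({p ^ m, q ^ n} : Set ℕ))) :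
    ∀ t ∈ T.carrier, ∃! x : ℕ × ℕ × ℕ,
      x.1 ≤ q ^ (n - 1) - 1 ∧ x.2.1 ≤ p ^ (m - 1) - 1 ∧
      x.2.2 ∈ (AddSubmonoid.closure ({p, q} : Set ℕ) : Set ℕ) ∧
      t = x.1 * p ^ m + x.2.1 * q ^ n + x.2.2 * (p ^ (m - 1) * q ^ (n - 1)) := by
  obtain ⟨m', rfl⟩ : ∃ m', m = m' + 1 := ⟨m - 1, by omega⟩
  obtain ⟨n', rfl⟩ : ∃ n', n = n' + 1 := ⟨n - 1, by omega⟩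
  simp only [Nat.add_sub_cancel]
  have hp0 : 0 < p := hp.pos
  have hq0 : 0 < q := hq.pos
  have hP : 0 < p ^ m' := pow_pos hp0 _
  have hQ : 0 < q ^ n' := pow_pos hq0 _
  have hcop : Nat.Coprime p q := (Nat.coprime_primes hp hq).mpr hpq
  have cop1 : Nat.Coprime (p ^ (m' + 1)) (q ^ n') := Nat.Coprime.pow _ _ hcop
  have cop2 : Nat.Coprime (q ^ (n' + 1)) (p ^ m') := Nat.Coprime.pow _ _ hcop.symm
  intro t ht
  rw [hT] at ht
  obtain ⟨a, b, hab⟩ := (AddSubmonoid.mem_closure_pair _ _ _).mp ht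
  simp only [smul_eq_mul] at hab
  obtain ⟨d1, r1, hr1, rfl⟩ : ∃ d r, r < q ^ n' ∧ a = q ^ n' * d + r :=
    ⟨a / q ^ n', a % q ^ n', Nat.mod_lt _ hQ, (Nat.div_add_mod _ _).symm⟩
  obtain ⟨d2, r2, hr2, rfl⟩ : ∃ d r, r < p ^ m' ∧ b = p ^ m' * d + r :=
    ⟨b / p ^ m', b % p ^ m', Nat.mod_lt _ hP, (Nat.div_add_mod _ _).symm⟩
  have hs : d1 * p + d2 * q ∈ (AddSubmonoid.closure ({p, q} : Set ℕ) : Set ℕ) := by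
    refine AddSubmonoid.add_mem _ ?_ ?_
    · rw [← smul_eq_mul]
      exact AddSubmonoid.nsmul_mem _ (AddSubmonoid.subset_closure (by simp)) _
    · rw [← smul_eq_mul]
      exact AddSubmonoid.nsmul_mem _ (AddSubmonoid.subset_closure (by simp)) _
  have hteq : t = r1 * p ^ (m' + 1) + r2 * q ^ (n' + 1) +
      (d1 * p + d2 * q) * (p ^ m' * q ^ n') := by
    rw [← hab]; ring
  refine ⟨⟨r1, r2, d1 * p + d2 * q⟩, ⟨show r1 ≤ q ^ n' - 1 by omega,
    show r2 ≤ p ^ m' - 1 by omega, hs, hteq⟩, ?_⟩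
  rintro ⟨α, β, s⟩ ⟨hα, hβ, -, ht'⟩
  dsimp only at hα hβ ht'
  have hα' : α < q ^ n' := by omega
  have hβ' : β < p ^ m' := by omega
  have e1 : α * p ^ (m' + 1) + q ^ n' * (β * q + s * p ^ m') =
      r1 * p ^ (m' + 1) + q ^ n' * (r2 * q + (d1 * p + d2 * q) * p ^ m') := by
    calc α * p ^ (m' + 1) + q ^ n' * (β * q + s * p ^ m')
        = α * p ^ (m' + 1) + β * q ^ (n' + 1) + s * (p ^ m' * q ^ n') := by ring
      _ = t := ht'.symm
      _ = r1 * p ^ (m' + 1) + r2 * q ^ (n' + 1) +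
          (d1 * p + d2 * q) * (p ^ m' * q ^ n') := hteq
      _ = _ := by ring
  have hαr : α = r1 := cancel_aux cop1 hα' hr1 e1
  have e2 : β * q ^ (n' + 1) + p ^ m' * (α * p + s * q ^ n') =
      r2 * q ^ (n' + 1) + p ^ m' * (r1 * p + (d1 * p + d2 * q) * q ^ n') := by
    calc β * q ^ (n' + 1) + p ^ m' * (α * p + s * q ^ n')
        = α * p ^ (m' + 1) + β * q ^ (n' + 1) + s * (p ^ m' * q ^ n') := by ring
      _ = t := ht'.symm
      _ = r1 * p ^ (m' + 1) + r2 * q ^ (n' + 1) +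
          (d1 * p + d2 * q) * (p ^ m' * q ^ n') := hteq
      _ = _ := by ring
  have hβr : β = r2 := cancel_aux cop2 hβ' hr2 e2
  subst hαr hβr
  have e3 : s * (p ^ m' * q ^ n') = (d1 * p + d2 * q) * (p ^ m' * q ^ n') :=
    Nat.add_left_cancel (ht'.symm.trans hteq)
  have hs' : s = d1 * p + d2 * q := Nat.eq_of_mul_eq_mul_right (by positivity) e3
  simp [hs']
end
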